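/- arXiv:1712.03033 — 4 statements merged into one kernel-verified Lean document; each statement's English description precedes it below -/
import Mathlib

section
/- Let G be a cubic graph. Then every vertex x of G satisfies the Bakry-Émery curvature-dimension inequality CD(0,∞) if and only if every edge xy of G has Ollivier-Ricci curvature κ₀(x,y) ≥ 0. -/
open Finset

variable {V : Type*}

/-- The non-normalized graph Laplacian: `Δ f (x) = ∑_{y ∼ x} (f y − f x)`. -/
noncomputable def graphLap (G : SimpleGraph V) [∀ v, Fintype (G.neighborSet v)]
    (f : V → ℝ) (x : V) : ℝ :=
  ∑ y ∈ G.neighborFinset x, (f y - f x)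

/-- The Bakry–Émery operator `Γ`: `2Γ(f,g) = Δ(fg) − fΔg − gΔf`. -/
noncomputable def graphGamma (G : SimpleGraph V) [∀ v, Fintype (G.neighborSet v)]
    (f g : V → ℝ) (x : V) : ℝ :=
  (graphLap G (fun z => f z * g z) x - f x * graphLap G g x - g x * graphLap G f x) / 2

/-- The Bakry–Émery operator `Γ₂`: `2Γ₂(f,g) = ΔΓ(f,g) − Γ(f,Δg) − Γ(Δf,g)`. -/
noncomputable def graphGamma2 (G : SimpleGraph V) [∀ v, Fintype (G.neighborSet v)]
    (f g : V → ℝ) (x : V) : ℝ :=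
  (graphLap G (graphGamma G f g) x - graphGamma G f (graphLap G g) x -
    graphGamma G (graphLap G f) g x) / 2

/-- A vertex `x` satisfies the curvature-dimension inequality `CD(0,∞)` if
`Γ₂(f)(x) ≥ 0` for all `f : V → ℝ`. -/
def SatisfiesCD (G : SimpleGraph V) [∀ v, Fintype (G.neighborSet v)] (x : V) : Prop :=
  ∀ f : V → ℝ, 0 ≤ graphGamma2 G f f x

open Classical in
/-- The idleness-0 probability measure `μ_x^0` at a vertex `x`. -/
noncomputable def muZero (G : SimpleGraph V) [∀ v, Fintype (G.neighborSet v)] (x : V) :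
    V → ℝ :=
  fun z => if G.Adj x z then 1 / (G.degree x : ℝ) else 0

/-- The Wasserstein distance `W₁(μ_x^0, μ_y^0)`: the infimum of the transport cost over
all couplings of `μ_x^0` and `μ_y^0`. -/
noncomputable def Wone (G : SimpleGraph V) [∀ v, Fintype (G.neighborSet v)] (x y : V) : ℝ :=
  sInf {w : ℝ | ∃ π : V → V → ℝ,
    (∀ u v, 0 ≤ π u v) ∧
    (∀ u v, π u v ≠ 0 → G.Adj x u ∧ G.Adj y v) ∧
    (∀ u, ∑ v ∈ G.neighborFinset y, π u v = muZero G x u) ∧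
    (∀ v, ∑ u ∈ G.neighborFinset x, π u v = muZero G y v) ∧
    w = ∑ u ∈ G.neighborFinset x, ∑ v ∈ G.neighborFinset y, (G.dist u v : ℝ) * π u v}

/-- The Ollivier–Ricci curvature with idleness `0`: `κ₀(x,y) = 1 − W₁(μ_x^0, μ_y^0)`. -/
noncomputable def kappaZero (G : SimpleGraph V) [∀ v, Fintype (G.neighborSet v)]
    (x y : V) : ℝ :=
  1 - Wone G x y

/-- The prism graph `Y n` on vertices `ZMod n × Bool`: two `n`-cycles joined by rungs;
equivalently the Cartesian product of the cycle `C_n` with `K₂`. -/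
def prismGraph (n : ℕ) : SimpleGraph (ZMod n × Bool) :=
  SimpleGraph.fromRel (fun p q => (p.2 = q.2 ∧ q.1 = p.1 + 1) ∨ (p.1 = q.1 ∧ p.2 ≠ q.2))

/-- The Möbius ladder `M n` on vertices `ZMod (2n)`: the cycle `C_{2n}` together with
all antipodal edges. -/
def mobiusLadder (n : ℕ) : SimpleGraph (ZMod (2 * n)) :=
  SimpleGraph.fromRel (fun p q => q = p + 1 ∨ q = p + (n : ZMod (2 * n)))

open Classical in
/-- The Laplacian matrix `L = D − A` of a finite graph. -/
noncomputable def lapMat (G : SimpleGraph V) [Fintype V] : Matrix V V ℝ :=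
  fun i j =>
    (if i = j then ∑ k : V, (if G.Adj i k then (1 : ℝ) else 0) else 0) -
      (if G.Adj i j then 1 else 0)

/-- `λ₁ G` : the smallest non-zero eigenvalue of the Laplacian matrix of `G`. -/
noncomputable def lambdaOne (G : SimpleGraph V) [Fintype V] : ℝ :=
  sInf {t : ℝ | t ≠ 0 ∧ ∃ v : V → ℝ, v ≠ 0 ∧ (lapMat G).mulVec v = t • v}

noncomputable instance fintypeNeighborSetOfFinite [Finite V] (G : SimpleGraph V) (v : V) :
    Fintype (G.neighborSet v) := Fintype.ofFinite _
section AuxCDOR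
variable [DecidableEq V]

/-- The 10-variable quadratic form equal to `Γ₂(f)(x)` at a cubic vertex. -/
noncomputable def Qp (v0 v1 v2 v3 A1 B1 A2 B2 A3 B3 : ℝ) : ℝ :=
  (9/2)*v0^2 - 4*v0*(v1+v2+v3) + (1/2)*v0*(A1+B1+A2+B2+A3+B3)
  + 2*(v1^2+v2^2+v3^2) + (v1*v2+v1*v3+v2*v3)
  - v1*(A1+B1) - v2*(A2+B2) - v3*(A3+B3)
  + (1/4)*(A1^2+B1^2+A2^2+B2^2+A3^2+B3^2)

lemma qp_swap1 (v0 v1 v2 v3 A1 B1 A2 B2 A3 B3 : ℝ) :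
    Qp v0 v1 v2 v3 A1 B1 A2 B2 A3 B3 = Qp v0 v1 v2 v3 B1 A1 A2 B2 A3 B3 := by
  unfold Qp; ring

lemma qp_swap2 (v0 v1 v2 v3 A1 B1 A2 B2 A3 B3 : ℝ) :
    Qp v0 v1 v2 v3 A1 B1 A2 B2 A3 B3 = Qp v0 v1 v2 v3 A1 B1 B2 A2 A3 B3 := by
  unfold Qp; ring

lemma qp_swap3 (v0 v1 v2 v3 A1 B1 A2 B2 A3 B3 : ℝ) :
    Qp v0 v1 v2 v3 A1 B1 A2 B2 A3 B3 = Qp v0 v1 v2 v3 A1 B1 A2 B2 B3 A3 := by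
  unfold Qp; ring

lemma qp_perm23 (v0 v1 v2 v3 A1 B1 A2 B2 A3 B3 : ℝ) :
    Qp v0 v1 v2 v3 A1 B1 A2 B2 A3 B3 = Qp v0 v1 v3 v2 A1 B1 A3 B3 A2 B2 := by
  unfold Qp; ring

lemma qp_perm12 (v0 v1 v2 v3 A1 B1 A2 B2 A3 B3 : ℝ) :
    Qp v0 v1 v2 v3 A1 B1 A2 B2 A3 B3 = Qp v0 v2 v1 v3 A2 B2 A1 B1 A3 B3 := by
  unfold Qp; ring

lemma qp_perm13 (v0 v1 v2 v3 A1 B1 A2 B2 A3 B3 : ℝ) :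
    Qp v0 v1 v2 v3 A1 B1 A2 B2 A3 B3 = Qp v0 v3 v2 v1 A3 B3 A2 B2 A1 B1 := by
  unfold Qp; ring

lemma tt_sos (v0 v1 v2 v3 B2 B3 : ℝ) : 0 ≤ Qp v0 v1 v2 v3 v2 v3 v1 B2 v1 B3 := by
  have h : Qp v0 v1 v2 v3 v2 v3 v1 B2 v1 B3 =
      (9/2)*(1*v0 + (-1/3)*v1 + (-7/18)*v2 + (-7/18)*v3 + (1/18)*B2 + (1/18)*B3)^2 + 2*(1*v1 + (-13/24)*v2 + (-13/24)*v3 + (1/24)*B2 + (1/24)*B3)^2 + (283/288)*(1*v2 + (-221/283)*v3 + (-103/283)*B2 + (41/283)*B3)^2 + (217/566)*(1*v3 + (-5/14)*B2 + (-9/14)*B3)^2 + (3/56)*(1*B2 + -1*B3)^2 := by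
    unfold Qp; ring
  rw [h]; positivity

lemma tsb_sos (v0 v1 v2 v3 B1 B2 B3 : ℝ) : 0 ≤ Qp v0 v1 v2 v3 v2 B1 v1 B2 B1 B3 := by
  have h : Qp v0 v1 v2 v3 v2 B1 v1 B2 B1 B3 =
      (9/2)*(1*v0 + (-7/18)*v1 + (-7/18)*v2 + (-4/9)*v3 + (1/9)*B1 + (1/18)*B2 + (1/18)*B3)^2 + (113/72)*(1*v1 + (-85/113)*v2 + (-20/113)*v3 + (-22/113)*B1 + (7/113)*B2 + (7/113)*B3)^2 + (77/113)*(1*v2 + (-5/7)*v3 + (-4/77)*B1 + (-149/308)*B2 + (1/4)*B3)^2 + (5/7)*(1*v3 + (-1/2)*B1 + (-3/20)*B2 + (-7/20)*B3)^2 + (9/44)*(1*B1 + (-7/18)*B2 + (-11/18)*B3)^2 + (17/720)*(1*B2 + -1*B3)^2 := by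
    unfold Qp; ring
  rw [h]; positivity

lemma tsy_sos (v0 v1 v2 v3 B1 B2 B3 : ℝ) : 0 ≤ Qp v0 v1 v2 v3 v2 B1 v1 B2 v2 B3 := by
  have h : Qp v0 v1 v2 v3 v2 B1 v1 B2 v2 B3 =
      (9/2)*(1*v0 + (-7/18)*v1 + (-1/3)*v2 + (-4/9)*v3 + (1/18)*B1 + (1/18)*B2 + (1/18)*B3)^2 + (113/72)*(1*v1 + (-78/113)*v2 + (-20/113)*v3 + (-29/113)*B1 + (7/113)*B2 + (7/113)*B3)^2 + (283/226)*(1*v2 + (-194/283)*v3 + (-44/283)*B1 + (-79/283)*B2 + (34/283)*B3)^2 + (134/283)*(1*v3 + (-53/268)*B1 + (-63/268)*B2 + (-38/67)*B3)^2 + (45/536)*(1*B1 + (-7/9)*B2 + (-2/9)*B3)^2 + (1/18)*(1*B2 + -1*B3)^2 := by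
    unfold Qp; ring
  rw [h]; positivity

lemma ssd_sos (v0 v1 v2 v3 A1 B1 B2 B3 : ℝ) : 0 ≤ Qp v0 v1 v2 v3 A1 B1 A1 B2 B1 B3 := by
  have h : Qp v0 v1 v2 v3 A1 B1 A1 B2 B1 B3 =
      (9/2)*(1*v0 + (-4/9)*v1 + (-4/9)*v2 + (-4/9)*v3 + (1/9)*A1 + (1/9)*B1 + (1/18)*B2 + (1/18)*B3)^2 + (10/9)*(1*v1 + (-7/20)*v2 + (-7/20)*v3 + (-1/4)*A1 + (-1/4)*B1 + (1/10)*B2 + (1/10)*B3)^2 + (39/40)*(1*v2 + (-7/13)*v3 + (-5/13)*A1 + (5/39)*B1 + (-14/39)*B2 + (2/13)*B3)^2 + (9/13)*(1*v3 + (-1/9)*A1 + (-4/9)*B1 + (-1/18)*B2 + (-7/18)*B3)^2 + (2/9)*(1*A1 + (-1/2)*B1 + (-5/8)*B2 + (1/8)*B3)^2 + (1/6)*(1*B1 + (-1/4)*B2 + (-3/4)*B3)^2 := by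
    unfold Qp; ring
  rw [h]; positivity

lemma sss_sos (v0 v1 v2 v3 A1 B1 B2 B3 : ℝ) : 0 ≤ Qp v0 v1 v2 v3 A1 B1 A1 B2 A1 B3 := by
  have h : Qp v0 v1 v2 v3 A1 B1 A1 B2 A1 B3 =
      (9/2)*(1*v0 + (-4/9)*v1 + (-4/9)*v2 + (-4/9)*v3 + (1/6)*A1 + (1/18)*B1 + (1/18)*B2 + (1/18)*B3)^2 + (10/9)*(1*v1 + (-7/20)*v2 + (-7/20)*v3 + (-3/20)*A1 + (-7/20)*B1 + (1/10)*B2 + (1/10)*B3)^2 + (39/40)*(1*v2 + (-7/13)*v3 + (-3/13)*A1 + (-1/39)*B1 + (-14/39)*B2 + (2/13)*B3)^2 + (9/13)*(1*v3 + (-1/2)*A1 + (-1/18)*B1 + (-1/18)*B2 + (-7/18)*B3)^2 + (3/8)*(1*A1 + (-1/3)*B1 + (-1/3)*B2 + (-1/3)*B3)^2 + (1/18)*(1*B1 + (-1/2)*B2 + (-1/2)*B3)^2 + (1/24)*(1*B2 + -1*B3)^2 := by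
    unfold Qp; ring
  rw [h]; positivity
lemma qp_witness : Qp 0 (-4) 2 2 (-6) (-6) 2 2 2 2 = -6 := by
  unfold Qp; norm_num
lemma mem_card_three {s : Finset V} {x : V} (h : s.card = 3) (hx : x ∈ s) :
    ∃ a b, x ≠ a ∧ x ≠ b ∧ a ≠ b ∧ s = {x, a, b} := by
  obtain ⟨c, d, e, hcd, hce, hde, rfl⟩ := Finset.card_eq_three.mp h
  simp only [Finset.mem_insert, Finset.mem_singleton] at hx
  rcases hx with rfl | rfl | rfl
  · exact ⟨d, e, hcd, hce, hde, rfl⟩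
  · refine ⟨c, e, hcd.symm, hde, hce, ?_⟩
    ext z; simp only [Finset.mem_insert, Finset.mem_singleton]; tauto
  · refine ⟨c, d, hce.symm, hde.symm, hcd, ?_⟩
    ext z; simp only [Finset.mem_insert, Finset.mem_singleton]; tauto

lemma exists_three (G : SimpleGraph V) [∀ v, Fintype (G.neighborSet v)] {x : V}
    (h : G.degree x = 3) :
    ∃ y1 y2 y3 : V, y1 ≠ y2 ∧ y1 ≠ y3 ∧ y2 ≠ y3 ∧ G.neighborFinset x = {y1, y2, y3} := by
  have : (G.neighborFinset x).card = 3 := by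
    rwa [SimpleGraph.card_neighborFinset_eq_degree]
  obtain ⟨a, b, c, hab, hac, hbc, hs⟩ := Finset.card_eq_three.mp this
  exact ⟨a, b, c, hab, hac, hbc, hs⟩

lemma exists_slots (G : SimpleGraph V) [∀ v, Fintype (G.neighborSet v)] {x y : V}
    (h : G.degree y = 3) (hxy : G.Adj x y) :
    ∃ a b, x ≠ a ∧ x ≠ b ∧ a ≠ b ∧ G.neighborFinset y = {x, a, b} := by
  have hc : (G.neighborFinset y).card = 3 := by
    rwa [SimpleGraph.card_neighborFinset_eq_degree]
  have hx : x ∈ G.neighborFinset y := by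
    rw [SimpleGraph.mem_neighborFinset]; exact hxy.symm
  exact mem_card_three hc hx

lemma gamma2_expand (G : SimpleGraph V) [∀ v, Fintype (G.neighborSet v)]
    {x y1 y2 y3 a1 b1 a2 b2 a3 b3 : V}
    (h12 : y1 ≠ y2) (h13 : y1 ≠ y3) (h23 : y2 ≠ y3)
    (hxa1 : x ≠ a1) (hxb1 : x ≠ b1) (hab1 : a1 ≠ b1)
    (hxa2 : x ≠ a2) (hxb2 : x ≠ b2) (hab2 : a2 ≠ b2)
    (hxa3 : x ≠ a3) (hxb3 : x ≠ b3) (hab3 : a3 ≠ b3)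
    (hNx : G.neighborFinset x = {y1, y2, y3})
    (hN1 : G.neighborFinset y1 = {x, a1, b1})
    (hN2 : G.neighborFinset y2 = {x, a2, b2})
    (hN3 : G.neighborFinset y3 = {x, a3, b3})
    (f : V → ℝ) :
    graphGamma2 G f f x =
      Qp (f x) (f y1) (f y2) (f y3) (f a1) (f b1) (f a2) (f b2) (f a3) (f b3) := by
  simp only [graphGamma2, graphGamma, graphLap, hNx, hN1, hN2, hN3,
    Finset.sum_insert, Finset.mem_insert, Finset.mem_singleton, Finset.sum_singleton,
    h12, h13, h23, hxa1, hxb1, hab1, hxa2, hxb2, hab2, hxa3, hxb3, hab3,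
    not_false_iff, or_self, or_false, false_or]
  unfold Qp
  ring
section POS
variable {V : Type*} [DecidableEq V] (G : SimpleGraph V) [∀ v, Fintype (G.neighborSet v)]

lemma slot_of_adj {y a b z x : V} (hN : G.neighborFinset y = {x, a, b})
    (hz : G.Adj y z) (hzx : z ≠ x) : z = a ∨ z = b := by
  have hm : z ∈ G.neighborFinset y := by
    rw [SimpleGraph.mem_neighborFinset]; exact hz
  rw [hN] at hm
  simp only [Finset.mem_insert, Finset.mem_singleton] at hm
  tauto

attribute [irreducible] Qp

variable {x y1 y2 y3 a1 b1 a2 b2 a3 b3 : V} (f : V → ℝ)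

lemma pos_TT (hab1 : a1 ≠ b1) (hx1 : y1 ≠ x) (hx2 : y2 ≠ x) (hx3 : y3 ≠ x) (h23 : y2 ≠ y3)
    (hN1 : G.neighborFinset y1 = {x, a1, b1})
    (hN2 : G.neighborFinset y2 = {x, a2, b2})
    (hN3 : G.neighborFinset y3 = {x, a3, b3})
    (hT12 : G.Adj y1 y2) (hT13 : G.Adj y1 y3) :
    0 ≤ Qp (f x) (f y1) (f y2) (f y3) (f a1) (f b1) (f a2) (f b2) (f a3) (f b3) := by
  have m2 := slot_of_adj G hN1 hT12 hx2
  have m3 := slot_of_adj G hN1 hT13 hx3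
  have m21 := slot_of_adj G hN2 hT12.symm hx1
  have m31 := slot_of_adj G hN3 hT13.symm hx1
  rcases m2 with rfl | rfl <;> rcases m3 with rfl | rfl <;>
    rcases m21 with rfl | rfl <;> rcases m31 with rfl | rfl <;>
    first
    | exact absurd rfl h23
    | exact tt_sos _ _ _ _ _ _
    | (rw [qp_swap1]; exact tt_sos _ _ _ _ _ _)
    | (rw [qp_swap2]; exact tt_sos _ _ _ _ _ _)
    | (rw [qp_swap3]; exact tt_sos _ _ _ _ _ _)
    | (rw [qp_swap1, qp_swap2]; exact tt_sos _ _ _ _ _ _)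
    | (rw [qp_swap1, qp_swap3]; exact tt_sos _ _ _ _ _ _)
    | (rw [qp_swap2, qp_swap3]; exact tt_sos _ _ _ _ _ _)
    | (rw [qp_swap1, qp_swap2, qp_swap3]; exact tt_sos _ _ _ _ _ _)

lemma pos_TS (hab1 : a1 ≠ b1) (hab2 : a2 ≠ b2) (hab3 : a3 ≠ b3)
    (hx1 : y1 ≠ x) (hx2 : y2 ≠ x) (hx3 : y3 ≠ x)
    (h13 : y1 ≠ y3)
    (hN1 : G.neighborFinset y1 = {x, a1, b1})
    (hN2 : G.neighborFinset y2 = {x, a2, b2})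
    (hN3 : G.neighborFinset y3 = {x, a3, b3})
    (hT12 : G.Adj y1 y2) {z : V} (hzx : z ≠ x) (hz1 : G.Adj y1 z) (hz3 : G.Adj y3 z) :
    0 ≤ Qp (f x) (f y1) (f y2) (f y3) (f a1) (f b1) (f a2) (f b2) (f a3) (f b3) := by
  have m2 := slot_of_adj G hN1 hT12 hx2
  have m21 := slot_of_adj G hN2 hT12.symm hx1
  have mz1 := slot_of_adj G hN1 hz1 hzx
  have mz3 := slot_of_adj G hN3 hz3 hzx
  rcases m2 with rfl | rfl <;> rcases mz1 with hz | hz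
  · -- y2 = a1, z = a1 = y2 : triangles y1-y2, y2-y3
    subst hz
    rw [qp_perm12]
    exact pos_TT G f hab2 hx2 hx1 hx3 h13 hN2 hN1 hN3 hT12.symm hz3.symm
  · -- y2 = a1, z = b1 : genuine TSb pattern
    subst hz
    rcases m21 with rfl | rfl <;> rcases mz3 with rfl | rfl <;>
      first
      | exact tsb_sos _ _ _ _ _ _ _
      | (rw [qp_swap2]; exact tsb_sos _ _ _ _ _ _ _)
      | (rw [qp_swap3]; exact tsb_sos _ _ _ _ _ _ _)
      | (rw [qp_swap2, qp_swap3]; exact tsb_sos _ _ _ _ _ _ _)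
  · -- y2 = b1, z = a1
    subst hz
    rcases m21 with rfl | rfl <;> rcases mz3 with rfl | rfl <;>
      first
      | (rw [qp_swap1]; exact tsb_sos _ _ _ _ _ _ _)
      | (rw [qp_swap1, qp_swap2]; exact tsb_sos _ _ _ _ _ _ _)
      | (rw [qp_swap1, qp_swap3]; exact tsb_sos _ _ _ _ _ _ _)
      | (rw [qp_swap1, qp_swap2, qp_swap3]; exact tsb_sos _ _ _ _ _ _ _)
  · -- y2 = b1, z = b1 = y2
    subst hz
    rw [qp_perm12]
    exact pos_TT G f hab2 hx2 hx1 hx3 h13 hN2 hN1 hN3 hT12.symm hz3.symm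

lemma pos_SS (hab1 : a1 ≠ b1) (hab2 : a2 ≠ b2) (hab3 : a3 ≠ b3)
    (hx1 : y1 ≠ x) (hx2 : y2 ≠ x) (hx3 : y3 ≠ x)
    (hN1 : G.neighborFinset y1 = {x, a1, b1})
    (hN2 : G.neighborFinset y2 = {x, a2, b2})
    (hN3 : G.neighborFinset y3 = {x, a3, b3})
    {z w : V} (hzx : z ≠ x) (hz1 : G.Adj y1 z) (hz2 : G.Adj y2 z)
    (hwx : w ≠ x) (hw1 : G.Adj y1 w) (hw3 : G.Adj y3 w) :
    0 ≤ Qp (f x) (f y1) (f y2) (f y3) (f a1) (f b1) (f a2) (f b2) (f a3) (f b3) := by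
  have mz1 := slot_of_adj G hN1 hz1 hzx
  have mw1 := slot_of_adj G hN1 hw1 hwx
  have mz2 := slot_of_adj G hN2 hz2 hzx
  have mw3 := slot_of_adj G hN3 hw3 hwx
  rcases mz1 with rfl | rfl <;> rcases mw1 with hw | hw <;> subst hw <;>
    rcases mz2 with rfl | rfl <;> rcases mw3 with rfl | rfl <;>
    first
    | exact sss_sos _ _ _ _ _ _ _ _
    | (rw [qp_swap2]; exact sss_sos _ _ _ _ _ _ _ _)
    | (rw [qp_swap3]; exact sss_sos _ _ _ _ _ _ _ _)
    | (rw [qp_swap2, qp_swap3]; exact sss_sos _ _ _ _ _ _ _ _)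
    | (rw [qp_swap1]; exact sss_sos _ _ _ _ _ _ _ _)
    | (rw [qp_swap1, qp_swap2]; exact sss_sos _ _ _ _ _ _ _ _)
    | (rw [qp_swap1, qp_swap3]; exact sss_sos _ _ _ _ _ _ _ _)
    | (rw [qp_swap1, qp_swap2, qp_swap3]; exact sss_sos _ _ _ _ _ _ _ _)
    | exact ssd_sos _ _ _ _ _ _ _ _
    | (rw [qp_swap2]; exact ssd_sos _ _ _ _ _ _ _ _)
    | (rw [qp_swap3]; exact ssd_sos _ _ _ _ _ _ _ _)
    | (rw [qp_swap2, qp_swap3]; exact ssd_sos _ _ _ _ _ _ _ _)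
    | (rw [qp_swap1]; exact ssd_sos _ _ _ _ _ _ _ _)
    | (rw [qp_swap1, qp_swap2]; exact ssd_sos _ _ _ _ _ _ _ _)
    | (rw [qp_swap1, qp_swap3]; exact ssd_sos _ _ _ _ _ _ _ _)
    | (rw [qp_swap1, qp_swap2, qp_swap3]; exact ssd_sos _ _ _ _ _ _ _ _)

lemma pos_core (hab1 : a1 ≠ b1) (hab2 : a2 ≠ b2) (hab3 : a3 ≠ b3)
    (hx1 : y1 ≠ x) (hx2 : y2 ≠ x) (hx3 : y3 ≠ x)
    (h12 : y1 ≠ y2) (h13 : y1 ≠ y3) (h23 : y2 ≠ y3)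
    (hN1 : G.neighborFinset y1 = {x, a1, b1})
    (hN2 : G.neighborFinset y2 = {x, a2, b2})
    (hN3 : G.neighborFinset y3 = {x, a3, b3})
    (hC12 : G.Adj y1 y2 ∨ ∃ z, z ≠ x ∧ G.Adj y1 z ∧ G.Adj y2 z)
    (hC13 : G.Adj y1 y3 ∨ ∃ z, z ≠ x ∧ G.Adj y1 z ∧ G.Adj y3 z) :
    0 ≤ Qp (f x) (f y1) (f y2) (f y3) (f a1) (f b1) (f a2) (f b2) (f a3) (f b3) := by
  rcases hC12 with hT12 | ⟨z, hzx, hz1, hz2⟩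
  · rcases hC13 with hT13 | ⟨w, hwx, hw1, hw3⟩
    · exact pos_TT G f hab1 hx1 hx2 hx3 h23 hN1 hN2 hN3 hT12 hT13
    · exact pos_TS G f hab1 hab2 hab3 hx1 hx2 hx3 h13 hN1 hN2 hN3 hT12 hwx hw1 hw3
  · rcases hC13 with hT13 | ⟨w, hwx, hw1, hw3⟩
    · rw [qp_perm23]
      exact pos_TS G f hab1 hab3 hab2 hx1 hx3 hx2 h12 hN1 hN3 hN2 hT13 hzx hz1 hz2
    · exact pos_SS G f hab1 hab2 hab3 hx1 hx2 hx3 hN1 hN2 hN3 hzx hz1 hz2 hwx hw1 hw3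

end POS
/-- The local condition: the edge `xy` lies in a triangle or a square. -/
def CondP (G : SimpleGraph V) (x y : V) : Prop :=
  ∃ a b, G.Adj x a ∧ a ≠ y ∧ G.Adj y b ∧ b ≠ x ∧ (a = b ∨ G.Adj a b)

section CD
variable {G : SimpleGraph V} [∀ v, Fintype (G.neighborSet v)]

lemma adj_of_nbr {x u : V} {s : Finset V} (hNx : G.neighborFinset x = s) (hu : u ∈ s) :
    G.Adj x u := by
  rw [← SimpleGraph.mem_neighborFinset, hNx]; exact hu

lemma cov_symm {x u w : V}
    (h : G.Adj u w ∨ ∃ z, z ≠ x ∧ G.Adj u z ∧ G.Adj w z) :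
    G.Adj w u ∨ ∃ z, z ≠ x ∧ G.Adj w z ∧ G.Adj u z := by
  rcases h with h | ⟨z, hzx, h1, h2⟩
  · exact Or.inl h.symm
  · exact Or.inr ⟨z, hzx, h2, h1⟩

lemma cond_elim {x y u v : V} (hNx : G.neighborFinset x = {y, u, v})
    (hC : CondP G x y) :
    (G.Adj y u ∨ ∃ z, z ≠ x ∧ G.Adj y z ∧ G.Adj u z) ∨
      (G.Adj y v ∨ ∃ z, z ≠ x ∧ G.Adj y z ∧ G.Adj v z) := by
  obtain ⟨a, b, hxa, hay, hb, hbx, hab⟩ := hC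
  have ha : a ∈ ({y, u, v} : Finset V) := by
    rw [← hNx, SimpleGraph.mem_neighborFinset]; exact hxa
  simp only [Finset.mem_insert, Finset.mem_singleton] at ha
  rcases ha with rfl | rfl | rfl
  · exact absurd rfl hay
  · left
    rcases hab with rfl | hab
    · exact Or.inl hb
    · exact Or.inr ⟨b, hbx, hb, hab⟩
  · right
    rcases hab with rfl | hab
    · exact Or.inl hb
    · exact Or.inr ⟨b, hbx, hb, hab⟩

lemma vertex_pos (hcubic : ∀ v : V, G.degree v = 3) (x : V)
    (hC : ∀ y : V, G.Adj x y → CondP G x y) (f : V → ℝ) :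
    0 ≤ graphGamma2 G f f x := by
  obtain ⟨y1, y2, y3, h12, h13, h23, hNx⟩ := exists_three G (hcubic x)
  have hA1 : G.Adj x y1 := adj_of_nbr hNx (by simp)
  have hA2 : G.Adj x y2 := adj_of_nbr hNx (by simp)
  have hA3 : G.Adj x y3 := adj_of_nbr hNx (by simp)
  obtain ⟨a1, b1, hxa1, hxb1, hab1, hN1⟩ := exists_slots G (hcubic y1) hA1
  obtain ⟨a2, b2, hxa2, hxb2, hab2, hN2⟩ := exists_slots G (hcubic y2) hA2
  obtain ⟨a3, b3, hxa3, hxb3, hab3, hN3⟩ := exists_slots G (hcubic y3) hA3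
  have hNx21 : G.neighborFinset x = {y2, y1, y3} := by
    rw [hNx]; ext t; simp only [Finset.mem_insert, Finset.mem_singleton]; tauto
  have hNx31 : G.neighborFinset x = {y3, y1, y2} := by
    rw [hNx]; ext t; simp only [Finset.mem_insert, Finset.mem_singleton]; tauto
  have D1 := cond_elim hNx (hC y1 hA1)
  have D2 := cond_elim hNx21 (hC y2 hA2)
  have D3 := cond_elim hNx31 (hC y3 hA3)
  rw [gamma2_expand G h12 h13 h23 hxa1 hxb1 hab1 hxa2 hxb2 hab2 hxa3 hxb3 hab3
    hNx hN1 hN2 hN3 f]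
  have hx1 : y1 ≠ x := hA1.symm.ne
  have hx2 : y2 ≠ x := hA2.symm.ne
  have hx3 : y3 ≠ x := hA3.symm.ne
  rcases D1 with C12 | C13
  · rcases D2 with C21 | C23
    · rcases D3 with C31 | C32
      · exact pos_core G f hab1 hab2 hab3 hx1 hx2 hx3 h12 h13 h23 hN1 hN2 hN3 C12
          (cov_symm C31)
      · rw [qp_perm12]
        exact pos_core G f hab2 hab1 hab3 hx2 hx1 hx3 h12.symm h23 h13 hN2 hN1 hN3 C21
          (cov_symm C32)
    · rw [qp_perm12]
      exact pos_core G f hab2 hab1 hab3 hx2 hx1 hx3 h12.symm h23 h13 hN2 hN1 hN3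
        (cov_symm C12) C23
  · rcases D2 with C21 | C23
    · exact pos_core G f hab1 hab2 hab3 hx1 hx2 hx3 h12 h13 h23 hN1 hN2 hN3
        (cov_symm C21) C13
    · rw [qp_perm13]
      exact pos_core G f hab3 hab2 hab1 hx3 hx2 hx1 h23.symm h13.symm h12.symm
        hN3 hN2 hN1 (cov_symm C23) (cov_symm C13)

lemma vertex_neg (hcubic : ∀ v : V, G.degree v = 3) {x y1 : V} (hxy : G.Adj x y1)
    (hnc : ¬ CondP G x y1) : ∃ f : V → ℝ, graphGamma2 G f f x < 0 := by
  have hP : ∀ a b : V, G.Adj x a → a ≠ y1 → G.Adj y1 b → b ≠ x → a ≠ b ∧ ¬ G.Adj a b := by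
    intro a b h1 h2 h3 h4
    constructor
    · intro h; exact hnc ⟨a, b, h1, h2, h3, h4, Or.inl h⟩
    · intro h; exact hnc ⟨a, b, h1, h2, h3, h4, Or.inr h⟩
  have hcx : (G.neighborFinset x).card = 3 := by
    rw [SimpleGraph.card_neighborFinset_eq_degree]; exact hcubic x
  have hy1m : y1 ∈ G.neighborFinset x := by
    rw [SimpleGraph.mem_neighborFinset]; exact hxy
  obtain ⟨y2, y3, h12, h13, h23, hNx⟩ := mem_card_three hcx hy1m
  have hA2 : G.Adj x y2 := adj_of_nbr hNx (by simp)
  have hA3 : G.Adj x y3 := adj_of_nbr hNx (by simp)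
  obtain ⟨a1, b1, hxa1, hxb1, hab1, hN1⟩ := exists_slots G (hcubic y1) hxy
  obtain ⟨a2, b2, hxa2, hxb2, hab2, hN2⟩ := exists_slots G (hcubic y2) hA2
  obtain ⟨a3, b3, hxa3, hxb3, hab3, hN3⟩ := exists_slots G (hcubic y3) hA3
  have hadj1a : G.Adj y1 a1 := adj_of_nbr hN1 (by simp)
  have hadj1b : G.Adj y1 b1 := adj_of_nbr hN1 (by simp)
  set f : V → ℝ := fun v => if v = x then 0 else if v = y1 then -4
    else if v = a1 ∨ v = b1 then -6 else 2 with hf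
  refine ⟨f, ?_⟩
  rw [gamma2_expand G h12 h13 h23 hxa1 hxb1 hab1 hxa2 hxb2 hab2 hxa3 hxb3 hab3
    hNx hN1 hN2 hN3 f]
  -- value computations
  have hfx : f x = 0 := by simp [hf]
  have hf1 : f y1 = -4 := by
    simp [hf, hxy.symm.ne]
  -- y2, y3 are not a1, b1 (no triangle/square through edge x-y1)
  have k2a := hP y2 a1 hA2 h12.symm hadj1a hxa1.symm
  have k2b := hP y2 b1 hA2 h12.symm hadj1b hxb1.symm
  have k3a := hP y3 a1 hA3 h13.symm hadj1a hxa1.symm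
  have k3b := hP y3 b1 hA3 h13.symm hadj1b hxb1.symm
  have hf2 : f y2 = 2 := by
    simp [hf, hA2.symm.ne, h12.symm, k2a.1, k2b.1]
  have hf3 : f y3 = 2 := by
    simp [hf, hA3.symm.ne, h13.symm, k3a.1, k3b.1]
  have hfa1 : f a1 = -6 := by
    simp [hf, Ne.symm hxa1, hadj1a.symm.ne]
  have hfb1 : f b1 = -6 := by
    simp [hf, Ne.symm hxb1, hadj1b.symm.ne]
  -- slots of y2 and of y3 all take value 2
  have slot2 : ∀ u : V, G.Adj y2 u → u ≠ x → f u = 2 := by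
    intro u hu hux
    have h1 : u ≠ y1 := by
      rintro rfl
      have := hP y2 y2 hA2 h12.symm hu.symm hA2.symm.ne
      exact this.1 rfl
    have h2 : u ≠ a1 := by
      rintro rfl; exact k2a.2 hu
    have h3 : u ≠ b1 := by
      rintro rfl; exact k2b.2 hu
    simp [hf, hux, h1, h2, h3]
  have slot3 : ∀ u : V, G.Adj y3 u → u ≠ x → f u = 2 := by
    intro u hu hux
    have h1 : u ≠ y1 := by
      rintro rfl
      have := hP y3 y3 hA3 h13.symm hu.symm hA3.symm.ne
      exact this.1 rfl
    have h2 : u ≠ a1 := by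
      rintro rfl; exact k3a.2 hu
    have h3 : u ≠ b1 := by
      rintro rfl; exact k3b.2 hu
    simp [hf, hux, h1, h2, h3]
  have hfa2 : f a2 = 2 := slot2 a2 (adj_of_nbr hN2 (by simp)) (Ne.symm hxa2)
  have hfb2 : f b2 = 2 := slot2 b2 (adj_of_nbr hN2 (by simp)) (Ne.symm hxb2)
  have hfa3 : f a3 = 2 := slot3 a3 (adj_of_nbr hN3 (by simp)) (Ne.symm hxa3)
  have hfb3 : f b3 = 2 := slot3 b3 (adj_of_nbr hN3 (by simp)) (Ne.symm hxb3)
  rw [hfx, hf1, hf2, hf3, hfa1, hfb1, hfa2, hfb2, hfa3, hfb3, qp_witness]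
  norm_num

end CD
section OR
variable {G : SimpleGraph V} [∀ v, Fintype (G.neighborSet v)]

lemma pair_card_three {s : Finset V} {y a : V} (h : s.card = 3) (hy : y ∈ s) (ha : a ∈ s)
    (hya : y ≠ a) : ∃ c, y ≠ c ∧ a ≠ c ∧ s = {y, a, c} := by
  obtain ⟨u, v, w, huv, huw, hvw, rfl⟩ := Finset.card_eq_three.mp h
  simp only [Finset.mem_insert, Finset.mem_singleton] at hy ha
  rcases hy with rfl | rfl | rfl <;> rcases ha with rfl | rfl | rfl <;>
    first
    | exact absurd rfl hya
    | exact ⟨u, by tauto, by tauto, by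
        ext t; simp only [Finset.mem_insert, Finset.mem_singleton]; try tauto⟩
    | exact ⟨v, by tauto, by tauto, by
        ext t; simp only [Finset.mem_insert, Finset.mem_singleton]; try tauto⟩
    | exact ⟨w, by tauto, by tauto, by
        ext t; simp only [Finset.mem_insert, Finset.mem_singleton]; try tauto⟩

lemma sum_three {s : Finset V} {p q r : V} (hpq : p ≠ q) (hpr : p ≠ r) (hqr : q ≠ r)
    (h : s = {p, q, r}) (g : V → ℝ) : ∑ u ∈ s, g u = g p + g q + g r := by
  subst h
  rw [Finset.sum_insert (by simp [hpq, hpr]), Finset.sum_insert (by simp [hqr]),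
    Finset.sum_singleton]
  ring

lemma muZero_adj (hcubic : ∀ v : V, G.degree v = 3) {x u : V} (h : G.Adj x u) :
    muZero G x u = 1/3 := by
  simp [muZero, h, hcubic]

lemma muZero_nonadj {x u : V} (h : ¬ G.Adj x u) : muZero G x u = 0 := by
  simp [muZero, h]

lemma muZero_nonneg (x u : V) : 0 ≤ muZero G x u := by
  unfold muZero
  split <;> positivity

lemma wset_bddBelow (x y : V) : BddBelow {w : ℝ | ∃ π : V → V → ℝ,
    (∀ u v, 0 ≤ π u v) ∧
    (∀ u v, π u v ≠ 0 → G.Adj x u ∧ G.Adj y v) ∧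
    (∀ u, ∑ v ∈ G.neighborFinset y, π u v = muZero G x u) ∧
    (∀ v, ∑ u ∈ G.neighborFinset x, π u v = muZero G y v) ∧
    w = ∑ u ∈ G.neighborFinset x, ∑ v ∈ G.neighborFinset y, (G.dist u v : ℝ) * π u v} := by
  refine ⟨0, fun w hw => ?_⟩
  obtain ⟨π, hpos, -, -, -, rfl⟩ := hw
  apply Finset.sum_nonneg
  intro u _
  apply Finset.sum_nonneg
  intro v _
  exact mul_nonneg (by positivity) (hpos u v)

lemma wset_nonempty (hcubic : ∀ v : V, G.degree v = 3) (x y : V) :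
    Set.Nonempty {w : ℝ | ∃ π : V → V → ℝ,
    (∀ u v, 0 ≤ π u v) ∧
    (∀ u v, π u v ≠ 0 → G.Adj x u ∧ G.Adj y v) ∧
    (∀ u, ∑ v ∈ G.neighborFinset y, π u v = muZero G x u) ∧
    (∀ v, ∑ u ∈ G.neighborFinset x, π u v = muZero G y v) ∧
    w = ∑ u ∈ G.neighborFinset x, ∑ v ∈ G.neighborFinset y, (G.dist u v : ℝ) * π u v} := by
  have hmu : ∀ z : V, ∑ v ∈ G.neighborFinset z, muZero G z v = 1 := by
    intro z
    have h1 : ∀ v ∈ G.neighborFinset z, muZero G z v = 1/3 := by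
      intro v hv
      rw [SimpleGraph.mem_neighborFinset] at hv
      exact muZero_adj hcubic hv
    rw [Finset.sum_congr rfl h1, Finset.sum_const,
      SimpleGraph.card_neighborFinset_eq_degree, hcubic]
    norm_num
  refine ⟨_, fun u v => muZero G x u * muZero G y v,
    fun u v => mul_nonneg (muZero_nonneg x u) (muZero_nonneg y v), ?_, ?_, ?_, rfl⟩
  · intro u v h
    constructor
    · by_contra hc
      apply h
      show muZero G x u * muZero G y v = 0
      rw [muZero_nonadj hc, zero_mul]
    · by_contra hc
      apply h
      show muZero G x u * muZero G y v = 0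
      rw [muZero_nonadj hc, mul_zero]
  · intro u
    show ∑ v ∈ G.neighborFinset y, muZero G x u * muZero G y v = muZero G x u
    rw [← Finset.mul_sum, hmu, mul_one]
  · intro v
    show ∑ u ∈ G.neighborFinset x, muZero G x u * muZero G y v = muZero G y v
    rw [← Finset.sum_mul, hmu, one_mul]

lemma Wone_le_one (hcubic : ∀ v : V, G.degree v = 3) {x y : V} (hxy : G.Adj x y)
    (hC : CondP G x y) : Wone G x y ≤ 1 := by
  obtain ⟨a, b, hxa, hay, hyb, hbx, hab⟩ := hC
  have hcx : (G.neighborFinset x).card = 3 := by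
    rw [SimpleGraph.card_neighborFinset_eq_degree]; exact hcubic x
  have hcy : (G.neighborFinset y).card = 3 := by
    rw [SimpleGraph.card_neighborFinset_eq_degree]; exact hcubic y
  have hym : y ∈ G.neighborFinset x := by rw [SimpleGraph.mem_neighborFinset]; exact hxy
  have ham : a ∈ G.neighborFinset x := by rw [SimpleGraph.mem_neighborFinset]; exact hxa
  have hxm : x ∈ G.neighborFinset y := by rw [SimpleGraph.mem_neighborFinset]; exact hxy.symm
  have hbm : b ∈ G.neighborFinset y := by rw [SimpleGraph.mem_neighborFinset]; exact hyb
  obtain ⟨c, hyc, hac, hNX⟩ := pair_card_three hcx hym ham (Ne.symm hay)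
  obtain ⟨d, hxd, hbd, hNY⟩ := pair_card_three hcy hxm hbm (Ne.symm hbx)
  have hAxc : G.Adj x c := adj_of_nbr hNX (by simp)
  have hAyd : G.Adj y d := adj_of_nbr hNY (by simp)
  set π : V → V → ℝ := fun u v =>
    if (u = a ∧ v = b) ∨ (u = c ∧ v = x) ∨ (u = y ∧ v = d) then 1/3 else 0 with hπ
  -- distinctness facts
  have hya' : y ≠ a := Ne.symm hay
  have hay2 : a ≠ y := hay
  have hca : c ≠ a := Ne.symm hac
  have hcy2 : c ≠ y := Ne.symm hyc
  have hxb : x ≠ b := Ne.symm hbx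
  have hdx : d ≠ x := Ne.symm hxd
  have hdb : d ≠ b := Ne.symm hbd
  -- the nine entries of π
  have pyx : π y x = 0 := by simp [hπ, hya', hyc, hxd]
  have pyb : π y b = 0 := by simp [hπ, hya', hyc, hbd]
  have pyd : π y d = 1/3 := by simp [hπ, hya', hyc]
  have pax : π a x = 0 := by simp [hπ, hxb, hac, hay2]
  have pab : π a b = 1/3 := by simp [hπ]
  have pad : π a d = 0 := by simp [hπ, hdb, hac, hay2]
  have pcx : π c x = 1/3 := by simp [hπ, hca]
  have pcb : π c b = 0 := by simp [hπ, hca, hbx, hcy2]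
  have pcd : π c d = 0 := by simp [hπ, hca, hdx, hcy2]
  have key : Wone G x y ≤ 1/3 + (G.dist a b : ℝ)/3 + 1/3 := by
    apply csInf_le (wset_bddBelow x y)
    refine ⟨π, ?_, ?_, ?_, ?_, ?_⟩
    · intro u v; simp only [hπ]; split <;> norm_num
    · intro u v h
      simp only [hπ] at h
      by_cases h1 : (u = a ∧ v = b) ∨ (u = c ∧ v = x) ∨ (u = y ∧ v = d)
      · rcases h1 with ⟨rfl, rfl⟩ | ⟨rfl, rfl⟩ | ⟨rfl, rfl⟩
        · exact ⟨hxa, hyb⟩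
        · exact ⟨hAxc, hxy.symm⟩
        · exact ⟨hxy, hAyd⟩
      · rw [if_neg h1] at h; exact absurd rfl h
    · intro u
      rw [sum_three hxb hxd hbd hNY]
      by_cases h1 : u = y
      · subst h1; rw [pyx, pyb, pyd, muZero_adj hcubic hxy]; norm_num
      · by_cases h2 : u = a
        · subst h2; rw [pax, pab, pad, muZero_adj hcubic hxa]; norm_num
        · by_cases h3 : u = c
          · subst h3; rw [pcx, pcb, pcd, muZero_adj hcubic hAxc]; norm_num
          · have hnu : ¬ G.Adj x u := by
              intro hadj
              have : u ∈ G.neighborFinset x := by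
                rw [SimpleGraph.mem_neighborFinset]; exact hadj
              rw [hNX] at this
              simp only [Finset.mem_insert, Finset.mem_singleton] at this
              tauto
            rw [muZero_nonadj hnu]
            simp [hπ, h1, h2, h3]
    · intro v
      rw [sum_three hya' hyc hac hNX]
      by_cases h1 : v = x
      · subst h1; rw [pyx, pax, pcx, muZero_adj hcubic hxy.symm]; norm_num
      · by_cases h2 : v = b
        · subst h2; rw [pyb, pab, pcb, muZero_adj hcubic hyb]; norm_num
        · by_cases h3 : v = d
          · subst h3; rw [pyd, pad, pcd, muZero_adj hcubic hAyd]; norm_num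
          · have hnv : ¬ G.Adj y v := by
              intro hadj
              have : v ∈ G.neighborFinset y := by
                rw [SimpleGraph.mem_neighborFinset]; exact hadj
              rw [hNY] at this
              simp only [Finset.mem_insert, Finset.mem_singleton] at this
              tauto
            rw [muZero_nonadj hnv]
            simp [hπ, h1, h2, h3]
    · rw [sum_three hya' hyc hac hNX]
      rw [sum_three hxb hxd hbd hNY, sum_three hxb hxd hbd hNY,
        sum_three hxb hxd hbd hNY]
      rw [pyx, pyb, pyd, pax, pab, pad, pcx, pcb, pcd]
      have d1 : G.dist y d = 1 := SimpleGraph.dist_eq_one_iff_adj.mpr hAyd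
      have d2 : G.dist c x = 1 := SimpleGraph.dist_eq_one_iff_adj.mpr hAxc.symm
      rw [d1, d2]
      push_cast
      ring
  have hd : (G.dist a b : ℝ) ≤ 1 := by
    rcases hab with rfl | hadj
    · rw [SimpleGraph.dist_self]; norm_num
    · rw [SimpleGraph.dist_eq_one_iff_adj.mpr hadj]; norm_num
  linarith

lemma Wone_ge (hcubic : ∀ v : V, G.degree v = 3) {x y : V} (hxy : G.Adj x y)
    (hnc : ¬ CondP G x y) : (4/3 : ℝ) ≤ Wone G x y := by
  have hP : ∀ a b : V, G.Adj x a → a ≠ y → G.Adj y b → b ≠ x → a ≠ b ∧ ¬ G.Adj a b := by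
    intro a b h1 h2 h3 h4
    constructor
    · intro h; exact hnc ⟨a, b, h1, h2, h3, h4, Or.inl h⟩
    · intro h; exact hnc ⟨a, b, h1, h2, h3, h4, Or.inr h⟩
  have hcx : (G.neighborFinset x).card = 3 := by
    rw [SimpleGraph.card_neighborFinset_eq_degree]; exact hcubic x
  have hcy : (G.neighborFinset y).card = 3 := by
    rw [SimpleGraph.card_neighborFinset_eq_degree]; exact hcubic y
  have hym : y ∈ G.neighborFinset x := by rw [SimpleGraph.mem_neighborFinset]; exact hxy
  have hxm : x ∈ G.neighborFinset y := by rw [SimpleGraph.mem_neighborFinset]; exact hxy.symm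
  obtain ⟨p, q, hyp', hyq, hpq, hNX⟩ := mem_card_three hcx hym
  obtain ⟨b, c, hxb, hxc, hbc, hNY⟩ := mem_card_three hcy hxm
  have hAxp : G.Adj x p := adj_of_nbr hNX (by simp)
  have hAxq : G.Adj x q := adj_of_nbr hNX (by simp)
  have hAyb : G.Adj y b := adj_of_nbr hNY (by simp)
  have hAyc : G.Adj y c := adj_of_nbr hNY (by simp)
  apply le_csInf (wset_nonempty hcubic x y)
  rintro w ⟨π, hpos, hsupp, hrow, hcol, rfl⟩
  -- expanded sums
  have hrowy := hrow y; have hrowp := hrow p; have hrowq := hrow q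
  rw [sum_three hxb hxc hbc hNY, muZero_adj hcubic hxy] at hrowy
  rw [sum_three hxb hxc hbc hNY, muZero_adj hcubic hAxp] at hrowp
  rw [sum_three hxb hxc hbc hNY, muZero_adj hcubic hAxq] at hrowq
  have hcolx := hcol x
  rw [sum_three hyp' hyq hpq hNX, muZero_adj hcubic hxy.symm] at hcolx
  -- distance facts
  have dist2 : ∀ u v : V, G.Adj x u → u ≠ y → G.Adj y v → v ≠ x → (2 : ℝ) ≤ G.dist u v := by
    intro u v h1 h2 h3 h4
    obtain ⟨hne, hnadj⟩ := hP u v h1 h2 h3 h4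
    have hreach : G.Reachable u v := (h1.symm.reachable.trans hxy.reachable).trans h3.reachable
    have hpos' : 0 < G.dist u v := hreach.pos_dist_of_ne hne
    have hone : G.dist u v ≠ 1 := by
      intro h; exact hnadj (SimpleGraph.dist_eq_one_iff_adj.mp h)
    have : 2 ≤ G.dist u v := by omega
    exact_mod_cast this
  have hpy : p ≠ y := Ne.symm hyp'
  have hqy : q ≠ y := Ne.symm hyq
  have hbx' : b ≠ x := Ne.symm hxb
  have hcx' : c ≠ x := Ne.symm hxc
  have dpb := dist2 p b hAxp hpy hAyb hbx'
  have dpc := dist2 p c hAxp hpy hAyc hcx'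
  have dqb := dist2 q b hAxq hqy hAyb hbx'
  have dqc := dist2 q c hAxq hqy hAyc hcx'
  -- nonnegativity of entries
  have nyx := hpos y x; have nyb := hpos y b; have nyc := hpos y c
  have npx := hpos p x; have npb := hpos p b; have npc := hpos p c
  have nqx := hpos q x; have nqb := hpos q b; have nqc := hpos q c
  rw [sum_three hyp' hyq hpq hNX, sum_three hxb hxc hbc hNY, sum_three hxb hxc hbc hNY,
    sum_three hxb hxc hbc hNY]
  -- all distances are at least... use bounds
  have dyx : (1:ℝ) ≤ G.dist y x := by
    rw [SimpleGraph.dist_eq_one_iff_adj.mpr hxy.symm]; norm_num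
  have dyb : (1:ℝ) ≤ G.dist y b := by
    rw [SimpleGraph.dist_eq_one_iff_adj.mpr hAyb]; norm_num
  have dyc : (1:ℝ) ≤ G.dist y c := by
    rw [SimpleGraph.dist_eq_one_iff_adj.mpr hAyc]; norm_num
  have dpx : (1:ℝ) ≤ G.dist p x := by
    rw [SimpleGraph.dist_eq_one_iff_adj.mpr hAxp.symm]; norm_num
  have dqx : (1:ℝ) ≤ G.dist q x := by
    rw [SimpleGraph.dist_eq_one_iff_adj.mpr hAxq.symm]; norm_num
  have m1 : (1:ℝ) * π y x ≤ (G.dist y x : ℝ) * π y x := mul_le_mul_of_nonneg_right dyx nyx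
  have m2 : (1:ℝ) * π y b ≤ (G.dist y b : ℝ) * π y b := mul_le_mul_of_nonneg_right dyb nyb
  have m3 : (1:ℝ) * π y c ≤ (G.dist y c : ℝ) * π y c := mul_le_mul_of_nonneg_right dyc nyc
  have m4 : (1:ℝ) * π p x ≤ (G.dist p x : ℝ) * π p x := mul_le_mul_of_nonneg_right dpx npx
  have m5 : (1:ℝ) * π q x ≤ (G.dist q x : ℝ) * π q x := mul_le_mul_of_nonneg_right dqx nqx
  have m6 : (2:ℝ) * π p b ≤ (G.dist p b : ℝ) * π p b := mul_le_mul_of_nonneg_right dpb npb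
  have m7 : (2:ℝ) * π p c ≤ (G.dist p c : ℝ) * π p c := mul_le_mul_of_nonneg_right dpc npc
  have m8 : (2:ℝ) * π q b ≤ (G.dist q b : ℝ) * π q b := mul_le_mul_of_nonneg_right dqb nqb
  have m9 : (2:ℝ) * π q c ≤ (G.dist q c : ℝ) * π q c := mul_le_mul_of_nonneg_right dqc nqc
  linarith

end OR

end AuxCDOR

/-- For a cubic (3-regular, locally finite simple) graph, every vertex
satisfies `CD(0,∞)` iff every edge has Ollivier–Ricci curvature `κ₀ ≥ 0`. -/
theorem cubic_CD_iff_ollivier_nonneg {V : Type*} (G : SimpleGraph V)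
    [∀ v, Fintype (G.neighborSet v)] (hcubic : ∀ v : V, G.degree v = 3) :
    (∀ x : V, SatisfiesCD G x) ↔
      (∀ x y : V, G.Adj x y → 0 ≤ kappaZero G x y) := by
  classical
  constructor
  · intro hCD x y hxy
    have hC : CondP G x y := by
      by_contra hnc
      obtain ⟨f, hf⟩ := vertex_neg hcubic hxy hnc
      exact absurd (hCD x f) (not_le.mpr hf)
    have h1 := Wone_le_one hcubic hxy hC
    unfold kappaZero
    linarith
  · intro hk x f
    apply vertex_pos hcubic x
    intro y hxy
    by_contra hnc
    have h1 := Wone_ge hcubic hxy hnc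
    have h2 := hk x y hxy
    unfold kappaZero at h2
    linarith
end

section
/- Let G be a simple 3-regular graph. Then κ₀(x,y) ≥ 0 for every edge xy of G if and only if G is isomorphic to a prism graph Y_n for some n ≥ 3 or to a Möbius ladder M_k for some k ≥ 2. -/
open Finset

variable {V : Type*}

set_option maxHeartbeats 1600000
set_option linter.unusedSectionVars false
set_option linter.unusedVariables false

open SimpleGraph

namespace CubicWork

variable {G : SimpleGraph V}

-- (copies from c1, assume available) --
section C1
lemma sum_triple {α : Type*} [DecidableEq α] (f : α → ℝ) (p q r : α)
    (hpq : p ≠ q) (hpr : p ≠ r) (hqr : q ≠ r) :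
    ∑ z ∈ ({p, q, r} : Finset α), f z = f p + f q + f r := by
  rw [Finset.sum_insert (by simp [hpq, hpr]), Finset.sum_insert (by simp [hqr]),
    Finset.sum_singleton]; ring

lemma three_nbrs [∀ v, Fintype (G.neighborSet v)] (hdeg : ∀ v, G.degree v = 3)
    {x a b c : V} (ha : G.Adj x a) (hb : G.Adj x b) (hc : G.Adj x c)
    (hab : a ≠ b) (hac : a ≠ c) (hbc : b ≠ c) :
    ∀ d, G.Adj x d → d = a ∨ d = b ∨ d = c := by
  classical
  intro d hd
  have hsub : ({a, b, c} : Finset V) ⊆ G.neighborFinset x := by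
    intro z hz
    simp only [Finset.mem_insert, Finset.mem_singleton] at hz
    rcases hz with rfl | rfl | rfl <;> simpa [SimpleGraph.mem_neighborFinset]
  have hcard : ({a, b, c} : Finset V).card = 3 := by
    rw [Finset.card_insert_of_notMem (by simp [hab, hac]),
      Finset.card_insert_of_notMem (by simp [hbc]), Finset.card_singleton]
  have hle : (G.neighborFinset x).card ≤ ({a, b, c} : Finset V).card := by
    rw [hcard, SimpleGraph.card_neighborFinset_eq_degree, hdeg]
  have heq := Finset.eq_of_subset_of_card_le hsub hle
  have : d ∈ ({a, b, c} : Finset V) := by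
    rw [heq]; simpa [SimpleGraph.mem_neighborFinset]
  simpa using this

lemma exists_third [∀ v, Fintype (G.neighborSet v)] (hdeg : ∀ v, G.degree v = 3)
    {x a b : V} (ha : G.Adj x a) (hb : G.Adj x b) (hab : a ≠ b) :
    ∃ c, G.Adj x c ∧ c ≠ a ∧ c ≠ b := by
  classical
  by_contra h
  push_neg at h
  have hsub : G.neighborFinset x ⊆ ({a, b} : Finset V) := by
    intro z hz
    rw [SimpleGraph.mem_neighborFinset] at hz
    rcases Classical.em (z = a) with rfl | hza
    · simp
    rcases Classical.em (z = b) with rfl | hzb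
    · simp
    · exact absurd (h z hz hza) hzb
  have := Finset.card_le_card hsub
  rw [SimpleGraph.card_neighborFinset_eq_degree, hdeg] at this
  have h2 : ({a, b} : Finset V).card ≤ 2 := Finset.card_insert_le _ _ |>.trans (by simp)
  omega

lemma nbrs_of_edge [∀ v, Fintype (G.neighborSet v)] (hdeg : ∀ v, G.degree v = 3)
    {x y : V} (hxy : G.Adj x y) :
    ∃ a₁ a₂, G.Adj x a₁ ∧ G.Adj x a₂ ∧ y ≠ a₁ ∧ y ≠ a₂ ∧ a₁ ≠ a₂ := by
  classical
  have h1 : ∃ a₁, G.Adj x a₁ ∧ a₁ ≠ y := by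
    by_contra h
    push_neg at h
    have hsub : G.neighborFinset x ⊆ ({y} : Finset V) := by
      intro z hz
      rw [SimpleGraph.mem_neighborFinset] at hz
      simp [h z hz]
    have := Finset.card_le_card hsub
    rw [SimpleGraph.card_neighborFinset_eq_degree, hdeg] at this
    simp at this
  obtain ⟨a₁, ha₁, ha₁y⟩ := h1
  obtain ⟨a₂, ha₂, ha₂a₁, ha₂y⟩ := exists_third hdeg ha₁ hxy ha₁y
  exact ⟨a₁, a₂, ha₁, ha₂, ha₁y.symm, (Ne.symm ha₂y), (Ne.symm ha₂a₁)⟩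

lemma two_le_dist (hconn : G.Connected) {a b : V} (hne : a ≠ b) (hnadj : ¬ G.Adj a b) :
    2 ≤ G.dist a b := by
  have h0 : G.dist a b ≠ 0 := by
    intro h; exact hne (hconn.dist_eq_zero_iff.mp h)
  have h1 : G.dist a b ≠ 1 := by
    intro h; exact hnadj (SimpleGraph.dist_eq_one_iff_adj.mp h)
  omega

lemma dist_le_one_of_adj {a b : V} (h : G.Adj a b) : G.dist a b ≤ 1 := by
  simpa using SimpleGraph.dist_le h.toWalk
end C1

/-- The local condition: every edge lies in a triangle or a quadrilateral. -/
def LocalSq (G : SimpleGraph V) : Prop :=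
  ∀ ⦃x y : V⦄, G.Adj x y →
    ∃ a b, G.Adj x a ∧ G.Adj y b ∧ a ≠ y ∧ b ≠ x ∧ (a = b ∨ G.Adj a b)

section Kappa
variable [∀ v, Fintype (G.neighborSet v)]

lemma wone_mem_nonneg {x y : V} {w : ℝ}
    (hw : w ∈ {w : ℝ | ∃ π : V → V → ℝ,
      (∀ u v, 0 ≤ π u v) ∧
      (∀ u v, π u v ≠ 0 → G.Adj x u ∧ G.Adj y v) ∧
      (∀ u, ∑ v ∈ G.neighborFinset y, π u v = muZero G x u) ∧
      (∀ v, ∑ u ∈ G.neighborFinset x, π u v = muZero G y v) ∧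
      w = ∑ u ∈ G.neighborFinset x, ∑ v ∈ G.neighborFinset y, (G.dist u v : ℝ) * π u v}) :
    0 ≤ w := by
  obtain ⟨π, hpos, -, -, -, rfl⟩ := hw
  refine Finset.sum_nonneg fun u _ => Finset.sum_nonneg fun v _ => ?_
  exact mul_nonneg (by positivity) (hpos u v)

lemma nbhd_finset_eq [DecidableEq V] (hdeg : ∀ v, G.degree v = 3)
    {x a b c : V} (ha : G.Adj x a) (hb : G.Adj x b) (hc : G.Adj x c)
    (hab : a ≠ b) (hac : a ≠ c) (hbc : b ≠ c) :
    G.neighborFinset x = {a, b, c} := by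
  ext z
  simp only [SimpleGraph.mem_neighborFinset, Finset.mem_insert, Finset.mem_singleton]
  constructor
  · exact three_nbrs hdeg ha hb hc hab hac hbc z
  · rintro (rfl | rfl | rfl) <;> assumption

lemma muZero_adj (hdeg : ∀ v, G.degree v = 3) {x u : V} (h : G.Adj x u) :
    muZero G x u = 1/3 := by
  simp [muZero, h, hdeg]

lemma muZero_nadj {x u : V} (h : ¬ G.Adj x u) : muZero G x u = 0 := by
  simp [muZero, h]

/-- Membership of the product coupling: the `Wone` constraint set is nonempty. -/
lemma wone_set_nonempty (hdeg : ∀ v, G.degree v = 3) {x y : V} :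
    ∃ w : ℝ, w ∈ {w : ℝ | ∃ π : V → V → ℝ,
      (∀ u v, 0 ≤ π u v) ∧
      (∀ u v, π u v ≠ 0 → G.Adj x u ∧ G.Adj y v) ∧
      (∀ u, ∑ v ∈ G.neighborFinset y, π u v = muZero G x u) ∧
      (∀ v, ∑ u ∈ G.neighborFinset x, π u v = muZero G y v) ∧
      w = ∑ u ∈ G.neighborFinset x, ∑ v ∈ G.neighborFinset y, (G.dist u v : ℝ) * π u v} := by
  classical
  refine ⟨_, ⟨fun u v => muZero G x u * muZero G y v, ?_, ?_, ?_, ?_, rfl⟩⟩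
  · intro u v
    refine mul_nonneg ?_ ?_ <;> (unfold muZero; split <;> positivity)
  · intro u v h
    constructor
    · by_contra hadj; exact h (by simp only []; rw [muZero_nadj hadj, zero_mul])
    · by_contra hadj; exact h (by simp only []; rw [muZero_nadj hadj, mul_zero])
  · intro u
    rw [← Finset.mul_sum]
    have : ∑ v ∈ G.neighborFinset y, muZero G y v = 1 := by
      rw [Finset.sum_congr rfl (fun v hv => muZero_adj hdeg
        ((SimpleGraph.mem_neighborFinset _ _ _).mp hv))]
      rw [Finset.sum_const, SimpleGraph.card_neighborFinset_eq_degree, hdeg]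
      norm_num
    rw [this, mul_one]
  · intro v
    rw [← Finset.sum_mul]
    have : ∑ u ∈ G.neighborFinset x, muZero G x u = 1 := by
      rw [Finset.sum_congr rfl (fun u hu => muZero_adj hdeg
        ((SimpleGraph.mem_neighborFinset _ _ _).mp hu))]
      rw [Finset.sum_const, SimpleGraph.card_neighborFinset_eq_degree, hdeg]
      norm_num
    rw [this, one_mul]


lemma one_le_dist_real (hconn : G.Connected) {a b : V} (hne : a ≠ b) :
    (1 : ℝ) ≤ (G.dist a b : ℝ) := by
  have h0 : G.dist a b ≠ 0 := fun h => hne (hconn.dist_eq_zero_iff.mp h)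
  exact_mod_cast Nat.one_le_iff_ne_zero.mpr h0

lemma two_le_dist_real (hconn : G.Connected) {a b : V} (hne : a ≠ b) (hnadj : ¬ G.Adj a b) :
    (2 : ℝ) ≤ (G.dist a b : ℝ) := by
  exact_mod_cast two_le_dist hconn hne hnadj

lemma dist_le_one_real {a b : V} (h : G.Adj a b) : (G.dist a b : ℝ) ≤ 1 := by
  exact_mod_cast dist_le_one_of_adj h

/-- If an edge admits no local square/triangle then every admissible transport
plan costs at least `4/3`. -/
lemma wone_mem_ge (hconn : G.Connected) (hdeg : ∀ v, G.degree v = 3) {x y : V}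
    (hxy : G.Adj x y)
    (hno : ¬ ∃ a b, G.Adj x a ∧ G.Adj y b ∧ a ≠ y ∧ b ≠ x ∧ (a = b ∨ G.Adj a b)) :
    ∀ w ∈ {w : ℝ | ∃ π : V → V → ℝ,
      (∀ u v, 0 ≤ π u v) ∧
      (∀ u v, π u v ≠ 0 → G.Adj x u ∧ G.Adj y v) ∧
      (∀ u, ∑ v ∈ G.neighborFinset y, π u v = muZero G x u) ∧
      (∀ v, ∑ u ∈ G.neighborFinset x, π u v = muZero G y v) ∧
      w = ∑ u ∈ G.neighborFinset x, ∑ v ∈ G.neighborFinset y, (G.dist u v : ℝ) * π u v},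
      4/3 ≤ w := by
  classical
  obtain ⟨a₁, a₂, hxa₁, hxa₂, hya₁, hya₂, ha₁₂⟩ := nbrs_of_edge hdeg hxy
  obtain ⟨b₁, b₂, hyb₁, hyb₂, hxb₁, hxb₂, hb₁₂⟩ := nbrs_of_edge hdeg hxy.symm
  have hx3 : G.neighborFinset x = {y, a₁, a₂} :=
    nbhd_finset_eq hdeg hxy hxa₁ hxa₂ hya₁ hya₂ ha₁₂
  have hy3 : G.neighborFinset y = {x, b₁, b₂} :=
    nbhd_finset_eq hdeg hxy.symm hyb₁ hyb₂ hxb₁ hxb₂ hb₁₂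
  have key : ∀ a b, G.Adj x a → G.Adj y b → a ≠ y → b ≠ x → a ≠ b ∧ ¬ G.Adj a b := by
    intro a b hxa hyb hay hbx
    constructor
    · intro h; exact hno ⟨a, b, hxa, hyb, hay, hbx, Or.inl h⟩
    · intro h; exact hno ⟨a, b, hxa, hyb, hay, hbx, Or.inr h⟩
  intro w hw
  obtain ⟨π, hpos, hsupp, hmx, hmy, rfl⟩ := hw
  have r1 := hmx y; have r2 := hmx a₁; have r3 := hmx a₂
  have cX := hmy x
  rw [hy3, sum_triple _ x b₁ b₂ hxb₁ hxb₂ hb₁₂, muZero_adj hdeg hxy] at r1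
  rw [hy3, sum_triple _ x b₁ b₂ hxb₁ hxb₂ hb₁₂, muZero_adj hdeg hxa₁] at r2
  rw [hy3, sum_triple _ x b₁ b₂ hxb₁ hxb₂ hb₁₂, muZero_adj hdeg hxa₂] at r3
  rw [hx3, sum_triple _ y a₁ a₂ hya₁ hya₂ ha₁₂, muZero_adj hdeg hxy.symm] at cX
  simp only [hx3, hy3]
  rw [sum_triple _ y a₁ a₂ hya₁ hya₂ ha₁₂]
  rw [sum_triple _ x b₁ b₂ hxb₁ hxb₂ hb₁₂]
  rw [sum_triple _ x b₁ b₂ hxb₁ hxb₂ hb₁₂]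
  rw [sum_triple _ x b₁ b₂ hxb₁ hxb₂ hb₁₂]
  have k11 := key a₁ b₁ hxa₁ hyb₁ (Ne.symm hya₁) (Ne.symm hxb₁)
  have k12 := key a₁ b₂ hxa₁ hyb₂ (Ne.symm hya₁) (Ne.symm hxb₂)
  have k21 := key a₂ b₁ hxa₂ hyb₁ (Ne.symm hya₂) (Ne.symm hxb₁)
  have k22 := key a₂ b₂ hxa₂ hyb₂ (Ne.symm hya₂) (Ne.symm hxb₂)
  have d11 : (1 : ℝ) ≤ G.dist y x := one_le_dist_real hconn hxy.ne'
  have d12 : (1 : ℝ) ≤ G.dist y b₁ := one_le_dist_real hconn hyb₁.ne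
  have d13 : (1 : ℝ) ≤ G.dist y b₂ := one_le_dist_real hconn hyb₂.ne
  have d21 : (1 : ℝ) ≤ G.dist a₁ x := one_le_dist_real hconn hxa₁.ne'
  have d31 : (1 : ℝ) ≤ G.dist a₂ x := one_le_dist_real hconn hxa₂.ne'
  have d22 : (2 : ℝ) ≤ G.dist a₁ b₁ := two_le_dist_real hconn k11.1 k11.2
  have d23 : (2 : ℝ) ≤ G.dist a₁ b₂ := two_le_dist_real hconn k12.1 k12.2
  have d32 : (2 : ℝ) ≤ G.dist a₂ b₁ := two_le_dist_real hconn k21.1 k21.2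
  have d33 : (2 : ℝ) ≤ G.dist a₂ b₂ := two_le_dist_real hconn k22.1 k22.2
  have P11 := mul_le_mul_of_nonneg_right d11 (hpos y x)
  have P12 := mul_le_mul_of_nonneg_right d12 (hpos y b₁)
  have P13 := mul_le_mul_of_nonneg_right d13 (hpos y b₂)
  have P21 := mul_le_mul_of_nonneg_right d21 (hpos a₁ x)
  have P31 := mul_le_mul_of_nonneg_right d31 (hpos a₂ x)
  have P22 := mul_le_mul_of_nonneg_right d22 (hpos a₁ b₁)
  have P23 := mul_le_mul_of_nonneg_right d23 (hpos a₁ b₂)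
  have P32 := mul_le_mul_of_nonneg_right d32 (hpos a₂ b₁)
  have P33 := mul_le_mul_of_nonneg_right d33 (hpos a₂ b₂)
  have hp11 := hpos y x
  linarith

/-- If the edge has a local square/triangle then `W₁ ≤ 1`. -/
lemma wone_le_one (hdeg : ∀ v, G.degree v = 3) {x y : V} (hxy : G.Adj x y)
    (hpair : ∃ a b, G.Adj x a ∧ G.Adj y b ∧ a ≠ y ∧ b ≠ x ∧ (a = b ∨ G.Adj a b)) :
    Wone G x y ≤ 1 := by
  classical
  obtain ⟨a, b, hxa, hyb, hay, hbx, hab⟩ := hpair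
  obtain ⟨c, hxc, hcy, hca⟩ := exists_third hdeg hxy hxa (Ne.symm hay)
  obtain ⟨e, hye, hex, heb⟩ := exists_third hdeg hxy.symm hyb (Ne.symm hbx)
  have hx3 : G.neighborFinset x = {y, a, c} :=
    nbhd_finset_eq hdeg hxy hxa hxc (Ne.symm hay) (Ne.symm hcy) (Ne.symm hca)
  have hy3 : G.neighborFinset y = {x, b, e} :=
    nbhd_finset_eq hdeg hxy.symm hyb hye (Ne.symm hbx) (Ne.symm hex) (Ne.symm heb)
  set π : V → V → ℝ := fun u w =>
    if (u = y ∧ w = e) ∨ (u = a ∧ w = b) ∨ (u = c ∧ w = x) then (1:ℝ)/3 else 0 with hπ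
  have hxb : x ≠ b := Ne.symm hbx
  have hxe : x ≠ e := Ne.symm hex
  have hbe : b ≠ e := Ne.symm heb
  have hya : y ≠ a := Ne.symm hay
  have hyc : y ≠ c := Ne.symm hcy
  have hac : a ≠ c := Ne.symm hca
  have hmem : (∑ u ∈ G.neighborFinset x, ∑ v ∈ G.neighborFinset y,
      (G.dist u v : ℝ) * π u v) ∈ {w : ℝ | ∃ π : V → V → ℝ,
      (∀ u v, 0 ≤ π u v) ∧
      (∀ u v, π u v ≠ 0 → G.Adj x u ∧ G.Adj y v) ∧
      (∀ u, ∑ v ∈ G.neighborFinset y, π u v = muZero G x u) ∧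
      (∀ v, ∑ u ∈ G.neighborFinset x, π u v = muZero G y v) ∧
      w = ∑ u ∈ G.neighborFinset x, ∑ v ∈ G.neighborFinset y, (G.dist u v : ℝ) * π u v} := by
    refine ⟨π, ?_, ?_, ?_, ?_, rfl⟩
    · intro u w; rw [hπ]; dsimp only; split <;> norm_num
    · intro u w h
      rw [hπ] at h; dsimp only at h
      by_cases hc : (u = y ∧ w = e) ∨ (u = a ∧ w = b) ∨ (u = c ∧ w = x)
      · rcases hc with ⟨rfl, rfl⟩ | ⟨rfl, rfl⟩ | ⟨rfl, rfl⟩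
        · exact ⟨hxy, hye⟩
        · exact ⟨hxa, hyb⟩
        · exact ⟨hxc, hxy.symm⟩
      · rw [if_neg hc] at h; exact absurd rfl h
    · intro u
      rw [hy3, sum_triple _ x b e hxb hxe hbe]
      by_cases h1 : u = y
      · subst h1
        rw [muZero_adj hdeg hxy, hπ]; dsimp only
        rw [if_neg (by rintro (⟨h₁', h₂'⟩ | ⟨h₁', h₂'⟩ | ⟨h₁', h₂'⟩) <;> simp_all), if_neg (by rintro (⟨h₁', h₂'⟩ | ⟨h₁', h₂'⟩ | ⟨h₁', h₂'⟩) <;> simp_all),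
          if_pos (by tauto)]
        ring
      by_cases h2 : u = a
      · subst h2
        rw [muZero_adj hdeg hxa, hπ]; dsimp only
        rw [if_neg (by rintro (⟨h₁', h₂'⟩ | ⟨h₁', h₂'⟩ | ⟨h₁', h₂'⟩) <;> simp_all), if_pos (by tauto),
          if_neg (by rintro (⟨h₁', h₂'⟩ | ⟨h₁', h₂'⟩ | ⟨h₁', h₂'⟩) <;> simp_all)]
        ring
      by_cases h3 : u = c
      · subst h3
        rw [muZero_adj hdeg hxc, hπ]; dsimp only
        rw [if_pos (by tauto), if_neg (by rintro (⟨h₁', h₂'⟩ | ⟨h₁', h₂'⟩ | ⟨h₁', h₂'⟩) <;> simp_all),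
          if_neg (by rintro (⟨h₁', h₂'⟩ | ⟨h₁', h₂'⟩ | ⟨h₁', h₂'⟩) <;> simp_all)]
        ring
      · have hnadj : ¬ G.Adj x u := by
          intro h
          rcases three_nbrs hdeg hxy hxa hxc hya hyc hac u h with rfl | rfl | rfl
          exacts [h1 rfl, h2 rfl, h3 rfl]
        rw [muZero_nadj hnadj, hπ]; dsimp only
        rw [if_neg (by rintro (⟨h₁', h₂'⟩ | ⟨h₁', h₂'⟩ | ⟨h₁', h₂'⟩) <;> simp_all), if_neg (by rintro (⟨h₁', h₂'⟩ | ⟨h₁', h₂'⟩ | ⟨h₁', h₂'⟩) <;> simp_all),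
          if_neg (by rintro (⟨h₁', h₂'⟩ | ⟨h₁', h₂'⟩ | ⟨h₁', h₂'⟩) <;> simp_all)]
        ring
    · intro w
      rw [hx3, sum_triple _ y a c hya hyc hac]
      by_cases h1 : w = x
      · subst h1
        rw [muZero_adj hdeg hxy.symm, hπ]; dsimp only
        rw [if_neg (by rintro (⟨h₁', h₂'⟩ | ⟨h₁', h₂'⟩ | ⟨h₁', h₂'⟩) <;> simp_all), if_neg (by rintro (⟨h₁', h₂'⟩ | ⟨h₁', h₂'⟩ | ⟨h₁', h₂'⟩) <;> simp_all), if_pos (by tauto)]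
        ring
      by_cases h2 : w = b
      · subst h2
        rw [muZero_adj hdeg hyb, hπ]; dsimp only
        rw [if_neg (by rintro (⟨h₁', h₂'⟩ | ⟨h₁', h₂'⟩ | ⟨h₁', h₂'⟩) <;> simp_all), if_pos (by tauto),
          if_neg (by rintro (⟨h₁', h₂'⟩ | ⟨h₁', h₂'⟩ | ⟨h₁', h₂'⟩) <;> simp_all)]
        ring
      by_cases h3 : w = e
      · subst h3
        rw [muZero_adj hdeg hye, hπ]; dsimp only
        rw [if_pos (by tauto), if_neg (by rintro (⟨h₁', h₂'⟩ | ⟨h₁', h₂'⟩ | ⟨h₁', h₂'⟩) <;> simp_all), if_neg (by rintro (⟨h₁', h₂'⟩ | ⟨h₁', h₂'⟩ | ⟨h₁', h₂'⟩) <;> simp_all)]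
        ring
      · have hnadj : ¬ G.Adj y w := by
          intro h
          rcases three_nbrs hdeg hxy.symm hyb hye hxb hxe hbe w h with rfl | rfl | rfl
          exacts [h1 rfl, h2 rfl, h3 rfl]
        rw [muZero_nadj hnadj, hπ]; dsimp only
        rw [if_neg (by rintro (⟨h₁', h₂'⟩ | ⟨h₁', h₂'⟩ | ⟨h₁', h₂'⟩) <;> simp_all), if_neg (by rintro (⟨h₁', h₂'⟩ | ⟨h₁', h₂'⟩ | ⟨h₁', h₂'⟩) <;> simp_all),
          if_neg (by rintro (⟨h₁', h₂'⟩ | ⟨h₁', h₂'⟩ | ⟨h₁', h₂'⟩) <;> simp_all)]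
        ring
  have hle : Wone G x y ≤ ∑ u ∈ G.neighborFinset x, ∑ v ∈ G.neighborFinset y,
      (G.dist u v : ℝ) * π u v := by
    apply csInf_le ⟨0, fun w hw => wone_mem_nonneg hw⟩ hmem
  refine hle.trans ?_
  simp only [hx3, hy3]
  rw [sum_triple _ y a c hya hyc hac]
  rw [sum_triple _ x b e hxb hxe hbe]
  rw [sum_triple _ x b e hxb hxe hbe]
  rw [sum_triple _ x b e hxb hxe hbe]
  have e1 : π y x = 0 := by rw [hπ]; exact if_neg (by rintro (⟨h₁', h₂'⟩ | ⟨h₁', h₂'⟩ | ⟨h₁', h₂'⟩) <;> simp_all)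
  have e2 : π y b = 0 := by rw [hπ]; exact if_neg (by rintro (⟨h₁', h₂'⟩ | ⟨h₁', h₂'⟩ | ⟨h₁', h₂'⟩) <;> simp_all)
  have e3 : π y e = 1/3 := by rw [hπ]; exact if_pos (by tauto)
  have e4 : π a x = 0 := by rw [hπ]; exact if_neg (by rintro (⟨h₁', h₂'⟩ | ⟨h₁', h₂'⟩ | ⟨h₁', h₂'⟩) <;> simp_all)
  have e5 : π a b = 1/3 := by rw [hπ]; exact if_pos (by tauto)
  have e6 : π a e = 0 := by rw [hπ]; exact if_neg (by rintro (⟨h₁', h₂'⟩ | ⟨h₁', h₂'⟩ | ⟨h₁', h₂'⟩) <;> simp_all)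
  have e7 : π c x = 1/3 := by rw [hπ]; exact if_pos (by tauto)
  have e8 : π c b = 0 := by rw [hπ]; exact if_neg (by rintro (⟨h₁', h₂'⟩ | ⟨h₁', h₂'⟩ | ⟨h₁', h₂'⟩) <;> simp_all)
  have e9 : π c e = 0 := by rw [hπ]; exact if_neg (by rintro (⟨h₁', h₂'⟩ | ⟨h₁', h₂'⟩ | ⟨h₁', h₂'⟩) <;> simp_all)
  rw [e1, e2, e3, e4, e5, e6, e7, e8, e9]
  have dye : (G.dist y e : ℝ) ≤ 1 := dist_le_one_real hye
  have dcx : (G.dist c x : ℝ) ≤ 1 := dist_le_one_real hxc.symm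
  have dab : (G.dist a b : ℝ) ≤ 1 := by
    rcases hab with rfl | h
    · simp [SimpleGraph.dist_self]
    · exact dist_le_one_real h
  have h1 : (0:ℝ) ≤ G.dist y x := by positivity
  nlinarith [h1]

/-- `κ₀ ≥ 0` at an edge with a local square. -/
lemma kappa_nonneg_of_pair (hdeg : ∀ v, G.degree v = 3) {x y : V} (hxy : G.Adj x y)
    (hpair : ∃ a b, G.Adj x a ∧ G.Adj y b ∧ a ≠ y ∧ b ≠ x ∧ (a = b ∨ G.Adj a b)) :
    0 ≤ kappaZero G x y := by
  have := wone_le_one hdeg hxy hpair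
  unfold kappaZero
  linarith

/-- `κ₀ ≥ 0` at an edge forces a local square. -/
lemma pair_of_kappa_nonneg (hconn : G.Connected) (hdeg : ∀ v, G.degree v = 3)
    {x y : V} (hxy : G.Adj x y) (hk : 0 ≤ kappaZero G x y) :
    ∃ a b, G.Adj x a ∧ G.Adj y b ∧ a ≠ y ∧ b ≠ x ∧ (a = b ∨ G.Adj a b) := by
  by_contra hno
  have hge := wone_mem_ge hconn hdeg hxy hno
  obtain ⟨w₀, hw₀⟩ := wone_set_nonempty (G := G) hdeg (x := x) (y := y)
  have : (4:ℝ)/3 ≤ Wone G x y := le_csInf ⟨w₀, hw₀⟩ hge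
  unfold kappaZero at hk
  linarith

end Kappa




section ZModFacts

lemma zmod_natCast_ne {n a b : ℕ} (ha : a < n) (hb : b < n) (hab : a ≠ b) :
    ((a : ℕ) : ZMod n) ≠ ((b : ℕ) : ZMod n) := by
  intro h
  apply hab
  have := congrArg ZMod.val h
  rwa [ZMod.val_natCast_of_lt ha, ZMod.val_natCast_of_lt hb] at this

lemma zmod_natCast_ne_zero {n a : ℕ} (ha : a < n) (ha0 : a ≠ 0) :
    ((a : ℕ) : ZMod n) ≠ 0 := by
  have := zmod_natCast_ne ha (show 0 < n by omega) ha0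
  simpa using this

lemma zmod_one_ne_zero {n : ℕ} (hn : 2 ≤ n) : (1 : ZMod n) ≠ 0 := by
  have := zmod_natCast_ne_zero (n := n) (a := 1) (by omega) (by omega)
  simpa using this

lemma zmod_two_ne_zero {n : ℕ} (hn : 3 ≤ n) : (2 : ZMod n) ≠ 0 := by
  have := zmod_natCast_ne_zero (n := n) (a := 2) (by omega) (by omega)
  simpa using this

end ZModFacts

section PrismMobius

lemma prism_adj {n : ℕ} (hn : 3 ≤ n) (p q : ZMod n × Bool) :
    (prismGraph n).Adj p q ↔
      ((p.2 = q.2 ∧ (q.1 = p.1 + 1 ∨ p.1 = q.1 + 1)) ∨ (p.1 = q.1 ∧ p.2 ≠ q.2)) := by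
  have h1 : (1 : ZMod n) ≠ 0 := zmod_one_ne_zero (by omega)
  unfold prismGraph
  rw [SimpleGraph.fromRel_adj]
  constructor
  · rintro ⟨hne, (⟨h2, h3⟩ | ⟨h2, h3⟩) | (⟨h2, h3⟩ | ⟨h2, h3⟩)⟩
    · exact Or.inl ⟨h2, Or.inl h3⟩
    · exact Or.inr ⟨h2, h3⟩
    · exact Or.inl ⟨h2.symm, Or.inr h3⟩
    · exact Or.inr ⟨h2.symm, fun h => h3 h.symm⟩
  · rintro (⟨h2, h3 | h3⟩ | ⟨h2, h3⟩)
    · refine ⟨?_, Or.inl (Or.inl ⟨h2, h3⟩)⟩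
      intro h
      rw [h] at h3
      exact h1 (by linear_combination -h3)
    · refine ⟨?_, Or.inr (Or.inl ⟨h2.symm, h3⟩)⟩
      intro h
      rw [h] at h3
      exact h1 (by linear_combination -h3)
    · exact ⟨fun h => h3 (congrArg Prod.snd h), Or.inl (Or.inr ⟨h2, h3⟩)⟩

lemma mobius_adj {k : ℕ} (hk : 2 ≤ k) (p q : ZMod (2 * k)) :
    (mobiusLadder k).Adj p q ↔
      p ≠ q ∧ (q = p + 1 ∨ p = q + 1 ∨ q = p + (k : ZMod (2 * k))) := by
  have hkk : (k : ZMod (2 * k)) + (k : ZMod (2 * k)) = 0 := by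
    have : ((2 * k : ℕ) : ZMod (2 * k)) = 0 := ZMod.natCast_self _
    push_cast at this
    linear_combination this
  unfold mobiusLadder
  rw [SimpleGraph.fromRel_adj]
  constructor
  · rintro ⟨hne, (h | h) | (h | h)⟩
    · exact ⟨hne, Or.inl h⟩
    · exact ⟨hne, Or.inr (Or.inr h)⟩
    · exact ⟨hne, Or.inr (Or.inl h)⟩
    · refine ⟨hne, Or.inr (Or.inr ?_)⟩
      rw [h]
      linear_combination -hkk
  · rintro ⟨hne, h | h | h⟩
    · exact ⟨hne, Or.inl (Or.inl h)⟩
    · exact ⟨hne, Or.inr (Or.inl h)⟩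
    · exact ⟨hne, Or.inl (Or.inr h)⟩

lemma localSq_prism {n : ℕ} (hn : 3 ≤ n) : LocalSq (prismGraph n) := by
  have h1 : (1 : ZMod n) ≠ 0 := zmod_one_ne_zero (by omega)
  intro p q hpq
  rw [prism_adj hn] at hpq
  rcases hpq with ⟨h2, h3 | h3⟩ | ⟨h2, h3⟩
  · refine ⟨(p.1, !p.2), (q.1, !q.2), ?_, ?_, ?_, ?_, Or.inr ?_⟩
    · rw [prism_adj hn]; exact Or.inr ⟨rfl, by simp⟩
    · rw [prism_adj hn]; exact Or.inr ⟨rfl, by simp⟩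
    · intro h
      have := congrArg Prod.snd h
      simp only at this
      rw [← h2] at this
      simp at this
    · intro h
      have := congrArg Prod.snd h
      simp only at this
      rw [h2] at this
      simp at this
    · rw [prism_adj hn]
      exact Or.inl ⟨by simp [h2], Or.inl h3⟩
  · refine ⟨(p.1, !p.2), (q.1, !q.2), ?_, ?_, ?_, ?_, Or.inr ?_⟩
    · rw [prism_adj hn]; exact Or.inr ⟨rfl, by simp⟩
    · rw [prism_adj hn]; exact Or.inr ⟨rfl, by simp⟩
    · intro h
      have := congrArg Prod.snd h
      simp only at this
      rw [← h2] at this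
      simp at this
    · intro h
      have := congrArg Prod.snd h
      simp only at this
      rw [h2] at this
      simp at this
    · rw [prism_adj hn]
      exact Or.inl ⟨by simp [h2], Or.inr h3⟩
  · refine ⟨(p.1 + 1, p.2), (q.1 + 1, q.2), ?_, ?_, ?_, ?_, Or.inr ?_⟩
    · rw [prism_adj hn]; exact Or.inl ⟨rfl, Or.inl rfl⟩
    · rw [prism_adj hn]; exact Or.inl ⟨rfl, Or.inl rfl⟩
    · intro h
      have := congrArg Prod.fst h
      simp only at this
      rw [← h2] at this
      exact h1 (by linear_combination this)
    · intro h
      have := congrArg Prod.fst h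
      simp only at this
      rw [h2] at this
      exact h1 (by linear_combination this)
    · rw [prism_adj hn]
      exact Or.inr ⟨by simp [h2], h3⟩

lemma localSq_mobius {k : ℕ} (hk : 2 ≤ k) : LocalSq (mobiusLadder k) := by
  have hk4 : 4 ≤ 2 * k := by omega
  have h1 : (1 : ZMod (2 * k)) ≠ 0 := zmod_one_ne_zero (by omega)
  have hκ0 : ((k : ℕ) : ZMod (2 * k)) ≠ 0 := zmod_natCast_ne_zero (by omega) (by omega)
  have hκ1 : ((k : ℕ) : ZMod (2 * k)) ≠ 1 := by
    have := zmod_natCast_ne (n := 2 * k) (a := k) (b := 1) (by omega) (by omega) (by omega)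
    simpa using this
  have hκ1' : ((k : ℕ) : ZMod (2 * k)) + 1 ≠ 0 := by
    have : (((k + 1 : ℕ)) : ZMod (2 * k)) ≠ 0 := zmod_natCast_ne_zero (by omega) (by omega)
    push_cast at this
    exact this
  intro p q hpq
  rw [mobius_adj hk] at hpq
  obtain ⟨hne, h | h | h⟩ := hpq
  · refine ⟨p + (k : ZMod (2*k)), q + (k : ZMod (2*k)), ?_, ?_, ?_, ?_, Or.inr ?_⟩
    · rw [mobius_adj hk]
      exact ⟨fun hh => hκ0 (by linear_combination -hh), Or.inr (Or.inr rfl)⟩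
    · rw [mobius_adj hk]
      exact ⟨fun hh => hκ0 (by linear_combination -hh), Or.inr (Or.inr rfl)⟩
    · intro hh; rw [h] at hh; exact hκ1 (by linear_combination hh)
    · intro hh; rw [h] at hh; exact hκ1' (by linear_combination hh)
    · rw [mobius_adj hk]
      constructor
      · intro hh; rw [h] at hh; exact h1 (by linear_combination -hh)
      · exact Or.inl (by rw [h]; ring)
  · refine ⟨p + (k : ZMod (2*k)), q + (k : ZMod (2*k)), ?_, ?_, ?_, ?_, Or.inr ?_⟩
    · rw [mobius_adj hk]
      exact ⟨fun hh => hκ0 (by linear_combination -hh), Or.inr (Or.inr rfl)⟩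
    · rw [mobius_adj hk]
      exact ⟨fun hh => hκ0 (by linear_combination -hh), Or.inr (Or.inr rfl)⟩
    · intro hh; rw [h] at hh; exact hκ1' (by linear_combination hh)
    · intro hh; rw [h] at hh; exact hκ1 (by linear_combination hh)
    · rw [mobius_adj hk]
      constructor
      · intro hh; rw [h] at hh; exact h1 (by linear_combination hh)
      · exact Or.inr (Or.inl (by rw [h]; ring))
  · refine ⟨p + 1, q + 1, ?_, ?_, ?_, ?_, Or.inr ?_⟩
    · rw [mobius_adj hk]
      exact ⟨fun hh => h1 (by linear_combination -hh), Or.inl rfl⟩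
    · rw [mobius_adj hk]
      exact ⟨fun hh => h1 (by linear_combination -hh), Or.inl rfl⟩
    · intro hh; rw [h] at hh; exact hκ1 (by linear_combination -hh)
    · intro hh; rw [h] at hh; exact hκ1' (by linear_combination hh)
    · rw [mobius_adj hk]
      constructor
      · intro hh; exact hne (by linear_combination hh)
      · exact Or.inr (Or.inr (by rw [h]; ring))

end PrismMobius

section Transfer

lemma localSq_of_iso {W : Type*} {H : SimpleGraph W} (e : G ≃g H) (h : LocalSq H) :
    LocalSq G := by
  intro x y hxy
  have hH : H.Adj (e x) (e y) := e.map_adj_iff.mpr hxy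
  obtain ⟨a, b, h1, h2, h3, h4, h5⟩ := h hH
  refine ⟨e.symm a, e.symm b, ?_, ?_, ?_, ?_, ?_⟩
  · have := e.symm.map_adj_iff.mpr h1
    simpa using this
  · have := e.symm.map_adj_iff.mpr h2
    simpa using this
  · intro hh; apply h3; rw [← hh]; simp
  · intro hh; apply h4; rw [← hh]; simp
  · rcases h5 with rfl | h5
    · exact Or.inl rfl
    · exact Or.inr (e.symm.map_adj_iff.mpr h5)

lemma mem_of_closed {S : Set V} (hcl : ∀ a ∈ S, ∀ b, G.Adj a b → b ∈ S) :
    ∀ {a b : V}, G.Walk a b → a ∈ S → b ∈ S := by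
  intro a b w
  induction w with
  | nil => exact id
  | cons h p ih => exact fun ha => ih (hcl _ ha _ h)

lemma three_le_degree' {W : Type*} {H : SimpleGraph W} [∀ p, Fintype (H.neighborSet p)]
    {x a b c : W} (ha : H.Adj x a) (hb : H.Adj x b) (hc : H.Adj x c)
    (hab : a ≠ b) (hac : a ≠ c) (hbc : b ≠ c) : 3 ≤ H.degree x := by
  classical
  have hsub : ({a, b, c} : Finset W) ⊆ H.neighborFinset x := by
    intro z hz
    simp only [Finset.mem_insert, Finset.mem_singleton] at hz
    rcases hz with rfl | rfl | rfl <;> simpa [SimpleGraph.mem_neighborFinset]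
  have hcard : ({a, b, c} : Finset W).card = 3 := by
    rw [Finset.card_insert_of_notMem (by simp [hab, hac]),
      Finset.card_insert_of_notMem (by simp [hbc]), Finset.card_singleton]
  calc 3 = ({a, b, c} : Finset W).card := hcard.symm
    _ ≤ (H.neighborFinset x).card := Finset.card_le_card hsub
    _ = H.degree x := H.card_neighborFinset_eq_degree x

lemma iso_of_maps {W : Type*} (H : SimpleGraph W) [∀ p, Fintype (H.neighborSet p)]
    [∀ v, Fintype (G.neighborSet v)] (hdeg : ∀ v, G.degree v = 3) (f : W ≃ V)
    (hfwd : ∀ p q, H.Adj p q → G.Adj (f p) (f q)) (hH3 : ∀ p, 3 ≤ H.degree p) :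
    Nonempty (G ≃g H) := by
  classical
  have key : ∀ p q, G.Adj (f p) (f q) → H.Adj p q := by
    intro p q hadj
    have himg : (H.neighborFinset p).image f ⊆ G.neighborFinset (f p) := by
      intro z hz
      rw [Finset.mem_image] at hz
      obtain ⟨r, hr, rfl⟩ := hz
      rw [SimpleGraph.mem_neighborFinset] at hr ⊢
      exact hfwd _ _ hr
    have hcard : 3 ≤ ((H.neighborFinset p).image f).card := by
      rw [Finset.card_image_of_injective _ f.injective,
        SimpleGraph.card_neighborFinset_eq_degree]
      exact hH3 p
    have heq : (H.neighborFinset p).image f = G.neighborFinset (f p) :=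
      Finset.eq_of_subset_of_card_le himg
        (by rw [SimpleGraph.card_neighborFinset_eq_degree, hdeg]; exact hcard)
    have hmem : f q ∈ (H.neighborFinset p).image f := by
      rw [heq, SimpleGraph.mem_neighborFinset]; exact hadj
    rw [Finset.mem_image] at hmem
    obtain ⟨r, hr, hrq⟩ := hmem
    have : r = q := f.injective hrq
    subst this
    rwa [SimpleGraph.mem_neighborFinset] at hr
  refine ⟨⟨f.symm, ?_⟩⟩
  intro a b
  constructor
  · intro h
    have := hfwd _ _ h
    simpa using this
  · intro h
    exact key (f.symm a) (f.symm b) (by simpa using h)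

end Transfer

section Ladder

/-- A ladder in `G`: rungs `u i — v i` (`i ≤ m`) with side rails `u i — u (i+1)`,
`v i — v (i+1)`, all `2(m+1)` vertices distinct. -/
structure IsLadder (G : SimpleGraph V) (m : ℕ) (u v : ℕ → V) : Prop where
  rung : ∀ i, i ≤ m → G.Adj (u i) (v i)
  usucc : ∀ i, i < m → G.Adj (u i) (u (i+1))
  vsucc : ∀ i, i < m → G.Adj (v i) (v (i+1))
  uinj : ∀ i, i ≤ m → ∀ j, j ≤ m → u i = u j → i = j
  vinj : ∀ i, i ≤ m → ∀ j, j ≤ m → v i = v j → i = j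
  uv : ∀ i, i ≤ m → ∀ j, j ≤ m → u i ≠ v j

lemma IsLadder.swap {m : ℕ} {u v : ℕ → V} (L : IsLadder G m u v) : IsLadder G m v u :=
  ⟨fun i hi => (L.rung i hi).symm, L.vsucc, L.usucc, L.vinj, L.uinj,
    fun i hi j hj h => L.uv j hj i hi h.symm⟩

section LadderCubic
variable [∀ v, Fintype (G.neighborSet v)]

/-- Interior ladder vertices have exactly their ladder neighbours. -/
lemma IsLadder.uNbhd (hdeg : ∀ v, G.degree v = 3) {m : ℕ} {u v : ℕ → V}
    (L : IsLadder G m u v) {i : ℕ} (hi : i + 2 ≤ m) :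
    ∀ d, G.Adj (u (i+1)) d → d = u i ∨ d = u (i+2) ∨ d = v (i+1) := by
  refine three_nbrs hdeg (L.usucc i (by omega)).symm (L.usucc (i+1) (by omega))
    (L.rung (i+1) (by omega)) ?_ ?_ ?_
  · intro h; have := L.uinj i (by omega) (i+2) (by omega) h; omega
  · exact L.uv i (by omega) (i+1) (by omega)
  · exact L.uv (i+2) (by omega) (i+1) (by omega)

/-- The full neighbourhood of a vertex on a closed ladder cycle. -/
lemma cycle_nbhd (hdeg : ∀ v, G.degree v = 3) {m : ℕ} {u v : ℕ → V}
    (L : IsLadder G m u v) (hm : 2 ≤ m) (hcu : G.Adj (u m) (u 0)) :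
    ∀ t, t ≤ m → ∀ d, G.Adj (u t) d →
      d = u (if t = 0 then m else t - 1) ∨ d = u (if t = m then 0 else t + 1) ∨ d = v t := by
  intro t ht
  have ha : G.Adj (u t) (u (if t = 0 then m else t - 1)) := by
    by_cases h0 : t = 0
    · rw [if_pos h0, h0]; exact hcu.symm
    · rw [if_neg h0]
      have h1 := L.usucc (t-1) (by omega)
      have heq : t - 1 + 1 = t := by omega
      rw [heq] at h1
      exact h1.symm
  have hb : G.Adj (u t) (u (if t = m then 0 else t + 1)) := by
    by_cases h0 : t = m
    · rw [if_pos h0, h0]; exact hcu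
    · rw [if_neg h0]; exact L.usucc t (by omega)
  have hab : u (if t = 0 then m else t - 1) ≠ u (if t = m then 0 else t + 1) := by
    intro h
    have h1 : (if t = 0 then m else t - 1) ≤ m := by split <;> omega
    have h2 : (if t = m then 0 else t + 1) ≤ m := by split <;> omega
    have := L.uinj _ h1 _ h2 h
    split at this <;> split at this <;> omega
  exact three_nbrs hdeg ha hb (L.rung t ht) hab
    (L.uv _ (by split <;> omega) t ht) (L.uv _ (by split <;> omega) t ht)

/-- A prism-closed ladder exhibits `G` as a prism graph. -/
lemma prism_of_closed (hconn : G.Connected) (hdeg : ∀ v, G.degree v = 3)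
    {m : ℕ} {u v : ℕ → V} (L : IsLadder G m u v) (hm : 2 ≤ m)
    (hcu : G.Adj (u m) (u 0)) (hcv : G.Adj (v m) (v 0)) :
    Nonempty (G ≃g prismGraph (m+1)) := by
  classical
  haveI : NeZero (m+1) := ⟨by omega⟩
  haveI : Fact (1 < m+1) := ⟨by omega⟩
  have hufull := cycle_nbhd hdeg L hm hcu
  have hvfull := cycle_nbhd hdeg L.swap hm hcv
  set f : ZMod (m+1) × Bool → V := fun p => if p.2 then v p.1.val else u p.1.val with hf
  have hvalle : ∀ i : ZMod (m+1), i.val ≤ m := fun i => by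
    have := ZMod.val_lt i; omega
  have hinj : Function.Injective f := by
    intro p q h
    rw [hf] at h; dsimp only at h
    have hp := hvalle p.1
    have hq := hvalle q.1
    have hfst : p.1 = q.1 ∧ p.2 = q.2 := by
      cases hb : p.2 <;> cases hb' : q.2 <;> rw [hb, hb'] at h <;> simp only [if_true, if_false, Bool.false_eq_true, if_neg Bool.false_ne_true] at h
      · exact ⟨ZMod.val_injective _ (L.uinj _ hp _ hq h), rfl⟩
      · exact absurd h (L.uv _ hp _ hq)
      · exact absurd h.symm (L.uv _ hq _ hp)
      · exact ⟨ZMod.val_injective _ (L.vinj _ hp _ hq h), rfl⟩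
    exact Prod.ext hfst.1 hfst.2
  have humem : ∀ s, s ≤ m → u s ∈ Set.range f := by
    intro s hs
    exact ⟨((s : ZMod (m+1)), false), by
      rw [hf]; dsimp only; rw [ZMod.val_natCast_of_lt (by omega)]; simp⟩
  have hvmem : ∀ s, s ≤ m → v s ∈ Set.range f := by
    intro s hs
    exact ⟨((s : ZMod (m+1)), true), by
      rw [hf]; dsimp only; rw [ZMod.val_natCast_of_lt (by omega)]; simp⟩
  have hcl : ∀ a ∈ Set.range f, ∀ b, G.Adj a b → b ∈ Set.range f := by
    rintro a ⟨p, rfl⟩ b hadj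
    have hp := hvalle p.1
    cases hb : p.2
    · have ha : f p = u p.1.val := by rw [hf]; dsimp only; rw [hb]; rfl
      rw [ha] at hadj
      rcases hufull _ hp b hadj with rfl | rfl | rfl
      · exact humem _ (by split <;> omega)
      · exact humem _ (by split <;> omega)
      · exact hvmem _ hp
    · have ha : f p = v p.1.val := by rw [hf]; dsimp only; rw [hb]; rfl
      rw [ha] at hadj
      rcases hvfull _ hp b hadj with rfl | rfl | rfl
      · exact hvmem _ (by split <;> omega)
      · exact hvmem _ (by split <;> omega)
      · exact humem _ hp
  have hsurj : Function.Surjective f := by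
    intro x
    obtain ⟨w⟩ := hconn.preconnected (u 0) x
    exact mem_of_closed hcl w (humem 0 (by omega))
  set e := Equiv.ofBijective f ⟨hinj, hsurj⟩ with he
  have hsuccval : ∀ i : ZMod (m+1), (i + 1).val = if i.val = m then 0 else i.val + 1 := by
    intro i
    rw [ZMod.val_add, ZMod.val_one]
    by_cases h : i.val = m
    · rw [if_pos h, h, Nat.mod_self]
    · rw [if_neg h]; exact Nat.mod_eq_of_lt (by have := hvalle i; omega)
  have hadj_u : ∀ i : ZMod (m+1), G.Adj (u i.val) (u ((i+1).val)) := by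
    intro i
    rw [hsuccval i]
    by_cases h : i.val = m
    · rw [if_pos h, h]; exact hcu
    · rw [if_neg h]; exact L.usucc _ (by have := hvalle i; omega)
  have hadj_v : ∀ i : ZMod (m+1), G.Adj (v i.val) (v ((i+1).val)) := by
    intro i
    rw [hsuccval i]
    by_cases h : i.val = m
    · rw [if_pos h, h]; exact hcv
    · rw [if_neg h]; exact L.vsucc _ (by have := hvalle i; omega)
  have hfwd : ∀ p q, (prismGraph (m+1)).Adj p q → G.Adj (e p) (e q) := by
    rintro ⟨i, b⟩ ⟨j, c⟩ hpq
    rw [prism_adj (by omega)] at hpq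
    show G.Adj (f (i, b)) (f (j, c))
    rcases hpq with ⟨h2, h3 | h3⟩ | ⟨h2, h3⟩
    · dsimp only at h2 h3
      subst h2; subst h3
      cases b
      · simpa [hf] using hadj_u i
      · simpa [hf] using hadj_v i
    · dsimp only at h2 h3
      subst h2; subst h3
      cases b
      · simpa [hf] using (hadj_u j).symm
      · simpa [hf] using (hadj_v j).symm
    · dsimp only at h2 h3
      subst h2
      cases b <;> cases c
      · simp at h3
      · simpa [hf] using L.rung i.val (hvalle i)
      · simpa [hf] using (L.rung i.val (hvalle i)).symm
      · simp at h3
  have h3s : ∀ p : ZMod (m+1) × Bool, 3 ≤ (prismGraph (m+1)).degree p := by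
    intro p
    refine three_le_degree' (x := p) (a := (p.1 + 1, p.2)) (b := (p.1 - 1, p.2))
      (c := (p.1, !p.2)) ?_ ?_ ?_ ?_ ?_ ?_
    · rw [prism_adj (by omega)]; exact Or.inl ⟨rfl, Or.inl rfl⟩
    · rw [prism_adj (by omega)]; exact Or.inl ⟨rfl, Or.inr (by ring)⟩
    · rw [prism_adj (by omega)]; exact Or.inr ⟨rfl, by simp⟩
    · intro h
      have h' := congrArg Prod.fst h
      dsimp only at h'
      exact zmod_two_ne_zero (n := m+1) (by omega) (by linear_combination h')
    · intro h; have h' := congrArg Prod.snd h; simp at h'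
    · intro h; have h' := congrArg Prod.snd h; simp at h'
  exact iso_of_maps (prismGraph (m+1)) hdeg e hfwd h3s


/-- A Möbius-closed ladder exhibits `G` as a Möbius ladder. -/
lemma mobius_of_closed (hconn : G.Connected) (hdeg : ∀ v, G.degree v = 3)
    {m : ℕ} {u v : ℕ → V} (L : IsLadder G m u v) (hm : 1 ≤ m)
    (hcu : G.Adj (u m) (v 0)) (hcv : G.Adj (v m) (u 0)) :
    Nonempty (G ≃g mobiusLadder (m+1)) := by
  classical
  set N := 2 * (m + 1) with hN
  haveI : NeZero N := ⟨by omega⟩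
  haveI : Fact (1 < N) := ⟨by omega⟩
  set g : ℕ → V := fun t => if t ≤ m then u t else v (t - (m+1)) with hg
  have hgu : ∀ t, t ≤ m → g t = u t := by intro t ht; rw [hg]; exact if_pos ht
  have hgv : ∀ t, m < t → t < N → g t = v (t - (m+1)) := by
    intro t ht ht'; rw [hg]; exact if_neg (by omega)
  have hginj : ∀ s, s < N → ∀ t, t < N → g s = g t → s = t := by
    intro s hs t ht h
    by_cases h1 : s ≤ m <;> by_cases h2 : t ≤ m
    · rw [hgu s h1, hgu t h2] at h; exact L.uinj s h1 t h2 h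
    · rw [hgu s h1, hgv t (by omega) ht] at h
      exact absurd h (L.uv s h1 _ (by omega))
    · rw [hgv s (by omega) hs, hgu t h2] at h
      exact absurd h.symm (L.uv t h2 _ (by omega))
    · rw [hgv s (by omega) hs, hgv t (by omega) ht] at h
      have := L.vinj _ (by omega) _ (by omega) h
      omega
  have hga : ∀ t, t < N → G.Adj (g t) (g ((t+1) % N)) := by
    intro t ht
    by_cases h1 : t < m
    · rw [Nat.mod_eq_of_lt (by omega), hgu t (by omega), hgu (t+1) (by omega)]
      exact L.usucc t h1
    by_cases h2 : t = m
    · rw [Nat.mod_eq_of_lt (by omega), hgu t (by omega), hgv (t+1) (by omega) (by omega)]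
      have e1 : t + 1 - (m+1) = 0 := by omega
      rw [e1, h2]
      exact hcu
    by_cases h3 : t = N - 1
    · subst h3
      have : (N - 1 + 1) % N = 0 := by
        have : N - 1 + 1 = N := by omega
        rw [this, Nat.mod_self]
      rw [this, hgv (N-1) (by omega) (by omega), hgu 0 (by omega)]
      have : N - 1 - (m + 1) = m := by omega
      rw [this]
      exact hcv
    · rw [Nat.mod_eq_of_lt (by omega), hgv t (by omega) ht, hgv (t+1) (by omega) (by omega)]
      have h4 := L.vsucc (t - (m+1)) (by omega)
      have heq : t - (m+1) + 1 = t + 1 - (m+1) := by omega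
      rw [heq] at h4
      exact h4
  have hgk : ∀ t, t < N → G.Adj (g t) (g ((t + (m+1)) % N)) := by
    intro t ht
    by_cases h1 : t ≤ m
    · rw [Nat.mod_eq_of_lt (by omega), hgu t h1, hgv (t + (m+1)) (by omega) (by omega)]
      have : t + (m+1) - (m+1) = t := by omega
      rw [this]
      exact L.rung t h1
    · have hmod : (t + (m+1)) % N = t - (m+1) := by
        have h5 : t + (m+1) - N < N := by omega
        have h6 : N ≤ t + (m+1) := by omega
        rw [Nat.mod_eq_sub_mod h6, Nat.mod_eq_of_lt h5]
        omega
      rw [hmod, hgv t (by omega) ht, hgu (t - (m+1)) (by omega)]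
      exact (L.rung _ (by omega)).symm
  have hprevmod : ∀ t, t < N → (((if t = 0 then N - 1 else t - 1) + 1) % N) = t := by
    intro t ht
    by_cases h : t = 0
    · rw [if_pos h, h]
      have : N - 1 + 1 = N := by omega
      rw [this, Nat.mod_self]
    · rw [if_neg h, Nat.mod_eq_of_lt (by omega)]
      omega
  have hfull : ∀ t, t < N → ∀ d, G.Adj (g t) d →
      d = g ((t+1) % N) ∨ d = g (if t = 0 then N - 1 else t - 1) ∨
        d = g ((t + (m+1)) % N) := by
    intro t ht
    have hia : (t+1) % N = if t = N - 1 then 0 else t + 1 := by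
      by_cases h : t = N - 1
      · rw [if_pos h, h]
        have : N - 1 + 1 = N := by omega
        rw [this, Nat.mod_self]
      · rw [if_neg h]; exact Nat.mod_eq_of_lt (by omega)
    have hik : (t + (m+1)) % N = if t ≤ m then t + (m+1) else t - (m+1) := by
      by_cases h : t ≤ m
      · rw [if_pos h]; exact Nat.mod_eq_of_lt (by omega)
      · rw [if_neg h, Nat.mod_eq_sub_mod (by omega), Nat.mod_eq_of_lt (by omega)]
        omega
    have hprev : G.Adj (g t) (g (if t = 0 then N - 1 else t - 1)) := by
      have := hga (if t = 0 then N - 1 else t - 1) (by split <;> omega)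
      rw [hprevmod t ht] at this
      exact this.symm
    have hilt1 : (t+1) % N < N := Nat.mod_lt _ (by omega)
    have hiltk : (t + (m+1)) % N < N := Nat.mod_lt _ (by omega)
    have hiltp : (if t = 0 then N - 1 else t - 1) < N := by split <;> omega
    refine three_nbrs hdeg (hga t ht) hprev (hgk t ht) ?_ ?_ ?_
    · intro h
      have := hginj _ hilt1 _ hiltp h
      rw [hia] at this
      split_ifs at this <;> omega
    · intro h
      have := hginj _ hilt1 _ hiltk h
      rw [hia, hik] at this
      split_ifs at this <;> omega
    · intro h
      have := hginj _ hiltp _ hiltk h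
      rw [hik] at this
      split_ifs at this <;> omega
  -- the equivalence
  set f : ZMod N → V := fun j => g j.val with hf
  have hvlt : ∀ j : ZMod N, j.val < N := fun j => ZMod.val_lt j
  have hinj : Function.Injective f := by
    intro p q h
    rw [hf] at h; dsimp only at h
    exact ZMod.val_injective _ (hginj _ (hvlt p) _ (hvlt q) h)
  have hmem : ∀ s, s < N → g s ∈ Set.range f := by
    intro s hs
    exact ⟨((s : ℕ) : ZMod N), by rw [hf]; dsimp only; rw [ZMod.val_natCast_of_lt hs]⟩
  have hcl : ∀ a ∈ Set.range f, ∀ b, G.Adj a b → b ∈ Set.range f := by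
    rintro a ⟨p, rfl⟩ b hadj
    have hp := hvlt p
    rcases hfull _ hp b hadj with rfl | rfl | rfl
    · exact hmem _ (Nat.mod_lt _ (by omega))
    · exact hmem _ (by split <;> omega)
    · exact hmem _ (Nat.mod_lt _ (by omega))
  have hsurj : Function.Surjective f := by
    intro x
    obtain ⟨w⟩ := hconn.preconnected (g 0) x
    exact mem_of_closed hcl w (hmem 0 (by omega))
  set e := Equiv.ofBijective f ⟨hinj, hsurj⟩ with he
  have hvadd1 : ∀ p : ZMod N, (p + 1).val = (p.val + 1) % N := by
    intro p
    rw [ZMod.val_add, ZMod.val_one]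
  have hvaddk : ∀ p : ZMod N, (p + ((m+1 : ℕ) : ZMod N)).val = (p.val + (m+1)) % N := by
    intro p
    rw [ZMod.val_add, ZMod.val_natCast_of_lt (by omega)]
  have hfwd : ∀ p q, (mobiusLadder (m+1)).Adj p q → G.Adj (e p) (e q) := by
    intro p q hpq
    rw [mobius_adj (by omega)] at hpq
    show G.Adj (f p) (f q)
    obtain ⟨hne, h | h | h⟩ := hpq
    · subst h
      rw [hf]; dsimp only
      rw [hvadd1]
      exact hga _ (hvlt p)
    · subst h
      rw [hf]; dsimp only
      rw [hvadd1]
      exact (hga _ (hvlt q)).symm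
    · subst h
      rw [hf]; dsimp only
      rw [hvaddk]
      exact hgk _ (hvlt p)
  have h3s : ∀ p : ZMod N, 3 ≤ (mobiusLadder (m+1)).degree p := by
    intro p
    have h1 : (1 : ZMod N) ≠ 0 := zmod_one_ne_zero (by omega)
    have hκ0 : ((m+1 : ℕ) : ZMod N) ≠ 0 := zmod_natCast_ne_zero (by omega) (by omega)
    have hκ1 : ((m+1 : ℕ) : ZMod N) ≠ 1 := by
      have := zmod_natCast_ne (n := N) (a := m+1) (b := 1) (by omega) (by omega) (by omega)
      simpa using this
    have hκ1' : ((m+1 : ℕ) : ZMod N) + 1 ≠ 0 := by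
      have : (((m + 2 : ℕ)) : ZMod N) ≠ 0 := zmod_natCast_ne_zero (by omega) (by omega)
      push_cast at this
      convert this using 1
      push_cast
      ring
    refine three_le_degree' (x := p) (a := p + 1) (b := p - 1)
      (c := p + ((m+1 : ℕ) : ZMod N)) ?_ ?_ ?_ ?_ ?_ ?_
    · rw [mobius_adj (by omega)]
      exact ⟨fun h => h1 (by linear_combination -h), Or.inl rfl⟩
    · rw [mobius_adj (by omega)]
      exact ⟨fun h => h1 (by linear_combination h), Or.inr (Or.inl (by ring))⟩
    · rw [mobius_adj (by omega)]
      exact ⟨fun h => hκ0 (by linear_combination -h), Or.inr (Or.inr rfl)⟩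
    · intro h
      exact zmod_two_ne_zero (n := N) (by omega) (by linear_combination h)
    · intro h
      exact hκ1 (by linear_combination -h)
    · intro h
      exact hκ1' (by linear_combination -h)
  exact iso_of_maps (mobiusLadder (m+1)) hdeg e hfwd h3s

end LadderCubic
end Ladder

section Triangle
variable [∀ v, Fintype (G.neighborSet v)]

lemma triangle_two_eq_false (hdeg : ∀ v, G.degree v = 3) (hLC : LocalSq G)
    {x y z w z' : V} (hxy : G.Adj x y) (hyz : G.Adj y z) (hxz : G.Adj x z)
    (hxw : G.Adj x w) (hyw : G.Adj y w) (hwz : w ≠ z)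
    (hzz' : G.Adj z z') (hz'x : z' ≠ x) (hz'y : z' ≠ y) (hz'w : z' ≠ w) : False := by
  have hNx : ∀ d, G.Adj x d → d = y ∨ d = z ∨ d = w :=
    three_nbrs hdeg hxy hxz hxw hyz.ne hyw.ne (Ne.symm hwz)
  have hNy : ∀ d, G.Adj y d → d = x ∨ d = z ∨ d = w :=
    three_nbrs hdeg hxy.symm hyz hyw hxz.ne hxw.ne (Ne.symm hwz)
  have hNz : ∀ d, G.Adj z d → d = x ∨ d = y ∨ d = z' :=
    three_nbrs hdeg hxz.symm hyz.symm hzz' hxy.ne (Ne.symm hz'x) (Ne.symm hz'y)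
  have hxz'n : ¬ G.Adj x z' := by
    intro h
    rcases hNx z' h with rfl | rfl | rfl
    · exact hz'y rfl
    · exact hzz'.ne' rfl
    · exact hz'w rfl
  have hyz'n : ¬ G.Adj y z' := by
    intro h
    rcases hNy z' h with rfl | rfl | rfl
    · exact hz'x rfl
    · exact hzz'.ne' rfl
    · exact hz'w rfl
  -- Step 1 : w ~ z'
  have hwz' : G.Adj z' w := by
    obtain ⟨a, b, ha, hb, haz', hbz, hab⟩ := hLC hzz'
    have ha' : a = x ∨ a = y := by
      rcases hNz a ha with rfl | rfl | rfl
      · exact Or.inl rfl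
      · exact Or.inr rfl
      · exact absurd rfl haz'
    rcases hab with rfl | hab
    · rcases ha' with rfl | rfl
      · exact absurd hb.symm hxz'n
      · exact absurd hb.symm hyz'n
    · rcases ha' with rfl | rfl
      · rcases hNx b hab with rfl | rfl | rfl
        · exact absurd hb.symm hyz'n
        · exact absurd rfl hbz
        · exact hb
      · rcases hNy b hab with rfl | rfl | rfl
        · exact absurd hb.symm hxz'n
        · exact absurd rfl hbz
        · exact hb
  have hNw : ∀ d, G.Adj w d → d = x ∨ d = y ∨ d = z' :=
    three_nbrs hdeg hxw.symm hyw.symm hwz'.symm hxy.ne (Ne.symm hz'x) (Ne.symm hz'y)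
  obtain ⟨r, hr, hrz, hrw⟩ := exists_third hdeg hzz'.symm hwz' (Ne.symm hwz)
  have hrx : r ≠ x := by
    intro h; subst h
    rcases hNx z' hr.symm with rfl | rfl | rfl
    · exact hz'y rfl
    · exact hzz'.ne' rfl
    · exact hz'w rfl
  have hry : r ≠ y := by
    intro h; subst h
    rcases hNy z' hr.symm with rfl | rfl | rfl
    · exact hz'x rfl
    · exact hzz'.ne' rfl
    · exact hz'w rfl
  have hNz' : ∀ d, G.Adj z' d → d = z ∨ d = w ∨ d = r :=
    three_nbrs hdeg hzz'.symm hwz' hr hwz.symm (Ne.symm hrz) (Ne.symm hrw)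
  obtain ⟨a, b, ha, hb, har, hbz', hab⟩ := hLC hr
  have ha' : a = z ∨ a = w := by
    rcases hNz' a ha with rfl | rfl | rfl
    · exact Or.inl rfl
    · exact Or.inr rfl
    · exact absurd rfl har
  have hrzn : ¬ G.Adj r z := by
    intro h
    rcases hNz r h.symm with rfl | rfl | rfl
    · exact hrx rfl
    · exact hry rfl
    · exact hr.ne' rfl
  have hrwn : ¬ G.Adj r w := by
    intro h
    rcases hNw r h.symm with rfl | rfl | rfl
    · exact hrx rfl
    · exact hry rfl
    · exact hr.ne' rfl
  have hbx_false : G.Adj r x → False := by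
    intro h
    rcases hNx r h.symm with rfl | rfl | rfl
    · exact hry rfl
    · exact hrz rfl
    · exact hrw rfl
  have hby_false : G.Adj r y → False := by
    intro h
    rcases hNy r h.symm with rfl | rfl | rfl
    · exact hrx rfl
    · exact hrz rfl
    · exact hrw rfl
  rcases hab with rfl | hab
  · rcases ha' with rfl | rfl
    · exact hrzn hb
    · exact hrwn hb
  · rcases ha' with rfl | rfl
    · rcases hNz b hab with h | h | h
      · rw [h] at hb; exact hbx_false hb
      · rw [h] at hb; exact hby_false hb
      · exact hbz' h
    · rcases hNw b hab with h | h | h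
      · rw [h] at hb; exact hbx_false hb
      · rw [h] at hb; exact hby_false hb
      · exact hbz' h

lemma triangle_distinct_adj (hdeg : ∀ v, G.degree v = 3) (hLC : LocalSq G)
    {x y z x' y' z' : V} (hxy : G.Adj x y) (hyz : G.Adj y z) (hxz : G.Adj x z)
    (hxx' : G.Adj x x') (hx'y : x' ≠ y) (hx'z : x' ≠ z)
    (hyy' : G.Adj y y') (hy'x : y' ≠ x) (hy'z : y' ≠ z)
    (hzz' : G.Adj z z') (hz'x : z' ≠ x) (hz'y : z' ≠ y)
    (hx'y' : x' ≠ y') (hx'z' : x' ≠ z') (hy'z' : y' ≠ z') : G.Adj x' y' := by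
  have hNx : ∀ d, G.Adj x d → d = y ∨ d = z ∨ d = x' :=
    three_nbrs hdeg hxy hxz hxx' hyz.ne (Ne.symm hx'y) (Ne.symm hx'z)
  have hNy : ∀ d, G.Adj y d → d = x ∨ d = z ∨ d = y' :=
    three_nbrs hdeg hxy.symm hyz hyy' hxz.ne (Ne.symm hy'x) (Ne.symm hy'z)
  have hNz : ∀ d, G.Adj z d → d = x ∨ d = y ∨ d = z' :=
    three_nbrs hdeg hxz.symm hyz.symm hzz' hxy.ne (Ne.symm hz'x) (Ne.symm hz'y)
  have nAyx' : ¬ G.Adj y x' := by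
    intro h
    rcases hNy x' h with h' | h' | h'
    · exact hxx'.ne' h'
    · exact hx'z h'
    · exact hx'y' h'
  have nAzx' : ¬ G.Adj z x' := by
    intro h
    rcases hNz x' h with h' | h' | h'
    · exact hxx'.ne' h'
    · exact hx'y h'
    · exact hx'z' h'
  have nAxy' : ¬ G.Adj x y' := by
    intro h
    rcases hNx y' h with h' | h' | h'
    · exact hyy'.ne' h'
    · exact hy'z h'
    · exact hx'y' h'.symm
  have nAzy' : ¬ G.Adj z y' := by
    intro h
    rcases hNz y' h with h' | h' | h'
    · exact hy'x h'
    · exact hyy'.ne' h'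
    · exact hy'z' h'
  have nAxz' : ¬ G.Adj x z' := by
    intro h
    rcases hNx z' h with h' | h' | h'
    · exact hz'y h'
    · exact hzz'.ne' h'
    · exact hx'z' h'.symm
  have nAyz' : ¬ G.Adj y z' := by
    intro h
    rcases hNy z' h with h' | h' | h'
    · exact hz'x h'
    · exact hzz'.ne' h'
    · exact hy'z' h'.symm
  have disj1 : G.Adj x' y' ∨ G.Adj x' z' := by
    obtain ⟨a, b, ha, hb, hax', hbx, hab⟩ := hLC hxx'
    have ha' : a = y ∨ a = z := by
      rcases hNx a ha with h | h | h
      · exact Or.inl h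
      · exact Or.inr h
      · exact absurd h hax'
    rcases hab with rfl | hab
    · rcases ha' with rfl | rfl
      · exact absurd hb.symm nAyx'
      · exact absurd hb.symm nAzx'
    · rcases ha' with rfl | rfl
      · rcases hNy b hab with h | h | h
        · exact absurd h hbx
        · rw [h] at hb; exact absurd hb.symm nAzx'
        · rw [h] at hb; exact Or.inl hb
      · rcases hNz b hab with h | h | h
        · exact absurd h hbx
        · rw [h] at hb; exact absurd hb.symm nAyx'
        · rw [h] at hb; exact Or.inr hb
  have disj2 : G.Adj y' x' ∨ G.Adj y' z' := by
    obtain ⟨a, b, ha, hb, hay', hby, hab⟩ := hLC hyy'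
    have ha' : a = x ∨ a = z := by
      rcases hNy a ha with h | h | h
      · exact Or.inl h
      · exact Or.inr h
      · exact absurd h hay'
    rcases hab with rfl | hab
    · rcases ha' with rfl | rfl
      · exact absurd hb.symm nAxy'
      · exact absurd hb.symm nAzy'
    · rcases ha' with rfl | rfl
      · rcases hNx b hab with h | h | h
        · exact absurd h hby
        · rw [h] at hb; exact absurd hb.symm nAzy'
        · rw [h] at hb; exact Or.inl hb
      · rcases hNz b hab with h | h | h
        · rw [h] at hb; exact absurd hb.symm nAxy'
        · exact absurd h hby
        · rw [h] at hb; exact Or.inr hb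
  by_contra hcon
  have hx'z'A : G.Adj x' z' := disj1.resolve_left hcon
  have hy'z'A : G.Adj y' z' := disj2.resolve_left (fun h' => hcon h'.symm)
  have hNz' : ∀ d, G.Adj z' d → d = z ∨ d = x' ∨ d = y' :=
    three_nbrs hdeg hzz'.symm hx'z'A.symm hy'z'A.symm (fun h => hx'z h.symm)
      (fun h => hy'z h.symm) hx'y'
  obtain ⟨p, hp, hpx, hpz'⟩ := exists_third hdeg hxx'.symm hx'z'A (Ne.symm hz'x)
  have hNx' : ∀ d, G.Adj x' d → d = x ∨ d = z' ∨ d = p :=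
    three_nbrs hdeg hxx'.symm hx'z'A hp (Ne.symm hz'x) (Ne.symm hpx) (Ne.symm hpz')
  have hpy : p ≠ y := by
    intro h; rw [h] at hp; exact nAyx' hp.symm
  have hpz : p ≠ z := by
    intro h; rw [h] at hp; exact nAzx' hp.symm
  have hpy' : p ≠ y' := by
    intro h; rw [h] at hp; exact hcon hp
  have nApx : ¬ G.Adj p x := by
    intro h
    rcases hNx p h.symm with h' | h' | h'
    · exact hpy h'
    · exact hpz h'
    · exact hp.ne' h'
  have nApy : ¬ G.Adj p y := by
    intro h
    rcases hNy p h.symm with h' | h' | h'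
    · exact hpx h'
    · exact hpz h'
    · exact hpy' h'
  have nApz : ¬ G.Adj p z := by
    intro h
    rcases hNz p h.symm with h' | h' | h'
    · exact hpx h'
    · exact hpy h'
    · exact hpz' h'
  have nApz' : ¬ G.Adj p z' := by
    intro h
    rcases hNz' p h.symm with h' | h' | h'
    · exact hpz h'
    · exact hp.ne' h'
    · exact hpy' h'
  -- LC on the edge x'–p forces p ~ y'
  have hpy'A : G.Adj p y' := by
    obtain ⟨a, b, ha, hb, hap, hbx', hab⟩ := hLC hp
    have ha' : a = x ∨ a = z' := by
      rcases hNx' a ha with h | h | h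
      · exact Or.inl h
      · exact Or.inr h
      · exact absurd h hap
    rcases hab with rfl | hab
    · rcases ha' with rfl | rfl
      · exact absurd hb nApx
      · exact absurd hb nApz'
    · rcases ha' with rfl | rfl
      · rcases hNx b hab with h | h | h
        · rw [h] at hb; exact absurd hb nApy
        · rw [h] at hb; exact absurd hb nApz
        · exact absurd h hbx'
      · rcases hNz' b hab with h | h | h
        · rw [h] at hb; exact absurd hb nApz
        · exact absurd h hbx'
        · rw [h] at hb; exact hb
  have hNy' : ∀ d, G.Adj y' d → d = y ∨ d = z' ∨ d = p :=
    three_nbrs hdeg hyy'.symm hy'z'A hpy'A.symm (Ne.symm hz'y) (Ne.symm hpy) (Ne.symm hpz')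
  obtain ⟨s, hs, hsx', hsy'⟩ := exists_third hdeg hp.symm hpy'A hx'y'
  have hNp : ∀ d, G.Adj p d → d = x' ∨ d = y' ∨ d = s :=
    three_nbrs hdeg hp.symm hpy'A hs hx'y' (Ne.symm hsx') (Ne.symm hsy')
  have hsx : s ≠ x := by
    intro h; rw [h] at hs; exact nApx hs
  have hsy : s ≠ y := by
    intro h; rw [h] at hs; exact nApy hs
  have hsz : s ≠ z := by
    intro h; rw [h] at hs; exact nApz hs
  have hsz' : s ≠ z' := by
    intro h; rw [h] at hs; exact nApz' hs
  have nAsx : ¬ G.Adj s x := by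
    intro h
    rcases hNx s h.symm with h' | h' | h'
    · exact hsy h'
    · exact hsz h'
    · exact hsx' h'
  have nAsy : ¬ G.Adj s y := by
    intro h
    rcases hNy s h.symm with h' | h' | h'
    · exact hsx h'
    · exact hsz h'
    · exact hsy' h'
  have nAsz' : ¬ G.Adj s z' := by
    intro h
    rcases hNz' s h.symm with h' | h' | h'
    · exact hsz h'
    · exact hsx' h'
    · exact hsy' h'
  have nAsx' : ¬ G.Adj s x' := by
    intro h
    rcases hNx' s h.symm with h' | h' | h'
    · exact hsx h'
    · exact hsz' h'
    · exact hs.ne' h'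
  have nAsy' : ¬ G.Adj s y' := by
    intro h
    rcases hNy' s h.symm with h' | h' | h'
    · exact hsy h'
    · exact hsz' h'
    · exact hs.ne' h'
  obtain ⟨a, b, ha, hb, has, hbp, hab⟩ := hLC hs
  have ha' : a = x' ∨ a = y' := by
    rcases hNp a ha with h | h | h
    · exact Or.inl h
    · exact Or.inr h
    · exact absurd h has
  rcases hab with rfl | hab
  · rcases ha' with rfl | rfl
    · exact nAsx' hb
    · exact nAsy' hb
  · rcases ha' with rfl | rfl
    · rcases hNx' b hab with h | h | h
      · rw [h] at hb; exact nAsx hb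
      · rw [h] at hb; exact nAsz' hb
      · exact hbp h
    · rcases hNy' b hab with h | h | h
      · rw [h] at hb; exact nAsy hb
      · rw [h] at hb; exact nAsz' hb
      · exact hbp h


/-- A cubic connected graph satisfying the local condition that contains a
triangle is `K₄` (Möbius `M₂`) or the triangular prism `Y₃`. -/
lemma triangle_case (hconn : G.Connected) (hdeg : ∀ v, G.degree v = 3)
    (hLC : LocalSq G) {x y z : V} (hxy : G.Adj x y) (hyz : G.Adj y z)
    (hxz : G.Adj x z) :
    (∃ n : ℕ, 3 ≤ n ∧ Nonempty (G ≃g prismGraph n)) ∨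
      (∃ k : ℕ, 2 ≤ k ∧ Nonempty (G ≃g mobiusLadder k)) := by
  obtain ⟨x', hxx', hx'y, hx'z⟩ := exists_third hdeg hxy hxz hyz.ne
  obtain ⟨y', hyy', hy'x, hy'z⟩ := exists_third hdeg hxy.symm hyz hxz.ne
  obtain ⟨z', hzz', hz'x, hz'y⟩ := exists_third hdeg hxz.symm hyz.symm hxy.ne
  by_cases e1 : x' = y'
  · by_cases e2 : x' = z'
    · -- K₄
      have hyw : G.Adj y x' := by rw [e1]; exact hyy'
      have hzw : G.Adj z x' := by rw [e2]; exact hzz'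
      refine Or.inr ⟨2, le_rfl, ?_⟩
      have L : IsLadder G 1 (fun i => match i with | 0 => x | _ => y)
          (fun i => match i with | 0 => z | _ => x') := by
        constructor
        · intro i hi
          interval_cases i
          · exact hxz
          · exact hyw
        · intro i hi
          interval_cases i
          exact hxy
        · intro i hi
          interval_cases i
          exact hzw
        · intro i hi j hj h
          interval_cases i <;> interval_cases j
          · rfl
          · exact absurd h hxy.ne
          · exact absurd h hxy.ne'
          · rfl
        · intro i hi j hj h
          interval_cases i <;> interval_cases j
          · rfl
          · exact absurd h hzw.ne
          · exact absurd h hzw.ne'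
          · rfl
        · intro i hi j hj
          interval_cases i <;> interval_cases j
          · exact hxz.ne
          · exact hxx'.ne
          · exact hyz.ne
          · exact hyw.ne
      exact mobius_of_closed hconn hdeg L le_rfl hyz hxx'.symm
    · exact (triangle_two_eq_false hdeg hLC hxy hyz hxz hxx'
        (show G.Adj y x' by rw [e1]; exact hyy') hx'z hzz' hz'x hz'y
        (fun h => e2 h.symm)).elim
  · by_cases e2 : x' = z'
    · exact (triangle_two_eq_false hdeg hLC hxz hyz.symm hxy hxx'
        (show G.Adj z x' by rw [e2]; exact hzz') hx'y hyy' hy'x hy'z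
        (fun h => e1 h.symm)).elim
    · by_cases e3 : y' = z'
      · exact (triangle_two_eq_false hdeg hLC hyz hxz.symm hxy.symm hyy'
          (show G.Adj z y' by rw [e3]; exact hzz') hy'x hxx' hx'y hx'z
          (fun h => e1 h)).elim
      · -- triangular prism Y₃
        have h1 : G.Adj x' y' := triangle_distinct_adj hdeg hLC hxy hyz hxz hxx' hx'y hx'z
          hyy' hy'x hy'z hzz' hz'x hz'y e1 e2 e3
        have h2 : G.Adj y' z' := triangle_distinct_adj hdeg hLC hyz hxz.symm hxy.symm
          hyy' hy'z hy'x hzz' hz'y hz'x hxx' hx'y hx'z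
          e3 (fun h => e1 h.symm) (fun h => e2 h.symm)
        have h3 : G.Adj z' x' := triangle_distinct_adj hdeg hLC hxz.symm hxy hyz.symm
          hzz' hz'x hz'y hxx' hx'z hx'y hyy' hy'z hy'x
          (fun h => e2 h.symm) (fun h => e3 h.symm) e1
        refine Or.inl ⟨3, le_rfl, ?_⟩
        have L : IsLadder G 2 (fun i => match i with | 0 => x | 1 => y | _ => z)
            (fun i => match i with | 0 => x' | 1 => y' | _ => z') := by
          constructor
          · intro i hi
            interval_cases i
            · exact hxx'
            · exact hyy'
            · exact hzz'
          · intro i hi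
            interval_cases i
            · exact hxy
            · exact hyz
          · intro i hi
            interval_cases i
            · exact h1
            · exact h2
          · intro i hi j hj h
            interval_cases i <;> interval_cases j
            · rfl
            · exact absurd h hxy.ne
            · exact absurd h hxz.ne
            · exact absurd h hxy.ne'
            · rfl
            · exact absurd h hyz.ne
            · exact absurd h hxz.ne'
            · exact absurd h hyz.ne'
            · rfl
          · intro i hi j hj h
            interval_cases i <;> interval_cases j
            · rfl
            · exact absurd h h1.ne
            · exact absurd h h3.ne'
            · exact absurd h h1.ne'
            · rfl
            · exact absurd h h2.ne
            · exact absurd h h3.ne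
            · exact absurd h h2.ne'
            · rfl
          · intro i hi j hj
            interval_cases i <;> interval_cases j
            · exact hxx'.ne
            · exact fun h => hy'x h.symm
            · exact fun h => hz'x h.symm
            · exact fun h => hx'y h.symm
            · exact hyy'.ne
            · exact fun h => hz'y h.symm
            · exact fun h => hx'z h.symm
            · exact fun h => hy'z h.symm
            · exact hzz'.ne
        exact prism_of_closed hconn hdeg L le_rfl hxz.symm h3
end Triangle


section TFLadder
variable [∀ v, Fintype (G.neighborSet v)]

lemma IsLadder.uNbhd' (hdeg : ∀ v, G.degree v = 3) {m : ℕ} {u v : ℕ → V}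
    (L : IsLadder G m u v) {i : ℕ} (h1 : 1 ≤ i) (h2 : i < m) :
    ∀ d, G.Adj (u i) d → d = u (i-1) ∨ d = u (i+1) ∨ d = v i := by
  intro d hd
  have e1 : i - 1 + 1 = i := by omega
  have e2 : i - 1 + 2 = i + 1 := by omega
  have h := L.uNbhd hdeg (i := i-1) (by omega) d (by rwa [e1])
  rwa [e1, e2] at h

lemma IsLadder.vm_adj {m : ℕ} {u v : ℕ → V} (L : IsLadder G m u v) (hm : 1 ≤ m) :
    G.Adj (v m) (v (m-1)) := by
  have h := L.vsucc (m-1) (by omega)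
  have e : m - 1 + 1 = m := by omega
  rw [e] at h
  exact h.symm

lemma IsLadder.um_adj {m : ℕ} {u v : ℕ → V} (L : IsLadder G m u v) (hm : 1 ≤ m) :
    G.Adj (u m) (u (m-1)) := L.swap.vm_adj hm

/-- Where can the third neighbour of `u m` land: only `u 0`, `v 0`, or outside. -/
lemma third_loc (hdeg : ∀ v, G.degree v = 3) {m : ℕ} {u v : ℕ → V}
    (L : IsLadder G m u v) (hm : 2 ≤ m) :
    ∀ w, G.Adj (u m) w → w ≠ u (m-1) → w ≠ v m →
      (w = u 0 ∨ w = v 0 ∨ ∀ i, i ≤ m → w ≠ u i ∧ w ≠ v i) := by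
  intro w hw hw1 hw2
  by_cases h0 : w = u 0
  · exact Or.inl h0
  by_cases h1 : w = v 0
  · exact Or.inr (Or.inl h1)
  refine Or.inr (Or.inr ?_)
  intro i hi
  constructor
  · intro he
    rcases Nat.eq_or_lt_of_le hi with hieq | hilt
    · subst hieq; rw [he] at hw; exact G.loopless.irrefl _ hw
    have hige : 1 ≤ i := by
      rcases Nat.eq_zero_or_pos i with h | h
      · exact absurd (h ▸ he) h0
      · exact h
    rw [he] at hw
    rcases L.uNbhd' hdeg hige hilt (u m) hw.symm with h' | h' | h'
    · have := L.uinj m (le_refl m) (i-1) (by omega) h'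
      omega
    · have := L.uinj m (le_refl m) (i+1) (by omega) h'
      have : i = m - 1 := by omega
      exact hw1 (by rw [he, this])
    · exact L.uv m (le_refl m) i hi h'
  · intro he
    rcases Nat.eq_or_lt_of_le hi with hieq | hilt
    · subst hieq; exact hw2 he
    have hige : 1 ≤ i := by
      rcases Nat.eq_zero_or_pos i with h | h
      · exact absurd (h ▸ he) h1
      · exact h
    rw [he] at hw
    rcases L.swap.uNbhd' hdeg hige hilt (u m) hw.symm with h' | h' | h'
    · exact L.uv m (le_refl m) (i-1) (by omega) h'
    · exact L.uv m (le_refl m) (i+1) (by omega) h'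
    · have := L.uinj m (le_refl m) i hi h'
      omega

/-- Completion of a prism closure: if `u m ~ u 0` then `v m ~ v 0`. -/
lemma closure_u (hdeg : ∀ v, G.degree v = 3) (hLC : LocalSq G)
    (htf : ∀ {a b c : V}, G.Adj a b → G.Adj b c → G.Adj a c → False)
    {m : ℕ} {u v : ℕ → V} (L : IsLadder G m u v) (hm : 2 ≤ m)
    (hcu : G.Adj (u m) (u 0)) : G.Adj (v m) (v 0) := by
  have hm3 : 3 ≤ m := by
    rcases Nat.lt_or_ge m 3 with h | h
    · have hm2 : m = 2 := by omega
      subst hm2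
      exact absurd (htf (L.usucc 0 (by omega)) (L.usucc 1 (by omega)) hcu.symm) (fun h => h)
    · exact h
  obtain ⟨vN, hvN, hvN1, hvN2⟩ := exists_third hdeg (L.vm_adj (by omega))
    (L.rung m (le_refl m)).symm (fun h => L.uv m (le_refl m) (m-1) (by omega) h.symm)
  -- N(u 0) = {v 0, u 1, u m}
  have hN0 : ∀ d, G.Adj (u 0) d → d = v 0 ∨ d = u 1 ∨ d = u m :=
    three_nbrs hdeg (L.rung 0 (by omega)) (L.usucc 0 (by omega)) hcu.symm
      (fun h => L.uv 1 (by omega) 0 (by omega) h.symm)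
      (fun h => L.uv m (le_refl m) 0 (by omega) h.symm)
      (fun h => by have := L.uinj 1 (by omega) m (by omega) h; omega)
  -- helper: v m is not adjacent to interior u's
  have hvmu : ∀ j, 1 ≤ j → j < m → ¬ G.Adj (v m) (u j) := by
    intro j hj1 hj2 h
    rcases L.uNbhd' hdeg hj1 hj2 (v m) h.symm with h' | h' | h'
    · exact L.uv (j-1) (by omega) m (le_refl m) h'.symm
    · exact L.uv (j+1) (by omega) m (le_refl m) h'.symm
    · have := L.vinj m (le_refl m) j (by omega) h'
      omega
  have hvmv : ∀ j, 1 ≤ j → j < m - 1 → ¬ G.Adj (v m) (v j) := by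
    intro j hj1 hj2 h
    rcases L.swap.uNbhd' hdeg hj1 (by omega) (v m) h.symm with h' | h' | h'
    · have := L.vinj m (le_refl m) (j-1) (by omega) h'
      omega
    · have := L.vinj m (le_refl m) (j+1) (by omega) h'
      omega
    · exact L.uv j (by omega) m (le_refl m) h'.symm
  by_cases hA : G.Adj (u 0) vN
  · rcases hN0 vN hA with h | h | h
    · rw [← h]; exact hvN
    · exfalso
      rw [h] at hvN
      exact hvmu 1 (by omega) (by omega) hvN
    · exact absurd h hvN2
  · exfalso
    obtain ⟨a, b, ha, hb, havN, hbvm, hab⟩ := hLC hvN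
    -- N(v m) = {v (m-1), u m, vN}
    have hNvm : ∀ d, G.Adj (v m) d → d = v (m-1) ∨ d = u m ∨ d = vN :=
      three_nbrs hdeg (L.vm_adj (by omega)) (L.rung m (le_refl m)).symm hvN
        (fun h => L.uv m (le_refl m) (m-1) (by omega) h.symm)
        (fun h => (hvN1 h.symm))
        (fun h => (hvN2 h.symm))
    -- N(u m) = {u (m-1), v m, u 0}
    have hNum : ∀ d, G.Adj (u m) d → d = u (m-1) ∨ d = v m ∨ d = u 0 :=
      three_nbrs hdeg (L.um_adj (by omega)) (L.rung m (le_refl m)) hcu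
        (L.uv (m-1) (by omega) m (le_refl m))
        (fun h => by have := L.uinj (m-1) (by omega) 0 (by omega) h; omega)
        (fun h => L.uv 0 (by omega) m (le_refl m) h.symm)
    -- vN is not adjacent to u (m-1) :
    have hvNum1 : ¬ G.Adj vN (u (m-1)) := by
      intro h
      rcases L.uNbhd' hdeg (by omega) (by omega) vN h.symm with h' | h' | h'
      · -- vN = u (m-2)
        rw [h'] at hvN
        exact hvmu (m-2) (by omega) (by omega) hvN
      · have e : m - 1 + 1 = m := by omega
        rw [e] at h'
        exact hvN2 h'
      · have e : m - 1 = m - 1 := rfl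
        exact hvN1 h'
    -- vN is not adjacent to v (m-2) :
    have hvNvm2 : ¬ G.Adj vN (v (m-2)) := by
      intro h
      rcases L.swap.uNbhd' hdeg (m := m) (i := m-2) (by omega) (by omega) vN h.symm
        with h' | h' | h'
      · -- vN = v (m-3)
        have e3 : m - 2 - 1 = m - 3 := by omega
        rw [e3] at h'
        rcases Nat.eq_zero_or_pos (m-3) with h3 | h3
        · rw [h', h3] at hvN
          -- Adj (v m) (v 0) : then v m ∈ N(v 0)?  use hN0? no—derive contra with hA
          rw [h', h3] at hA
          exact hA (L.rung 0 (by omega))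
        · rw [h'] at hvN
          exact hvmv (m-3) (by omega) (by omega) hvN
      · have e : m - 2 + 1 = m - 1 := by omega
        rw [e] at h'
        exact hvN1 h'
      · rw [h'] at hvN
        exact hvmu (m-2) (by omega) (by omega) hvN
    have ha' : a = v (m-1) ∨ a = u m := by
      rcases hNvm a ha with h | h | h
      · exact Or.inl h
      · exact Or.inr h
      · exact absurd h havN
    rcases hab with rfl | hab
    · rcases ha' with rfl | rfl
      · exact htf (L.vm_adj (by omega)) hb.symm hvN
      · exact htf (L.rung m (le_refl m)).symm hb.symm hvN
    · rcases ha' with rfl | rfl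
      · -- a = v (m-1)
        rcases L.swap.uNbhd' hdeg (m := m) (i := m-1) (by omega) (by omega) b hab
          with h | h | h
        · have e : m - 1 - 1 = m - 2 := by omega
          rw [e] at h
          rw [h] at hb
          exact hvNvm2 hb
        · have e : m - 1 + 1 = m := by omega
          rw [e] at h
          exact hbvm h
        · rw [h] at hb
          exact hvNum1 hb
      · -- a = u m
        rcases hNum b hab with h | h | h
        · rw [h] at hb
          exact hvNum1 hb
        · exact hbvm h
        · rw [h] at hb
          exact hA hb.symm

/-- Completion of a Möbius closure: if `u m ~ v 0` then `v m ~ u 0`. -/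
lemma closure_cross (hdeg : ∀ v, G.degree v = 3) (hLC : LocalSq G)
    (htf : ∀ {a b c : V}, G.Adj a b → G.Adj b c → G.Adj a c → False)
    {m : ℕ} {u v : ℕ → V} (L : IsLadder G m u v) (hm : 2 ≤ m)
    (hcu : G.Adj (u m) (v 0)) : G.Adj (v m) (u 0) := by
  obtain ⟨vN, hvN, hvN1, hvN2⟩ := exists_third hdeg (L.vm_adj (by omega))
    (L.rung m (le_refl m)).symm (fun h => L.uv m (le_refl m) (m-1) (by omega) h.symm)
  have hNv0 : ∀ d, G.Adj (v 0) d → d = u 0 ∨ d = v 1 ∨ d = u m :=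
    three_nbrs hdeg (L.rung 0 (by omega)).symm (L.vsucc 0 (by omega)) hcu.symm
      (L.uv 0 (by omega) 1 (by omega))
      (fun h => by have := L.uinj 0 (by omega) m (by omega) h; omega)
      (fun h => L.uv m (le_refl m) 1 (by omega) h.symm)
  have hvmu : ∀ j, 1 ≤ j → j < m → ¬ G.Adj (v m) (u j) := by
    intro j hj1 hj2 h
    rcases L.uNbhd' hdeg hj1 hj2 (v m) h.symm with h' | h' | h'
    · exact L.uv (j-1) (by omega) m (le_refl m) h'.symm
    · exact L.uv (j+1) (by omega) m (le_refl m) h'.symm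
    · have := L.vinj m (le_refl m) j (by omega) h'
      omega
  have hvmv : ∀ j, 1 ≤ j → j < m - 1 → ¬ G.Adj (v m) (v j) := by
    intro j hj1 hj2 h
    rcases L.swap.uNbhd' hdeg hj1 (by omega) (v m) h.symm with h' | h' | h'
    · have := L.vinj m (le_refl m) (j-1) (by omega) h'
      omega
    · have := L.vinj m (le_refl m) (j+1) (by omega) h'
      omega
    · exact L.uv j (by omega) m (le_refl m) h'.symm
  by_cases hA : G.Adj (v 0) vN
  · rcases hNv0 vN hA with h | h | h
    · rw [← h]; exact hvN
    · exfalso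
      rcases Nat.lt_or_ge m 3 with hm2 | hm3
      · have : m - 1 = 1 := by omega
        exact hvN1 (by rw [h, this])
      · rw [h] at hvN
        exact hvmv 1 (by omega) (by omega) hvN
    · exact absurd h hvN2
  · exfalso
    obtain ⟨a, b, ha, hb, havN, hbvm, hab⟩ := hLC hvN
    have hNvm : ∀ d, G.Adj (v m) d → d = v (m-1) ∨ d = u m ∨ d = vN :=
      three_nbrs hdeg (L.vm_adj (by omega)) (L.rung m (le_refl m)).symm hvN
        (fun h => L.uv m (le_refl m) (m-1) (by omega) h.symm)
        (fun h => (hvN1 h.symm))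
        (fun h => (hvN2 h.symm))
    have hNum : ∀ d, G.Adj (u m) d → d = u (m-1) ∨ d = v m ∨ d = v 0 :=
      three_nbrs hdeg (L.um_adj (by omega)) (L.rung m (le_refl m)) hcu
        (L.uv (m-1) (by omega) m (le_refl m))
        (L.uv (m-1) (by omega) 0 (by omega))
        (fun h => by have := L.vinj m (le_refl m) 0 (by omega) h; omega)
    have hvNum1 : ¬ G.Adj vN (u (m-1)) := by
      intro h
      rcases L.uNbhd' hdeg (m := m) (i := m-1) (by omega) (by omega) vN h.symm
        with h' | h' | h'
      · -- vN = u (m-2)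
        rcases Nat.lt_or_ge m 3 with hm2 | hm3
        · have e : m - 1 - 1 = 0 := by omega
          rw [e] at h'
          rw [h'] at hA
          exact hA (L.rung 0 (by omega)).symm
        · have e : m - 1 - 1 = m - 2 := by omega
          rw [e] at h'
          rw [h'] at hvN
          exact hvmu (m-2) (by omega) (by omega) hvN
      · have e : m - 1 + 1 = m := by omega
        rw [e] at h'
        exact hvN2 h'
      · exact hvN1 h'
    have ha' : a = v (m-1) ∨ a = u m := by
      rcases hNvm a ha with h | h | h
      · exact Or.inl h
      · exact Or.inr h
      · exact absurd h havN
    rcases hab with rfl | hab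
    · rcases ha' with rfl | rfl
      · exact htf (L.vm_adj (by omega)) hb.symm hvN
      · exact htf (L.rung m (le_refl m)).symm hb.symm hvN
    · rcases ha' with rfl | rfl
      · rcases L.swap.uNbhd' hdeg (m := m) (i := m-1) (by omega) (by omega) b hab
          with h | h | h
        · rcases Nat.lt_or_ge m 3 with hm2 | hm3
          · have e : m - 1 - 1 = 0 := by omega
            rw [e] at h
            rw [h] at hb
            exact hA hb.symm
          · have e : m - 1 - 1 = m - 2 := by omega
            rw [e] at h
            rw [h] at hb
            -- hb : Adj vN (v (m-2)) with m ≥ 3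
            rcases L.swap.uNbhd' hdeg (m := m) (i := m-2) (by omega) (by omega) vN hb.symm
              with h' | h' | h'
            · have e3 : m - 2 - 1 = m - 3 := by omega
              rw [e3] at h'
              rcases Nat.eq_zero_or_pos (m-3) with h3 | h3
              · rw [h', h3] at hvN
                rcases hNv0 (v m) hvN.symm with h'' | h'' | h''
                · exact L.uv 0 (by omega) m (le_refl m) h''.symm
                · have := L.vinj m (le_refl m) 1 (by omega) h''
                  omega
                · exact L.uv m (le_refl m) m (le_refl m) h''.symm
              · rw [h'] at hvN
                exact hvmv (m-3) (by omega) (by omega) hvN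
            · have e : m - 2 + 1 = m - 1 := by omega
              rw [e] at h'
              exact hvN1 h'
            · rw [h'] at hvN
              exact hvmu (m-2) (by omega) (by omega) hvN
        · have e : m - 1 + 1 = m := by omega
          rw [e] at h
          exact hbvm h
        · rw [h] at hb
          exact hvNum1 hb
      · rcases hNum b hab with h | h | h
        · rw [h] at hb
          exact hvNum1 hb
        · exact hbvm h
        · rw [h] at hb
          exact hA hb.symm


lemma ext_adj_m2_aux (hdeg : ∀ v, G.degree v = 3) (hLC : LocalSq G)
    (htf : ∀ {a b c : V}, G.Adj a b → G.Adj b c → G.Adj a c → False)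
    {u v : ℕ → V} (L : IsLadder G 2 u v) {uN vN : V}
    (huN : G.Adj (u 2) uN) (huN1 : uN ≠ u 1) (huN2 : uN ≠ v 2)
    (hvN : G.Adj (v 2) vN) (hvN1 : vN ≠ v 1) (hvN2 : vN ≠ u 2)
    (hnewu : ∀ i, i ≤ 2 → uN ≠ u i ∧ uN ≠ v i)
    (hnewv : ∀ i, i ≤ 2 → vN ≠ u i ∧ vN ≠ v i)
    (hno : ¬ G.Adj uN vN) (hu0 : G.Adj uN (u 0)) : False := by
  have hne : uN ≠ vN := by
    intro h
    rw [← h] at hvN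
    exact htf (L.rung 2 (by omega)) hvN huN
  have hNu0 : ∀ d, G.Adj (u 0) d → d = v 0 ∨ d = u 1 ∨ d = uN :=
    three_nbrs hdeg (L.rung 0 (by omega)) (L.usucc 0 (by omega)) hu0.symm
      (fun h => L.uv 1 (by omega) 0 (by omega) h.symm)
      (fun h => (hnewu 0 (by omega)).2 h.symm)
      (fun h => (hnewu 1 (by omega)).1 h.symm)
  have hNu1 : ∀ d, G.Adj (u 1) d → d = u 0 ∨ d = u 2 ∨ d = v 1 :=
    L.uNbhd' hdeg (by omega) (by omega)
  have hNu2 : ∀ d, G.Adj (u 2) d → d = u 1 ∨ d = v 2 ∨ d = uN :=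
    three_nbrs hdeg (L.usucc 1 (by omega)).symm (L.rung 2 (by omega)) huN
      (L.uv 1 (by omega) 2 (by omega))
      (fun h => huN1 h.symm) (fun h => huN2 h.symm)
  have hNv1 : ∀ d, G.Adj (v 1) d → d = v 0 ∨ d = v 2 ∨ d = u 1 :=
    L.swap.uNbhd' hdeg (by omega) (by omega)
  have hNv2 : ∀ d, G.Adj (v 2) d → d = v 1 ∨ d = u 2 ∨ d = vN :=
    three_nbrs hdeg (L.vsucc 1 (by omega)).symm (L.rung 2 (by omega)).symm hvN
      (fun h => L.uv 2 (by omega) 1 (by omega) h.symm)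
      (fun h => hvN1 h.symm) (fun h => hvN2 h.symm)
  have nAdj_vN_u1 : ¬ G.Adj vN (u 1) := by
    intro h
    rcases hNu1 vN h.symm with h' | h' | h'
    · exact (hnewv 0 (by omega)).1 h'
    · exact hvN2 h'
    · exact hvN1 h'
  -- Step A : vN ~ v 0
  have hv0 : G.Adj vN (v 0) := by
    obtain ⟨a, b, ha, hb, havN, hbv2, hab⟩ := hLC hvN
    have ha' : a = v 1 ∨ a = u 2 := by
      rcases hNv2 a ha with h | h | h
      · exact Or.inl h
      · exact Or.inr h
      · exact absurd h havN
    rcases hab with rfl | hab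
    · rcases ha' with rfl | rfl
      · exact absurd (htf (L.vsucc 1 (by omega)) hvN hb.symm) (fun h => h)
      · exact absurd (htf (L.rung 2 (by omega)) hvN hb.symm) (fun h => h)
    · rcases ha' with rfl | rfl
      · rcases hNv1 b hab with h | h | h
        · rw [h] at hb; exact hb
        · exact absurd h hbv2
        · rw [h] at hb; exact absurd hb nAdj_vN_u1
      · rcases hNu2 b hab with h | h | h
        · rw [h] at hb; exact absurd hb nAdj_vN_u1
        · exact absurd h hbv2
        · rw [h] at hb; exact absurd hb.symm hno
  have hNv0 : ∀ d, G.Adj (v 0) d → d = u 0 ∨ d = v 1 ∨ d = vN :=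
    three_nbrs hdeg (L.rung 0 (by omega)).symm (L.vsucc 0 (by omega)) hv0.symm
      (L.uv 0 (by omega) 1 (by omega))
      (fun h => (hnewv 0 (by omega)).1 h.symm)
      (fun h => (hnewv 1 (by omega)).2 h.symm)
  obtain ⟨θ, hθ, hθ1, hθ2⟩ := exists_third hdeg huN.symm hu0
    (fun h => by have := L.uinj 2 (by omega) 0 (by omega) h; omega)
  have hθu1 : θ ≠ u 1 := by
    intro h
    rw [h] at hθ
    rcases hNu1 uN hθ.symm with h' | h' | h'
    · exact (hnewu 0 (by omega)).1 h'
    · exact (hnewu 2 (by omega)).1 h'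
    · exact (hnewu 1 (by omega)).2 h'
  have hθv0 : θ ≠ v 0 := by
    intro h
    rw [h] at hθ
    rcases hNv0 uN hθ.symm with h' | h' | h'
    · exact (hnewu 0 (by omega)).1 h'
    · exact (hnewu 1 (by omega)).2 h'
    · exact hne h'
  have hθv1 : θ ≠ v 1 := by
    intro h
    rw [h] at hθ
    rcases hNv1 uN hθ.symm with h' | h' | h'
    · exact (hnewu 0 (by omega)).2 h'
    · exact (hnewu 2 (by omega)).2 h'
    · exact (hnewu 1 (by omega)).1 h'
  have hθv2 : θ ≠ v 2 := by
    intro h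
    rw [h] at hθ
    rcases hNv2 uN hθ.symm with h' | h' | h'
    · exact (hnewu 1 (by omega)).2 h'
    · exact (hnewu 2 (by omega)).1 h'
    · exact hne h'
  have hθvN : θ ≠ vN := by
    intro h
    rw [h] at hθ
    exact hno hθ
  obtain ⟨α, β, hα, hβ, hαθ, hβuN, hαβ⟩ := hLC hθ
  have hNuN : ∀ d, G.Adj uN d → d = u 2 ∨ d = u 0 ∨ d = θ :=
    three_nbrs hdeg huN.symm hu0 hθ
      (fun h => by have := L.uinj 2 (by omega) 0 (by omega) h; omega)
      (fun h => hθ1 h.symm) (fun h => hθ2 h.symm)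
  have hα' : α = u 2 ∨ α = u 0 := by
    rcases hNuN α hα with h | h | h
    · exact Or.inl h
    · exact Or.inr h
    · exact absurd h hαθ
  rcases hαβ with rfl | hαβ
  · rcases hα' with rfl | rfl
    · rcases hNu2 θ hβ.symm with h' | h' | h'
      · exact hθu1 h'
      · exact hθv2 h'
      · exact hθ.ne' h'
    · rcases hNu0 θ hβ.symm with h' | h' | h'
      · exact hθv0 h'
      · exact hθu1 h'
      · exact hθ.ne' h'
  · rcases hα' with rfl | rfl
    · rcases hNu2 β hαβ with h | h | h
      · rw [h] at hβ
        rcases hNu1 θ hβ.symm with h' | h' | h'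
        · exact hθ2 h'
        · exact hθ1 h'
        · exact hθv1 h'
      · rw [h] at hβ
        rcases hNv2 θ hβ.symm with h' | h' | h'
        · exact hθv1 h'
        · exact hθ1 h'
        · exact hθvN h'
      · exact hβuN h
    · rcases hNu0 β hαβ with h | h | h
      · rw [h] at hβ
        rcases hNv0 θ hβ.symm with h' | h' | h'
        · exact hθ2 h'
        · exact hθv1 h'
        · exact hθvN h'
      · rw [h] at hβ
        rcases hNu1 θ hβ.symm with h' | h' | h'
        · exact hθ2 h'
        · exact hθ1 h'
        · exact hθv1 h'
      · exact hβuN h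

/-- When developing a ladder, if both third neighbours are really new vertices,
then they are adjacent. -/
lemma ext_adj (hdeg : ∀ v, G.degree v = 3) (hLC : LocalSq G)
    (htf : ∀ {a b c : V}, G.Adj a b → G.Adj b c → G.Adj a c → False)
    {m : ℕ} {u v : ℕ → V} (L : IsLadder G m u v) (hm : 2 ≤ m) {uN vN : V}
    (huN : G.Adj (u m) uN) (huN1 : uN ≠ u (m-1)) (huN2 : uN ≠ v m)
    (hvN : G.Adj (v m) vN) (hvN1 : vN ≠ v (m-1)) (hvN2 : vN ≠ u m)
    (hnewu : ∀ i, i ≤ m → uN ≠ u i ∧ uN ≠ v i)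
    (hnewv : ∀ i, i ≤ m → vN ≠ u i ∧ vN ≠ v i) : G.Adj uN vN := by
  by_contra hno
  have nAdj_uN_vm1 : ¬ G.Adj uN (v (m-1)) := by
    intro h
    rcases L.swap.uNbhd' hdeg (m := m) (i := m-1) (by omega) (by omega) uN h.symm
      with h' | h' | h'
    · exact (hnewu (m-1-1) (by omega)).2 h'
    · have e : m - 1 + 1 = m := by omega
      rw [e] at h'
      exact huN2 h'
    · exact huN1 h'
  obtain ⟨a, b, ha, hb, hauN, hbum, hab⟩ := hLC huN
  have hNum : ∀ d, G.Adj (u m) d → d = u (m-1) ∨ d = v m ∨ d = uN :=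
    three_nbrs hdeg (L.um_adj (by omega)) (L.rung m (le_refl m)) huN
      (L.uv (m-1) (by omega) m (le_refl m))
      (fun h => huN1 h.symm) (fun h => huN2 h.symm)
  have hNvm : ∀ d, G.Adj (v m) d → d = v (m-1) ∨ d = u m ∨ d = vN :=
    three_nbrs hdeg (L.vm_adj (by omega)) (L.rung m (le_refl m)).symm hvN
      (fun h => L.uv m (le_refl m) (m-1) (by omega) h.symm)
      (fun h => hvN1 h.symm) (fun h => hvN2 h.symm)
  have ha' : a = u (m-1) ∨ a = v m := by
    rcases hNum a ha with h | h | h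
    · exact Or.inl h
    · exact Or.inr h
    · exact absurd h hauN
  rcases hab with rfl | hab
  · rcases ha' with rfl | rfl
    · exact htf (L.um_adj (by omega)).symm huN hb.symm
    · exact htf (L.rung m (le_refl m)) hb.symm huN
  · rcases ha' with rfl | rfl
    · rcases L.uNbhd' hdeg (m := m) (i := m-1) (by omega) (by omega) b hab
        with h | h | h
      · -- b = u (m-2)
        rcases Nat.lt_or_ge m 3 with hm2 | hm3
        · have hm2' : m = 2 := by omega
          subst hm2'
          have e : 2 - 1 - 1 = 0 := by omega
          rw [e] at h
          rw [h] at hb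
          exact ext_adj_m2_aux hdeg hLC htf L huN huN1 huN2 hvN hvN1 hvN2 hnewu hnewv hno hb
        · have e : m - 1 - 1 = m - 2 := by omega
          rw [e] at h
          rw [h] at hb
          rcases L.uNbhd' hdeg (m := m) (i := m-2) (by omega) (by omega) uN hb.symm
            with h' | h' | h'
          · exact (hnewu (m-2-1) (by omega)).1 h'
          · have e2 : m - 2 + 1 = m - 1 := by omega
            rw [e2] at h'
            exact huN1 h'
          · exact (hnewu (m-2) (by omega)).2 h'
      · have e : m - 1 + 1 = m := by omega
        rw [e] at h
        exact hbum h
      · rw [h] at hb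
        exact nAdj_uN_vm1 hb
    · rcases hNvm b hab with h | h | h
      · rw [h] at hb
        exact nAdj_uN_vm1 hb
      · exact hbum h
      · rw [h] at hb
        exact hno hb


lemma IsLadder.extend {m : ℕ} {u v : ℕ → V} (L : IsLadder G m u v) {uN vN : V}
    (huN : G.Adj (u m) uN) (hvN : G.Adj (v m) vN) (hadj : G.Adj uN vN)
    (hnewu : ∀ i, i ≤ m → uN ≠ u i ∧ uN ≠ v i)
    (hnewv : ∀ i, i ≤ m → vN ≠ u i ∧ vN ≠ v i) (hne : uN ≠ vN) :
    IsLadder G (m+1) (fun i => if i = m+1 then uN else u i)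
      (fun i => if i = m+1 then vN else v i) := by
  constructor
  · intro i hi
    by_cases h : i = m + 1
    · rw [if_pos h, if_pos h]; exact hadj
    · rw [if_neg h, if_neg h]; exact L.rung i (by omega)
  · intro i hi
    by_cases h : i = m
    · rw [if_neg (by omega), if_pos (by omega), h]; exact huN
    · rw [if_neg (by omega), if_neg (by omega)]; exact L.usucc i (by omega)
  · intro i hi
    by_cases h : i = m
    · rw [if_neg (by omega), if_pos (by omega), h]; exact hvN
    · rw [if_neg (by omega), if_neg (by omega)]; exact L.vsucc i (by omega)
  · intro i hi j hj h
    by_cases h1 : i = m + 1 <;> by_cases h2 : j = m + 1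
    · omega
    · rw [if_pos h1, if_neg h2] at h
      exact absurd h (hnewu j (by omega)).1
    · rw [if_neg h1, if_pos h2] at h
      exact absurd h.symm (hnewu i (by omega)).1
    · rw [if_neg h1, if_neg h2] at h
      exact L.uinj i (by omega) j (by omega) h
  · intro i hi j hj h
    by_cases h1 : i = m + 1 <;> by_cases h2 : j = m + 1
    · omega
    · rw [if_pos h1, if_neg h2] at h
      exact absurd h (hnewv j (by omega)).2
    · rw [if_neg h1, if_pos h2] at h
      exact absurd h.symm (hnewv i (by omega)).2
    · rw [if_neg h1, if_neg h2] at h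
      exact L.vinj i (by omega) j (by omega) h
  · intro i hi j hj
    by_cases h1 : i = m + 1 <;> by_cases h2 : j = m + 1
    · rw [if_pos h1, if_pos h2]; exact hne
    · rw [if_pos h1, if_neg h2]; exact (hnewu j (by omega)).2
    · rw [if_neg h1, if_pos h2]
      exact fun h => (hnewv i (by omega)).1 h.symm
    · rw [if_neg h1, if_neg h2]; exact L.uv i (by omega) j (by omega)

/-- One development step of a ladder: extend, or close up as a prism or Möbius band. -/
lemma ladder_step (hdeg : ∀ v, G.degree v = 3) (hLC : LocalSq G)
    (htf : ∀ {a b c : V}, G.Adj a b → G.Adj b c → G.Adj a c → False)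
    {m : ℕ} {u v : ℕ → V} (L : IsLadder G m u v) (hm : 2 ≤ m) :
    (∃ u' v', IsLadder G (m+1) u' v') ∨
      (G.Adj (u m) (u 0) ∧ G.Adj (v m) (v 0)) ∨
      (G.Adj (u m) (v 0) ∧ G.Adj (v m) (u 0)) := by
  obtain ⟨uN, huN, huN1, huN2⟩ := exists_third hdeg (L.um_adj (by omega))
    (L.rung m (le_refl m)) (L.uv (m-1) (by omega) m (le_refl m))
  obtain ⟨vN, hvN, hvN1, hvN2⟩ := exists_third hdeg (L.vm_adj (by omega))
    (L.rung m (le_refl m)).symm (fun h => L.uv m (le_refl m) (m-1) (by omega) h.symm)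
  have hNum : ∀ d, G.Adj (u m) d → d = u (m-1) ∨ d = v m ∨ d = uN :=
    three_nbrs hdeg (L.um_adj (by omega)) (L.rung m (le_refl m)) huN
      (L.uv (m-1) (by omega) m (le_refl m))
      (fun h => huN1 h.symm) (fun h => huN2 h.symm)
  rcases third_loc hdeg L hm uN huN huN1 huN2 with h | h | hnewu
  · rw [h] at huN
    exact Or.inr (Or.inl ⟨huN, closure_u hdeg hLC htf L hm huN⟩)
  · rw [h] at huN
    exact Or.inr (Or.inr ⟨huN, closure_cross hdeg hLC htf L hm huN⟩)
  · rcases third_loc hdeg L.swap hm vN hvN hvN1 hvN2 with h | h | hnewv'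
    · -- vN = v 0 forces a prism closure, contradicting newness of uN
      exfalso
      rw [h] at hvN
      have hcu2 : G.Adj (u m) (u 0) := closure_u hdeg hLC htf L.swap hm hvN
      rcases hNum (u 0) hcu2 with h' | h' | h'
      · have := L.uinj 0 (by omega) (m-1) (by omega) h'
        omega
      · exact L.uv 0 (by omega) m (le_refl m) h'
      · exact (hnewu 0 (by omega)).1 h'.symm
    · exfalso
      rw [h] at hvN
      have hcu2 : G.Adj (u m) (v 0) := closure_cross hdeg hLC htf L.swap hm hvN
      rcases hNum (v 0) hcu2 with h' | h' | h'
      · exact L.uv (m-1) (by omega) 0 (by omega) h'.symm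
      · have := L.vinj m (le_refl m) 0 (by omega) h'.symm
        omega
      · exact (hnewu 0 (by omega)).2 h'.symm
    · have hnewv : ∀ i, i ≤ m → vN ≠ u i ∧ vN ≠ v i :=
        fun i hi => ⟨(hnewv' i hi).2, (hnewv' i hi).1⟩
      have hadj := ext_adj hdeg hLC htf L hm huN huN1 huN2 hvN hvN1 hvN2 hnewu hnewv
      have hne : uN ≠ vN := hadj.ne
      exact Or.inl ⟨_, _, L.extend huN hvN hadj hnewu hnewv hne⟩

lemma ladder_card [Fintype V] {m : ℕ} {u v : ℕ → V} (L : IsLadder G m u v) :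
    2 * (m+1) ≤ Fintype.card V := by
  classical
  have h1 : ((Finset.range (m+1)).image u).card = m+1 := by
    rw [Finset.card_image_of_injOn, Finset.card_range]
    intro i hi j hj h
    exact L.uinj i (by simp at hi; omega) j (by simp at hj; omega) h
  have h2 : ((Finset.range (m+1)).image v).card = m+1 := by
    rw [Finset.card_image_of_injOn, Finset.card_range]
    intro i hi j hj h
    exact L.vinj i (by simp at hi; omega) j (by simp at hj; omega) h
  have hdisj : Disjoint ((Finset.range (m+1)).image u) ((Finset.range (m+1)).image v) := by
    rw [Finset.disjoint_left]
    intro a ha hb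
    obtain ⟨i, hi, rfl⟩ := Finset.mem_image.mp ha
    obtain ⟨j, hj, hej⟩ := Finset.mem_image.mp hb
    exact L.uv i (by simp at hi; omega) j (by simp at hj; omega) hej.symm
  have hle := Finset.card_le_univ
    ((Finset.range (m+1)).image u ∪ (Finset.range (m+1)).image v)
  rw [Finset.card_union_of_disjoint hdisj, h1, h2] at hle
  omega

lemma ladder_rec [Fintype V] (hconn : G.Connected) (hdeg : ∀ v, G.degree v = 3)
    (hLC : LocalSq G)
    (htf : ∀ {a b c : V}, G.Adj a b → G.Adj b c → G.Adj a c → False) :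
    ∀ (N mm : ℕ) (u v : ℕ → V), Fintype.card V ≤ 2*(mm+1) + N → 2 ≤ mm →
      IsLadder G mm u v →
      (∃ n : ℕ, 3 ≤ n ∧ Nonempty (G ≃g prismGraph n)) ∨
        (∃ k : ℕ, 2 ≤ k ∧ Nonempty (G ≃g mobiusLadder k)) := by
  intro N
  induction N with
  | zero =>
    intro mm u v hcard hmm L
    rcases ladder_step hdeg hLC htf L hmm with ⟨u', v', L'⟩ | h | h
    · exfalso
      have := ladder_card L'
      omega
    · exact Or.inl ⟨mm+1, by omega, prism_of_closed hconn hdeg L hmm h.1 h.2⟩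
    · exact Or.inr ⟨mm+1, by omega, mobius_of_closed hconn hdeg L (by omega) h.1 h.2⟩
  | succ N ih =>
    intro mm u v hcard hmm L
    rcases ladder_step hdeg hLC htf L hmm with ⟨u', v', L'⟩ | h | h
    · exact ih (mm+1) u' v' (by omega) (by omega) L'
    · exact Or.inl ⟨mm+1, by omega, prism_of_closed hconn hdeg L hmm h.1 h.2⟩
    · exact Or.inr ⟨mm+1, by omega, mobius_of_closed hconn hdeg L (by omega) h.1 h.2⟩


lemma grow_kill (hdeg : ∀ v, G.degree v = 3) (hLC : LocalSq G)
    (htf : ∀ {a b c : V}, G.Adj a b → G.Adj b c → G.Adj a c → False)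
    {u v : ℕ → V} (L : IsLadder G 1 u v) {u2 v2 : V}
    (hu2 : G.Adj (u 1) u2) (hu2a : u2 ≠ u 0) (hu2b : u2 ≠ v 1)
    (hv2 : G.Adj (v 1) v2) (hv2a : v2 ≠ v 0) (hv2b : v2 ≠ u 1)
    (hA : ¬ G.Adj u2 v2) (hK : G.Adj u2 (v 0)) : False := by
  have r0 := L.rung 0 (by omega)
  have r1 := L.rung 1 (by omega)
  have s0 := L.usucc 0 (by omega)
  have t0 := L.vsucc 0 (by omega)
  have nAdj_v0u1 : ¬ G.Adj (v 0) (u 1) := fun h => htf r0 h s0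
  have nAdj_u0v1 : ¬ G.Adj (u 0) (v 1) := fun h => htf s0 r1 h
  have hu2v0 : u2 ≠ v 0 := hK.ne
  have hu2u1 : u2 ≠ u 1 := hu2.ne'
  have hv2u0 : v2 ≠ u 0 := by
    intro h
    rw [h] at hv2
    exact nAdj_u0v1 hv2.symm
  have hv2v1 : v2 ≠ v 1 := hv2.ne'
  have hu2v2 : u2 ≠ v2 := by
    intro h
    rw [h] at hu2
    exact htf r1 hv2 hu2
  have hNu1 : ∀ d, G.Adj (u 1) d → d = u 0 ∨ d = v 1 ∨ d = u2 :=
    three_nbrs hdeg s0.symm r1 hu2 (L.uv 0 (by omega) 1 (by omega))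
      (fun h => hu2a h.symm) (fun h => hu2b h.symm)
  have hNv1 : ∀ d, G.Adj (v 1) d → d = v 0 ∨ d = u 1 ∨ d = v2 :=
    three_nbrs hdeg t0.symm r1.symm hv2
      (fun h => L.uv 1 (by omega) 0 (by omega) h.symm)
      (fun h => hv2a h.symm) (fun h => hv2b h.symm)
  have hNv0 : ∀ d, G.Adj (v 0) d → d = u 0 ∨ d = v 1 ∨ d = u2 :=
    three_nbrs hdeg r0.symm t0 hK.symm (L.uv 0 (by omega) 1 (by omega))
      (fun h => hu2a h.symm) (fun h => hu2b h.symm)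
  -- LC on v1–v2 forces u0 ~ v2
  have hu0v2 : G.Adj (u 0) v2 := by
    obtain ⟨a, b, ha, hb, hav2, hbv1, hab⟩ := hLC hv2
    have ha' : a = v 0 ∨ a = u 1 := by
      rcases hNv1 a ha with h | h | h
      · exact Or.inl h
      · exact Or.inr h
      · exact absurd h hav2
    rcases hab with rfl | hab
    · rcases ha' with rfl | rfl
      · exact absurd (htf t0 hv2 hb.symm) (fun h => h)
      · exact absurd (htf r1 hv2 hb.symm) (fun h => h)
    · rcases ha' with rfl | rfl
      · rcases hNv0 b hab with h | h | h
        · rw [h] at hb; exact hb.symm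
        · exact absurd h hbv1
        · rw [h] at hb; exact absurd hb.symm hA
      · rcases hNu1 b hab with h | h | h
        · rw [h] at hb; exact hb.symm
        · exact absurd h hbv1
        · rw [h] at hb; exact absurd hb.symm hA
  have hNu0 : ∀ d, G.Adj (u 0) d → d = v 0 ∨ d = u 1 ∨ d = v2 :=
    three_nbrs hdeg r0 s0 hu0v2 (fun h => L.uv 1 (by omega) 0 (by omega) h.symm)
      (fun h => hv2a h.symm) (fun h => hv2b h.symm)
  obtain ⟨w, hw, hw1, hw2⟩ := exists_third hdeg hu2.symm hK
    (fun h => L.uv 1 (by omega) 0 (by omega) h)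
  have hwu0 : w ≠ u 0 := by
    intro h
    rw [h] at hw
    rcases hNu0 u2 hw.symm with h' | h' | h'
    · exact hu2v0 h'
    · exact hu2u1 h'
    · exact hu2v2 h'
  have hwv1 : w ≠ v 1 := by
    intro h
    rw [h] at hw
    rcases hNv1 u2 hw.symm with h' | h' | h'
    · exact hu2v0 h'
    · exact hu2u1 h'
    · exact hu2v2 h'
  have hwv2 : w ≠ v2 := by
    intro h
    rw [h] at hw
    exact hA hw
  have hNu2 : ∀ d, G.Adj u2 d → d = u 1 ∨ d = v 0 ∨ d = w :=
    three_nbrs hdeg hu2.symm hK hw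
      (fun h => L.uv 1 (by omega) 0 (by omega) h)
      (fun h => hw1 h.symm) (fun h => hw2 h.symm)
  obtain ⟨α, β, hα, hβ, hαw, hβu2, hαβ⟩ := hLC hw
  have hα' : α = u 1 ∨ α = v 0 := by
    rcases hNu2 α hα with h | h | h
    · exact Or.inl h
    · exact Or.inr h
    · exact absurd h hαw
  rcases hαβ with rfl | hαβ
  · rcases hα' with rfl | rfl
    · rcases hNu1 w hβ.symm with h' | h' | h'
      · exact hwu0 h'
      · exact hwv1 h'
      · exact hw.ne' h'
    · rcases hNv0 w hβ.symm with h' | h' | h'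
      · exact hwu0 h'
      · exact hwv1 h'
      · exact hw.ne' h'
  · rcases hα' with rfl | rfl
    · rcases hNu1 β hαβ with h | h | h
      · rw [h] at hβ
        rcases hNu0 w hβ.symm with h' | h' | h'
        · exact hw2 h'
        · exact hw1 h'
        · exact hwv2 h'
      · rw [h] at hβ
        rcases hNv1 w hβ.symm with h' | h' | h'
        · exact hw2 h'
        · exact hw1 h'
        · exact hwv2 h'
      · exact hβu2 h
    · rcases hNv0 β hαβ with h | h | h
      · rw [h] at hβ
        rcases hNu0 w hβ.symm with h' | h' | h'
        · exact hw2 h'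
        · exact hw1 h'
        · exact hwv2 h'
      · rw [h] at hβ
        rcases hNv1 w hβ.symm with h' | h' | h'
        · exact hw2 h'
        · exact hw1 h'
        · exact hwv2 h'
      · exact hβu2 h

/-- Any ladder of length 1 in a triangle-free cubic `LocalSq` graph extends to length 2,
possibly after reorientation. -/
lemma grow_one (hdeg : ∀ v, G.degree v = 3) (hLC : LocalSq G)
    (htf : ∀ {a b c : V}, G.Adj a b → G.Adj b c → G.Adj a c → False)
    {u v : ℕ → V} (L : IsLadder G 1 u v) : ∃ u' v', IsLadder G 2 u' v' := by
  have r0 := L.rung 0 (by omega)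
  have r1 := L.rung 1 (by omega)
  have s0 := L.usucc 0 (by omega)
  have t0 := L.vsucc 0 (by omega)
  have nAdj_v0u1 : ¬ G.Adj (v 0) (u 1) := fun h => htf r0 h s0
  have nAdj_u0v1 : ¬ G.Adj (u 0) (v 1) := fun h => htf s0 r1 h
  obtain ⟨u2, hu2, hu2a, hu2b⟩ := exists_third hdeg s0.symm r1
    (L.uv 0 (by omega) 1 (by omega))
  obtain ⟨v2, hv2, hv2a, hv2b⟩ := exists_third hdeg t0.symm r1.symm
    (fun h => L.uv 1 (by omega) 0 (by omega) h.symm)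
  have hu2v0 : u2 ≠ v 0 := by
    intro h
    rw [h] at hu2
    exact nAdj_v0u1 hu2.symm
  have hv2u0 : v2 ≠ u 0 := by
    intro h
    rw [h] at hv2
    exact nAdj_u0v1 hv2.symm
  have hu2v2 : u2 ≠ v2 := by
    intro h
    rw [h] at hu2
    exact htf r1 hv2 hu2
  have hNu1 : ∀ d, G.Adj (u 1) d → d = u 0 ∨ d = v 1 ∨ d = u2 :=
    three_nbrs hdeg s0.symm r1 hu2 (L.uv 0 (by omega) 1 (by omega))
      (fun h => hu2a h.symm) (fun h => hu2b h.symm)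
  have hNv1 : ∀ d, G.Adj (v 1) d → d = v 0 ∨ d = u 1 ∨ d = v2 :=
    three_nbrs hdeg t0.symm r1.symm hv2
      (fun h => L.uv 1 (by omega) 0 (by omega) h.symm)
      (fun h => hv2a h.symm) (fun h => hv2b h.symm)
  by_cases hA : G.Adj u2 v2
  · -- direct extension
    have hnewu : ∀ i, i ≤ 1 → u2 ≠ u i ∧ u2 ≠ v i := by
      intro i hi
      interval_cases i
      · exact ⟨hu2a, hu2v0⟩
      · exact ⟨hu2.ne', hu2b⟩
    have hnewv : ∀ i, i ≤ 1 → v2 ≠ u i ∧ v2 ≠ v i := by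
      intro i hi
      interval_cases i
      · exact ⟨hv2u0, hv2a⟩
      · exact ⟨hv2b, hv2.ne'⟩
    exact ⟨_, _, L.extend hu2 hv2 hA hnewu hnewv hu2v2⟩
  · -- LC on u1–u2, then reorient
    obtain ⟨a, b, ha, hb, hau2, hbu1, hab⟩ := hLC hu2
    have ha' : a = u 0 ∨ a = v 1 := by
      rcases hNu1 a ha with h | h | h
      · exact Or.inl h
      · exact Or.inr h
      · exact absurd h hau2
    rcases hab with rfl | hab
    · rcases ha' with rfl | rfl
      · exact absurd (htf s0 hu2 hb.symm) (fun h => h)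
      · exact absurd (htf r1 hb.symm hu2) (fun h => h)
    · rcases ha' with rfl | rfl
      · -- a = u 0
        obtain ⟨t, ht, ht1, ht2⟩ := exists_third hdeg r0 s0
          (fun h => L.uv 1 (by omega) 0 (by omega) h.symm)
        have hNu0 : ∀ d, G.Adj (u 0) d → d = v 0 ∨ d = u 1 ∨ d = t :=
          three_nbrs hdeg r0 s0 ht (fun h => L.uv 1 (by omega) 0 (by omega) h.symm)
            (fun h => ht1 h.symm) (fun h => ht2 h.symm)
        rcases hNu0 b hab with h | h | h
        · rw [h] at hb
          exact absurd (grow_kill hdeg hLC htf L hu2 hu2a hu2b hv2 hv2a hv2b hA hb)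
            (fun h => h)
        · exact absurd h hbu1
        · -- b = t : reorientation
          rw [h] at hb
          have htu0 : t ≠ u 0 := ht.ne'
          have htv1 : t ≠ v 1 := by
            intro hh
            rw [hh] at ht
            exact nAdj_u0v1 ht
          have htu2 : t ≠ u2 := by
            intro hh
            rw [hh] at ht
            exact htf s0 hu2 ht
          refine ⟨fun i => if i = 0 then v 0 else if i = 1 then u 0 else t,
            fun i => if i = 0 then v 1 else if i = 1 then u 1 else u2, ?_⟩
          constructor
          · intro i hi
            interval_cases i
            · simpa using t0
            · simpa using s0
            · simpa using hb.symm
          · intro i hi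
            interval_cases i
            · simpa using r0.symm
            · simpa using ht
          · intro i hi
            interval_cases i
            · simpa using r1.symm
            · simpa using hu2
          · intro i hi j hj hh
            interval_cases i <;> interval_cases j
            · rfl
            · exact absurd (show v 0 = u 0 from hh) (fun h' => r0.ne h'.symm)
            · exact absurd (show v 0 = t from hh) (fun h' => ht1 h'.symm)
            · exact absurd (show u 0 = v 0 from hh) r0.ne
            · rfl
            · exact absurd (show u 0 = t from hh) (fun h' => htu0 h'.symm)
            · exact absurd (show t = v 0 from hh) ht1
            · exact absurd (show t = u 0 from hh) htu0
            · rfl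
          · intro i hi j hj hh
            interval_cases i <;> interval_cases j
            · rfl
            · exact absurd (show v 1 = u 1 from hh) (fun h' => r1.ne h'.symm)
            · exact absurd (show v 1 = u2 from hh) (fun h' => hu2b h'.symm)
            · exact absurd (show u 1 = v 1 from hh) r1.ne
            · rfl
            · exact absurd (show u 1 = u2 from hh) hu2.ne
            · exact absurd (show u2 = v 1 from hh) hu2b
            · exact absurd (show u2 = u 1 from hh) hu2.ne'
            · rfl
          · intro i hi j hj
            interval_cases i <;> interval_cases j
            · show v 0 ≠ v 1
              exact t0.ne
            · show v 0 ≠ u 1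
              exact fun h' => L.uv 1 (by omega) 0 (by omega) h'.symm
            · show v 0 ≠ u2
              exact fun h' => hu2v0 h'.symm
            · show u 0 ≠ v 1
              exact L.uv 0 (by omega) 1 (by omega)
            · show u 0 ≠ u 1
              exact s0.ne
            · show u 0 ≠ u2
              exact fun h' => hu2a h'.symm
            · show t ≠ v 1
              exact htv1
            · show t ≠ u 1
              exact ht2
            · show t ≠ u2
              exact htu2
      · -- a = v 1
        rcases hNv1 b hab with h | h | h
        · rw [h] at hb
          exact absurd (grow_kill hdeg hLC htf L hu2 hu2a hu2b hv2 hv2a hv2b hA hb)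
            (fun h => h)
        · exact absurd h hbu1
        · rw [h] at hb
          exact absurd hb hA


lemma exists_ladder1 (hconn : G.Connected) (hdeg : ∀ v, G.degree v = 3) (hLC : LocalSq G)
    (htf : ∀ {a b c : V}, G.Adj a b → G.Adj b c → G.Adj a c → False) :
    ∃ u v : ℕ → V, IsLadder G 1 u v := by
  obtain ⟨x⟩ := hconn.nonempty
  have hx : 0 < (G.neighborFinset x).card := by
    rw [SimpleGraph.card_neighborFinset_eq_degree, hdeg]; omega
  obtain ⟨y, hy⟩ := Finset.card_pos.mp hx
  rw [SimpleGraph.mem_neighborFinset] at hy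
  obtain ⟨a, b, hxa, hyb, hay, hbx, hab⟩ := hLC hy
  have hadj : G.Adj a b := by
    rcases hab with rfl | h
    · exact absurd (htf hy hyb hxa) (fun h => h)
    · exact h
  refine ⟨fun i => if i = 0 then x else a, fun i => if i = 0 then y else b, ?_⟩
  constructor
  · intro i hi
    interval_cases i
    · show G.Adj x y; exact hy
    · show G.Adj a b; exact hadj
  · intro i hi
    interval_cases i
    show G.Adj x a; exact hxa
  · intro i hi
    interval_cases i
    show G.Adj y b; exact hyb
  · intro i hi j hj h
    interval_cases i <;> interval_cases j
    · rfl
    · exact absurd (show x = a from h) hxa.ne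
    · exact absurd (show a = x from h) hxa.ne'
    · rfl
  · intro i hi j hj h
    interval_cases i <;> interval_cases j
    · rfl
    · exact absurd (show y = b from h) hyb.ne
    · exact absurd (show b = y from h) hyb.ne'
    · rfl
  · intro i hi j hj
    interval_cases i <;> interval_cases j
    · show x ≠ y; exact hy.ne
    · show x ≠ b; exact fun h => hbx h.symm
    · show a ≠ y; exact hay
    · show a ≠ b; exact hadj.ne

/-- The triangle-free case of the classification. -/
lemma tf_case [Fintype V] (hconn : G.Connected) (hdeg : ∀ v, G.degree v = 3)
    (hLC : LocalSq G)
    (htf : ∀ {a b c : V}, G.Adj a b → G.Adj b c → G.Adj a c → False) :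
    (∃ n : ℕ, 3 ≤ n ∧ Nonempty (G ≃g prismGraph n)) ∨
      (∃ k : ℕ, 2 ≤ k ∧ Nonempty (G ≃g mobiusLadder k)) := by
  obtain ⟨u1, v1, L1⟩ := exists_ladder1 hconn hdeg hLC htf
  obtain ⟨u2, v2, L2⟩ := grow_one hdeg hLC htf L1
  exact ladder_rec hconn hdeg hLC htf (Fintype.card V) 2 u2 v2 (by omega) (by omega) L2

end TFLadder

end CubicWork

open CubicWork

/-- A (finite, connected) simple 3-regular graph has `κ₀(x,y) ≥ 0` on
every edge iff it is isomorphic to a prism graph `Y n` with `n ≥ 3` or to a Möbius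
ladder `M k` with `k ≥ 2`. -/
theorem cubic_ollivier_nonneg_iff_prism_or_mobius {V : Type*} [Fintype V]
    (G : SimpleGraph V) [∀ v, Fintype (G.neighborSet v)]
    (hconn : G.Connected) (hcubic : ∀ v : V, G.degree v = 3) :
    (∀ x y : V, G.Adj x y → 0 ≤ kappaZero G x y) ↔
      ((∃ n : ℕ, 3 ≤ n ∧ Nonempty (G ≃g prismGraph n)) ∨
        (∃ k : ℕ, 2 ≤ k ∧ Nonempty (G ≃g mobiusLadder k))) := by
  constructor
  · intro h
    have hLC : LocalSq G := fun x y hxy => pair_of_kappa_nonneg hconn hcubic hxy (h x y hxy)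
    by_cases htri : ∃ a b c, G.Adj a b ∧ G.Adj b c ∧ G.Adj a c
    · obtain ⟨a, b, c, h1, h2, h3⟩ := htri
      exact triangle_case hconn hcubic hLC h1 h2 h3
    · have htf : ∀ {a b c : V}, G.Adj a b → G.Adj b c → G.Adj a c → False :=
        fun {a b c} h1 h2 h3 => htri ⟨a, b, c, h1, h2, h3⟩
      exact tf_case hconn hcubic hLC htf
  · intro h x y hxy
    apply kappa_nonneg_of_pair hcubic hxy
    rcases h with ⟨n, hn, ⟨e⟩⟩ | ⟨k, hk, ⟨e⟩⟩
    · exact localSq_of_iso e (localSq_prism hn) hxy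
    · exact localSq_of_iso e (localSq_mobius hk) hxy
end

section
/- Let G be a 3-regular simple graph and let xy be an edge of G that lies on a 4-cycle but not on any triangle (i.e. the smallest cycle supporting the edge xy has length 4). Then κ₀(x,y) = 0. -/
open Finset

variable {V : Type*}

set_option maxHeartbeats 2000000 in
/-- In a 3-regular simple graph, an edge lying on a 4-cycle but on no
triangle has Ollivier–Ricci curvature `κ₀(x,y) = 0`. -/
theorem ollivier_eq_zero_of_square_no_triangle {V : Type*} (G : SimpleGraph V)
    [∀ v, Fintype (G.neighborSet v)] (hcubic : ∀ v : V, G.degree v = 3)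
    {x y : V} (hxy : G.Adj x y)
    (hsquare : ∃ u v : V, G.Adj x u ∧ G.Adj u v ∧ G.Adj v y ∧ u ≠ y ∧ v ≠ x)
    (htri : ∀ z : V, ¬(G.Adj x z ∧ G.Adj y z)) :
    kappaZero G x y = 0 := by
  classical
  obtain ⟨u, v, hxu, huv, hvy, huy, hvx⟩ := hsquare
  have hyu : y ≠ u := fun h => huy h.symm
  -- neighbor finsets
  have hyN : y ∈ G.neighborFinset x := by simp [hxy]
  have huN : u ∈ G.neighborFinset x := by simp [hxu]
  have hxN : x ∈ G.neighborFinset y := by simp [hxy.symm]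
  have hvN : v ∈ G.neighborFinset y := by simp [hvy.symm]
  -- extract third neighbor a of x
  obtain ⟨a, ha⟩ : ∃ a, ((G.neighborFinset x).erase y).erase u = {a} := by
    apply Finset.card_eq_one.mp
    rw [Finset.card_erase_of_mem (Finset.mem_erase.mpr ⟨huy, huN⟩),
      Finset.card_erase_of_mem hyN]
    have := hcubic x
    rw [SimpleGraph.degree] at this
    omega
  have haN : a ∈ G.neighborFinset x := by
    have : a ∈ ((G.neighborFinset x).erase y).erase u := by rw [ha]; exact Finset.mem_singleton_self a
    exact Finset.mem_of_mem_erase (Finset.mem_of_mem_erase this)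
  have hau : a ≠ u := by
    have : a ∈ ((G.neighborFinset x).erase y).erase u := by rw [ha]; exact Finset.mem_singleton_self a
    exact (Finset.mem_erase.mp this).1
  have hay : a ≠ y := by
    have : a ∈ (G.neighborFinset x).erase y := Finset.mem_of_mem_erase (by rw [ha]; exact Finset.mem_singleton_self a)
    exact (Finset.mem_erase.mp this).1
  have hNx : G.neighborFinset x = {y, u, a} := by
    have h1 : insert u (((G.neighborFinset x).erase y).erase u) = (G.neighborFinset x).erase y :=
      Finset.insert_erase (Finset.mem_erase.mpr ⟨huy, huN⟩)
    have h2 : insert y ((G.neighborFinset x).erase y) = G.neighborFinset x :=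
      Finset.insert_erase hyN
    rw [← h2, ← h1, ha]
  -- extract third neighbor b of y
  obtain ⟨b, hb⟩ : ∃ b, ((G.neighborFinset y).erase x).erase v = {b} := by
    apply Finset.card_eq_one.mp
    rw [Finset.card_erase_of_mem (Finset.mem_erase.mpr ⟨hvx, hvN⟩),
      Finset.card_erase_of_mem hxN]
    have := hcubic y
    rw [SimpleGraph.degree] at this
    omega
  have hbN : b ∈ G.neighborFinset y := by
    have : b ∈ ((G.neighborFinset y).erase x).erase v := by rw [hb]; exact Finset.mem_singleton_self b
    exact Finset.mem_of_mem_erase (Finset.mem_of_mem_erase this)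
  have hbv : b ≠ v := by
    have : b ∈ ((G.neighborFinset y).erase x).erase v := by rw [hb]; exact Finset.mem_singleton_self b
    exact (Finset.mem_erase.mp this).1
  have hbx : b ≠ x := by
    have : b ∈ (G.neighborFinset y).erase x := Finset.mem_of_mem_erase (by rw [hb]; exact Finset.mem_singleton_self b)
    exact (Finset.mem_erase.mp this).1
  have hNy : G.neighborFinset y = {x, v, b} := by
    have h1 : insert v (((G.neighborFinset y).erase x).erase v) = (G.neighborFinset y).erase x :=
      Finset.insert_erase (Finset.mem_erase.mpr ⟨hvx, hvN⟩)
    have h2 : insert x ((G.neighborFinset y).erase x) = G.neighborFinset y :=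
      Finset.insert_erase hxN
    rw [← h2, ← h1, hb]
  have hAxa : G.Adj x a := by rwa [SimpleGraph.mem_neighborFinset] at haN
  have hAyb : G.Adj y b := by rwa [SimpleGraph.mem_neighborFinset] at hbN
  have hax : a ≠ x := hAxa.ne'
  have hby : b ≠ y := hAyb.ne'
  have hvb : v ≠ b := fun h => hbv h.symm
  have hxv : x ≠ v := fun h => hvx h.symm
  have hxb : x ≠ b := fun h => hbx h.symm
  have hxni : x ∉ insert v ({b} : Finset V) := by
    simp only [Finset.mem_insert, Finset.mem_singleton, not_or]
    exact ⟨hxv, hxb⟩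
  have hvni : v ∉ ({b} : Finset V) := by
    simp only [Finset.mem_singleton]; exact hvb
  have hyni : y ∉ insert u ({a} : Finset V) := by
    simp only [Finset.mem_insert, Finset.mem_singleton, not_or]
    exact ⟨hyu, Ne.symm hay⟩
  have huni : u ∉ ({a} : Finset V) := by
    simp only [Finset.mem_singleton]; exact Ne.symm hau
  -- the lower bound: every element of the Wone set is ≥ 1
  have hlow : ∀ w ∈ {w : ℝ | ∃ π : V → V → ℝ,
      (∀ p q, 0 ≤ π p q) ∧
      (∀ p q, π p q ≠ 0 → G.Adj x p ∧ G.Adj y q) ∧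
      (∀ p, ∑ q ∈ G.neighborFinset y, π p q = muZero G x p) ∧
      (∀ q, ∑ p ∈ G.neighborFinset x, π p q = muZero G y q) ∧
      w = ∑ p ∈ G.neighborFinset x, ∑ q ∈ G.neighborFinset y, (G.dist p q : ℝ) * π p q},
      1 ≤ w := by
    rintro w ⟨π, h0, hs, h1, _h2, hw⟩
    have key : ∀ p q, π p q ≤ (G.dist p q : ℝ) * π p q := by
      intro p q
      by_cases hpq : π p q = 0
      · rw [hpq]; simp
      · obtain ⟨hp, hq⟩ := hs p q hpq
        have hne : p ≠ q := fun h => htri q ⟨h ▸ hp, hq⟩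
        have hreach : G.Reachable p q :=
          (hp.reachable.symm.trans hxy.reachable).trans hq.reachable
        have hdist : G.dist p q ≠ 0 := by
          simp only [ne_eq, SimpleGraph.dist_eq_zero_iff_eq_or_not_reachable]
          push_neg
          exact ⟨hne, hreach⟩
        have h1d : (1 : ℝ) ≤ (G.dist p q : ℝ) := by
          exact_mod_cast Nat.one_le_iff_ne_zero.mpr hdist
        nlinarith [h0 p q]
    have hsum : ∑ p ∈ G.neighborFinset x, ∑ q ∈ G.neighborFinset y, π p q = 1 := by
      have : ∀ p ∈ G.neighborFinset x, ∑ q ∈ G.neighborFinset y, π p q = (1 : ℝ) / 3 := by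
        intro p hp
        rw [h1 p, muZero]
        rw [SimpleGraph.mem_neighborFinset] at hp
        simp [hp, hcubic x]
      rw [Finset.sum_congr rfl this, Finset.sum_const]
      have : (G.neighborFinset x).card = 3 := hcubic x
      rw [this]
      norm_num
    calc (1:ℝ) = ∑ p ∈ G.neighborFinset x, ∑ q ∈ G.neighborFinset y, π p q := hsum.symm
      _ ≤ ∑ p ∈ G.neighborFinset x, ∑ q ∈ G.neighborFinset y, (G.dist p q : ℝ) * π p q := by
          apply Finset.sum_le_sum
          intro p _
          exact Finset.sum_le_sum fun q _ => key p q
      _ = w := hw.symm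
  -- the witness coupling with cost 1
  have hmem : (1:ℝ) ∈ {w : ℝ | ∃ π : V → V → ℝ,
      (∀ p q, 0 ≤ π p q) ∧
      (∀ p q, π p q ≠ 0 → G.Adj x p ∧ G.Adj y q) ∧
      (∀ p, ∑ q ∈ G.neighborFinset y, π p q = muZero G x p) ∧
      (∀ q, ∑ p ∈ G.neighborFinset x, π p q = muZero G y q) ∧
      1 = ∑ p ∈ G.neighborFinset x, ∑ q ∈ G.neighborFinset y, (G.dist p q : ℝ) * π p q} := by
    refine ⟨fun p q =>
      if (p = u ∧ q = v) ∨ (p = y ∧ q = b) ∨ (p = a ∧ q = x) then 1/3 else 0, ?_, ?_, ?_, ?_, ?_⟩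
    · intro p q; dsimp only; split <;> norm_num
    · intro p q h
      dsimp only at h
      split at h
      · rename_i hc
        rcases hc with ⟨hp, hq⟩ | ⟨hp, hq⟩ | ⟨hp, hq⟩ <;> subst hp <;> subst hq
        · exact ⟨hxu, hvy.symm⟩
        · exact ⟨hxy, hAyb⟩
        · exact ⟨hAxa, hxy.symm⟩
      · exact absurd rfl h
    · intro p
      rw [hNy]
      rw [show ({x, v, b} : Finset V) = insert x (insert v {b}) from rfl]
      rw [Finset.sum_insert hxni, Finset.sum_insert hvni,
        Finset.sum_singleton]
      rw [muZero]
      have hAdj : G.Adj x p ↔ (p = y ∨ p = u ∨ p = a) := by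
        rw [← SimpleGraph.mem_neighborFinset, hNx]
        simp
      by_cases hpy : p = y
      · subst hpy
        simp [hyu, huy, hay, Ne.symm hay, hau, Ne.symm hau, hax, Ne.symm hax, hbv, Ne.symm hbv, hbx, Ne.symm hbx, hby, Ne.symm hby, hvx, Ne.symm hvx, hvb, hxv, hxb, hxy, hcubic x]
      · by_cases hpu : p = u
        · subst hpu
          simp [hyu, huy, hay, Ne.symm hay, hau, Ne.symm hau, hax, Ne.symm hax, hbv, Ne.symm hbv, hbx, Ne.symm hbx, hby, Ne.symm hby, hvx, Ne.symm hvx, hvb, hxv, hxb, hxu, hcubic x]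
        · by_cases hpa : p = a
          · subst hpa
            simp [hyu, huy, hay, Ne.symm hay, hau, Ne.symm hau, hax, Ne.symm hax, hbv, Ne.symm hbv, hbx, Ne.symm hbx, hby, Ne.symm hby, hvx, Ne.symm hvx, hvb, hxv, hxb, hAxa, hcubic x]
          · have : ¬ G.Adj x p := fun h => by
              rcases hAdj.mp h with h | h | h <;> simp_all
            simp [hyu, huy, hay, Ne.symm hay, hau, Ne.symm hau, hax, Ne.symm hax, hbv, Ne.symm hbv, hbx, Ne.symm hbx, hby, Ne.symm hby, hvx, Ne.symm hvx, hvb, hxv, hxb, hpy, hpu, hpa, this]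
    · intro q
      rw [hNx]
      rw [show ({y, u, a} : Finset V) = insert y (insert u {a}) from rfl]
      rw [Finset.sum_insert hyni, Finset.sum_insert huni,
        Finset.sum_singleton]
      rw [muZero]
      by_cases hqx : q = x
      · subst hqx
        simp [hyu, huy, hay, Ne.symm hay, hau, Ne.symm hau, hax, Ne.symm hax, hbv, Ne.symm hbv, hbx, Ne.symm hbx, hby, Ne.symm hby, hvx, Ne.symm hvx, hvb, hxv, hxb, hxy.symm, hcubic y]
      · by_cases hqv : q = v
        · subst hqv
          simp [hyu, huy, hay, Ne.symm hay, hau, Ne.symm hau, hax, Ne.symm hax, hbv, Ne.symm hbv, hbx, Ne.symm hbx, hby, Ne.symm hby, hvx, Ne.symm hvx, hvb, hxv, hxb, hvy.symm, hcubic y]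
        · by_cases hqb : q = b
          · subst hqb
            simp [hyu, huy, hay, Ne.symm hay, hau, Ne.symm hau, hax, Ne.symm hax, hbv, Ne.symm hbv, hbx, Ne.symm hbx, hby, Ne.symm hby, hvx, Ne.symm hvx, hvb, hxv, hxb, hAyb, hcubic y]
          · have : ¬ G.Adj y q := fun h => by
              have : q ∈ ({x, v, b} : Finset V) := by
                rw [← hNy, SimpleGraph.mem_neighborFinset]; exact h
              simp at this
              rcases this with h | h | h <;> simp_all
            simp [hyu, huy, hay, Ne.symm hay, hau, Ne.symm hau, hax, Ne.symm hax, hbv, Ne.symm hbv, hbx, Ne.symm hbx, hby, Ne.symm hby, hvx, Ne.symm hvx, hvb, hxv, hxb, hqx, hqv, hqb, this]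
    · rw [hNx, hNy]
      rw [show ({y, u, a} : Finset V) = insert y (insert u {a}) from rfl]
      rw [Finset.sum_insert hyni, Finset.sum_insert huni,
        Finset.sum_singleton]
      rw [show ({x, v, b} : Finset V) = insert x (insert v {b}) from rfl]
      have hd1 : G.dist y b = 1 := SimpleGraph.dist_eq_one_iff_adj.mpr hAyb
      have hd2 : G.dist u v = 1 := SimpleGraph.dist_eq_one_iff_adj.mpr huv
      have hd3 : G.dist a x = 1 := SimpleGraph.dist_eq_one_iff_adj.mpr hAxa.symm
      rw [Finset.sum_insert hxni, Finset.sum_insert hvni,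
        Finset.sum_singleton,
        Finset.sum_insert hxni, Finset.sum_insert hvni,
        Finset.sum_singleton,
        Finset.sum_insert hxni, Finset.sum_insert hvni,
        Finset.sum_singleton]
      rw [hd1, hd2, hd3]
      simp [hyu, huy, hay, Ne.symm hay, hau, Ne.symm hau, hax, Ne.symm hax, hbv, Ne.symm hbv, hbx, Ne.symm hbx, hby, Ne.symm hby, hvx, Ne.symm hvx, hvb, hxv, hxb]
      norm_num
  -- conclude
  have hW : Wone G x y = 1 := by
    apply le_antisymm
    · exact csInf_le ⟨1, hlow⟩ hmem
    · exact le_csInf ⟨1, hmem⟩ hlow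
  rw [kappaZero, hW]
  ring
end

section
/- Let G be a 3-regular simple graph and let xy be an edge of G that lies on no triangle and on no 4-cycle (i.e. every cycle supporting the edge xy has length at least 5). Then κ₀(x,y) ≤ −1/3; in particular κ₀(x,y) < 0. -/
open Finset

variable {V : Type*}

/-- In a 3-regular simple graph, an edge lying on no triangle and no
4-cycle has Ollivier–Ricci curvature `κ₀(x,y) ≤ −1/3`; in particular `κ₀(x,y) < 0`. -/
theorem ollivier_le_neg_third_of_no_triangle_no_square {V : Type*} (G : SimpleGraph V)
    [∀ v, Fintype (G.neighborSet v)] (hcubic : ∀ v : V, G.degree v = 3)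
    {x y : V} (hxy : G.Adj x y)
    (htri : ∀ z : V, ¬(G.Adj x z ∧ G.Adj y z))
    (hsquare : ¬ ∃ u v : V, G.Adj x u ∧ G.Adj u v ∧ G.Adj v y ∧ u ≠ y ∧ v ≠ x) :
    kappaZero G x y ≤ -(1 / 3) ∧ kappaZero G x y < 0 := by
  classical
  have hmu : ∀ a u : V, G.Adj a u → muZero G a u = 1/3 := by
    intro a u h
    simp [muZero, h, hcubic a]
  have hmu0 : ∀ a u : V, ¬ G.Adj a u → muZero G a u = 0 := by
    intro a u h; simp [muZero, h]
  have hmusum : ∀ a : V, ∑ u ∈ G.neighborFinset a, muZero G a u = 1 := by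
    intro a
    rw [Finset.sum_congr rfl (fun u hu =>
      hmu a u ((SimpleGraph.mem_neighborFinset G a u).mp hu))]
    rw [Finset.sum_const, SimpleGraph.card_neighborFinset_eq_degree, hcubic a]
    norm_num
  have hW : (4:ℝ)/3 ≤ Wone G x y := by
    apply le_csInf
    · -- nonempty : product coupling
      refine ⟨_, fun u v => muZero G x u * muZero G y v, ?_, ?_, ?_, ?_, rfl⟩
      · intro u v
        have h1 : (0:ℝ) ≤ muZero G x u := by
          by_cases h : G.Adj x u <;> simp [muZero, h]
        have h2 : (0:ℝ) ≤ muZero G y v := by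
          by_cases h : G.Adj y v <;> simp [muZero, h]
        exact mul_nonneg h1 h2
      · intro u v h
        constructor
        · by_contra hc
          exact h (show muZero G x u * muZero G y v = 0 by rw [hmu0 x u hc, zero_mul])
        · by_contra hc
          exact h (show muZero G x u * muZero G y v = 0 by rw [hmu0 y v hc, mul_zero])
      · intro u
        rw [← Finset.mul_sum, hmusum y, mul_one]
      · intro v
        rw [← Finset.sum_mul, hmusum x, one_mul]
    · rintro w ⟨π, hpos, hsupp, hmx, hmy, rfl⟩
      have hstep : ∀ u ∈ G.neighborFinset x, ∀ v ∈ G.neighborFinset y,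
          ((2:ℝ) - (if u = y then 1 else 0) - (if v = x then 1 else 0)) * π u v
            ≤ (G.dist u v : ℝ) * π u v := by
        intro u hu v hv
        by_cases hz : π u v = 0
        · simp [hz]
        obtain ⟨hux, hyv⟩ := hsupp u v hz
        apply mul_le_mul_of_nonneg_right _ (hpos u v)
        have hne : u ≠ v := by
          rintro rfl; exact htri u ⟨hux, hyv⟩
        have hreach : G.Reachable u v :=
          hux.symm.reachable.trans (hxy.reachable.trans hyv.reachable)
        have h1 : 1 ≤ G.dist u v := hreach.pos_dist_of_ne hne
        have hc1 : (1:ℝ) ≤ (G.dist u v : ℝ) := by exact_mod_cast h1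
        by_cases huy : u = y
        · by_cases hvx : v = x
          · rw [if_pos huy, if_pos hvx]; linarith
          · rw [if_pos huy, if_neg hvx]; linarith
        by_cases hvx : v = x
        · rw [if_neg huy, if_pos hvx]; linarith
        · have hnadj : ¬ G.Adj u v := by
            intro hadj
            exact hsquare ⟨u, v, hux, hadj, hyv.symm, huy, hvx⟩
          have hd1 : G.dist u v ≠ 1 := fun h =>
            hnadj (SimpleGraph.dist_eq_one_iff_adj.mp h)
          have h2 : 2 ≤ G.dist u v := by omega
          have hc2 : (2:ℝ) ≤ (G.dist u v : ℝ) := by exact_mod_cast h2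
          rw [if_neg huy, if_neg hvx]; linarith
      have hsum_le : ∑ u ∈ G.neighborFinset x, ∑ v ∈ G.neighborFinset y,
          ((2:ℝ) - (if u = y then 1 else 0) - (if v = x then 1 else 0)) * π u v
            ≤ ∑ u ∈ G.neighborFinset x, ∑ v ∈ G.neighborFinset y,
              (G.dist u v : ℝ) * π u v := by
        apply Finset.sum_le_sum
        intro u hu
        exact Finset.sum_le_sum (fun v hv => hstep u hu v hv)
      have hS : ∑ u ∈ G.neighborFinset x, ∑ v ∈ G.neighborFinset y, π u v = 1 := by
        rw [Finset.sum_congr rfl (fun u _ => hmx u)]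
        exact hmusum x
      have hrow : ∑ v ∈ G.neighborFinset y, π y v = 1/3 := by
        rw [hmx y, hmu x y hxy]
      have hcol : ∑ u ∈ G.neighborFinset x, π u x = 1/3 := by
        rw [Finset.sum_congr rfl (fun u hu => rfl)]
        rw [hmy x, hmu y x hxy.symm]
      have hexpand : ∑ u ∈ G.neighborFinset x, ∑ v ∈ G.neighborFinset y,
          ((2:ℝ) - (if u = y then 1 else 0) - (if v = x then 1 else 0)) * π u v
          = 2 * (∑ u ∈ G.neighborFinset x, ∑ v ∈ G.neighborFinset y, π u v)
            - (∑ v ∈ G.neighborFinset y, π y v)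
            - (∑ u ∈ G.neighborFinset x, π u x) := by
        have e1 : ∀ u ∈ G.neighborFinset x, ∀ v ∈ G.neighborFinset y,
            ((2:ℝ) - (if u = y then 1 else 0) - (if v = x then 1 else 0)) * π u v
            = 2 * π u v - (if u = y then π u v else 0) - (if v = x then π u v else 0) := by
          intro u _ v _
          by_cases h1 : u = y <;> by_cases h2 : v = x <;> simp [h1, h2] <;> ring
        calc ∑ u ∈ G.neighborFinset x, ∑ v ∈ G.neighborFinset y,
              ((2:ℝ) - (if u = y then 1 else 0) - (if v = x then 1 else 0)) * π u v
            = ∑ u ∈ G.neighborFinset x, ∑ v ∈ G.neighborFinset y,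
              (2 * π u v - (if u = y then π u v else 0) - (if v = x then π u v else 0)) := by
              exact Finset.sum_congr rfl (fun u hu =>
                Finset.sum_congr rfl (fun v hv => e1 u hu v hv))
          _ = 2 * (∑ u ∈ G.neighborFinset x, ∑ v ∈ G.neighborFinset y, π u v)
              - (∑ v ∈ G.neighborFinset y, π y v)
              - (∑ u ∈ G.neighborFinset x, π u x) := by
              simp only [Finset.sum_sub_distrib, Finset.mul_sum]
              congr 1
              congr 1
              · rw [Finset.sum_comm]
                rw [Finset.sum_congr rfl (fun v _ => Finset.sum_ite_eq' _ y _)]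
                simp [SimpleGraph.mem_neighborFinset, hxy]
              · rw [Finset.sum_congr rfl (fun u _ => Finset.sum_ite_eq' _ x _)]
                simp [SimpleGraph.mem_neighborFinset, hxy.symm]
      rw [hexpand, hS, hrow, hcol] at hsum_le
      linarith
  constructor
  · unfold kappaZero; linarith
  · unfold kappaZero; linarith
end
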